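/- arXiv:1902.00572 — 7 statements merged into one kernel-verified Lean document; each statement's English description precedes it below -/
import Mathlib

section
/- Let n be a positive integer, let A be a tournament matrix of order n, and let z be a real number with 1/2 ≤ z ≤ 1 such that σ₃(A) = (z³ + (1−z)³)/8. Then σ₄(A) ≥ (z⁴ + (1−z)⁴)/16. -/
open Finset Matrix

namespace Tour1

variable {n : ℕ}

noncomputable def Jm (n : ℕ) : Matrix (Fin n) (Fin n) ℝ := Matrix.of fun _ _ => (1:ℝ)

noncomputable def tot (B : Matrix (Fin n) (Fin n) ℝ) : ℝ := ∑ i, ∑ j, B i j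

lemma tot_transpose (B : Matrix (Fin n) (Fin n) ℝ) : tot Bᵀ = tot B := by
  unfold tot
  refine Finset.sum_comm.trans ?_
  rfl

lemma trace_J_mul (B : Matrix (Fin n) (Fin n) ℝ) : Matrix.trace (Jm n * B) = tot B := by
  unfold Matrix.trace tot Jm
  simp only [Matrix.diag, Matrix.mul_apply, Matrix.of_apply, one_mul]
  exact Finset.sum_comm

lemma tot_J_mul (B : Matrix (Fin n) (Fin n) ℝ) : tot (Jm n * B) = n * tot B := by
  unfold tot Jm
  simp only [Matrix.mul_apply, Matrix.of_apply, one_mul]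
  rw [Finset.sum_const, Finset.card_univ, Fintype.card_fin, nsmul_eq_mul]
  rw [Finset.sum_comm]

lemma tot_mul_J (B : Matrix (Fin n) (Fin n) ℝ) : tot (B * Jm n) = n * tot B := by
  unfold tot Jm
  simp only [Matrix.mul_apply, Matrix.of_apply, mul_one]
  rw [Finset.mul_sum]
  apply Finset.sum_congr rfl
  intro i _
  rw [Finset.sum_comm]
  simp only [Finset.sum_const, Finset.card_univ, Fintype.card_fin, nsmul_eq_mul]
  rw [← Finset.mul_sum]

lemma tot_mul_J_mul (X Y : Matrix (Fin n) (Fin n) ℝ) : tot (X * Jm n * Y) = tot X * tot Y := by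
  unfold tot Jm
  simp only [Matrix.mul_apply, Matrix.of_apply, mul_one]
  have h1 : ∀ a b : Fin n, ∑ c, (∑ d, X a d) * Y c b = (∑ d, X a d) * (∑ c, Y c b) :=
    fun a b => (Finset.mul_sum _ _ _).symm
  calc ∑ a, ∑ b, ∑ c, (∑ d, X a d) * Y c b
      = ∑ a, ∑ b, (∑ d, X a d) * (∑ c, Y c b) := by
        exact Finset.sum_congr rfl fun a _ => Finset.sum_congr rfl fun b _ => h1 a b
    _ = ∑ a, (∑ d, X a d) * (∑ b, ∑ c, Y c b) := by
        exact Finset.sum_congr rfl fun a _ => (Finset.mul_sum _ _ _).symm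
    _ = (∑ a, ∑ d, X a d) * (∑ b, ∑ c, Y c b) := (Finset.sum_mul _ _ _).symm
    _ = (∑ a, ∑ d, X a d) * (∑ c, ∑ b, Y c b) := by rw [Finset.sum_comm (f := fun c b => Y c b)]

lemma tot_J : tot (Jm n) = (n:ℝ)^2 := by
  simp [tot, Jm]; ring

end Tour1

namespace Tour1

lemma sum_sum_mul {n : ℕ} (x y : Fin n → ℝ) :
    ∑ i, ∑ k, x i * y k = (∑ i, x i) * (∑ k, y k) := (Finset.sum_mul_sum _ _ _ _).symm

set_option maxHeartbeats 1000000 in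
lemma core {n : ℕ} (hn : 0 < n) (S : Matrix (Fin n) (Fin n) ℝ) (hS : Sᵀ = -S) :
    2 * (tot (S*S))^2 / (n:ℝ)^2 ≤ Matrix.trace (S*S*S*S) := by
  have hsk : ∀ i j, S i j = -S j i := fun i j => congrFun (congrFun hS j) i
  set v : Fin n → ℝ := fun i => ∑ j, S i j with hv
  set w : Fin n → ℝ := fun i => ∑ j, S i j * v j with hw
  set P : ℝ := ∑ i, (v i)^2 with hP
  set W : ℝ := ∑ i, (w i)^2 with hW
  set T : ℝ := ∑ i, ∑ k, ((S*S) i k)^2 with hT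
  have f1 : ∀ j, ∑ i, S i j = -v j := by
    intro j
    calc ∑ i, S i j = ∑ i, -(S j i) := Finset.sum_congr rfl fun i _ => hsk i j
      _ = -v j := by rw [Finset.sum_neg_distrib]
  have f2 : ∑ i, v i = 0 := by
    have h := Finset.sum_comm (s := (Finset.univ : Finset (Fin n)))
      (t := Finset.univ) (f := fun i j => S i j)
    have h2 : ∑ i, v i = ∑ j, (-v j) := by
      rw [hv]; simp only []
      rw [h]
      exact Finset.sum_congr rfl fun j _ => f1 j
    rw [Finset.sum_neg_distrib] at h2
    linarith
  have f3 : ∀ k, ∑ i, S i k * v i = -(w k) := by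
    intro k
    calc ∑ i, S i k * v i = ∑ i, -(S k i * v i) :=
          Finset.sum_congr rfl fun i _ => by rw [hsk i k]; ring
      _ = -(w k) := by rw [Finset.sum_neg_distrib]
  have f4a : ∀ i, ∑ k, (S*S) i k = w i := by
    intro i
    simp only [Matrix.mul_apply]
    rw [Finset.sum_comm]
    apply Finset.sum_congr rfl
    intro j _
    rw [← Finset.mul_sum]
  have f4b : ∑ i, w i = -P := by
    have : ∑ i, w i = ∑ j, (∑ i, S i j) * v j := by
      rw [hw]; simp only []
      rw [Finset.sum_comm]
      exact Finset.sum_congr rfl fun j _ => (Finset.sum_mul _ _ _).symm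
    rw [this, hP]
    rw [← Finset.sum_neg_distrib]
    apply Finset.sum_congr rfl
    intro j _
    rw [f1 j]; ring
  have f4 : ∑ i, ∑ k, (S*S) i k = -P := by
    rw [Finset.sum_congr rfl fun i _ => f4a i]; exact f4b
  have f5 : ∑ i, ∑ k, (S*S) i k * (v i * v k) = -W := by
    have e1 : ∀ i k, (S*S) i k * (v i * v k) = ∑ j, (S i j * v i) * (S j k * v k) := by
      intro i k
      simp only [Matrix.mul_apply, Finset.sum_mul]
      apply Finset.sum_congr rfl; intro j _; ring
    calc ∑ i, ∑ k, (S*S) i k * (v i * v k)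
        = ∑ i, ∑ k, ∑ j, (S i j * v i) * (S j k * v k) :=
          Finset.sum_congr rfl fun i _ => Finset.sum_congr rfl fun k _ => e1 i k
      _ = ∑ i, ∑ j, ∑ k, (S i j * v i) * (S j k * v k) :=
          Finset.sum_congr rfl fun i _ => Finset.sum_comm
      _ = ∑ j, ∑ i, ∑ k, (S i j * v i) * (S j k * v k) := Finset.sum_comm
      _ = ∑ j, (∑ i, S i j * v i) * (∑ k, S j k * v k) :=
          Finset.sum_congr rfl fun j _ => sum_sum_mul _ _
      _ = ∑ j, -((w j)^2) := by
          apply Finset.sum_congr rfl; intro j _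
          rw [f3 j]
          have : ∑ k, S j k * v k = w j := rfl
          rw [this]; ring
      _ = -W := by rw [Finset.sum_neg_distrib, hW]
  have hsym : ∀ i k, (S*S) k i = (S*S) i k := by
    intro i k
    simp only [Matrix.mul_apply]
    apply Finset.sum_congr rfl
    intro j _
    rw [hsk k j, hsk j i]
    ring
  have f6 : Matrix.trace (S*S*S*S) = T := by
    have : S*S*S*S = (S*S)*(S*S) := by noncomm_ring
    rw [this]
    unfold Matrix.trace
    simp only [Matrix.diag, Matrix.mul_apply]
    rw [hT]
    apply Finset.sum_congr rfl; intro i _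
    apply Finset.sum_congr rfl; intro k _
    calc (∑ j, S i j * S j k) * ∑ j, S k j * S j i
        = (S*S) i k * (S*S) k i := by rw [← Matrix.mul_apply, ← Matrix.mul_apply]
      _ = (S*S) i k ^ 2 := by rw [hsym i k]; ring
  have CS : P^2 ≤ (n:ℝ) * W := by
    have h := sq_sum_le_card_mul_sum_sq (s := (Finset.univ : Finset (Fin n))) (f := w)
    rw [f4b] at h
    simpa [hW] using h
  -- main expansion inequality
  have hexp : ∀ c d : ℝ, 0 ≤ T + 2*c*(-P) + 2*d*(-W) + c^2*(n:ℝ)^2 + d^2*P^2 := by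
    intro c d
    have hpos : (0:ℝ) ≤ ∑ i, ∑ k, ((S*S) i k + c + d * (v i * v k))^2 :=
      Finset.sum_nonneg fun i _ => Finset.sum_nonneg fun k _ => sq_nonneg _
    have hexpand : ∑ i, ∑ k, ((S*S) i k + c + d * (v i * v k))^2
        = T + 2*c*(∑ i, ∑ k, (S*S) i k) + 2*d*(∑ i, ∑ k, (S*S) i k * (v i * v k))
          + c^2*(n:ℝ)^2 + d^2*(∑ i, ∑ k, (v i)^2 * (v k)^2)
          + 2*c*d*(∑ i, ∑ k, v i * v k) := by
      have e : ∀ i k, ((S*S) i k + c + d * (v i * v k))^2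
          = ((S*S) i k)^2 + (2*c)*((S*S) i k) + (2*d)*((S*S) i k * (v i * v k))
            + c^2 + d^2*((v i)^2 * (v k)^2) + (2*c*d)*(v i * v k) := by
        intro i k; ring
      calc ∑ i, ∑ k, ((S*S) i k + c + d * (v i * v k))^2
          = ∑ i, ∑ k, (((S*S) i k)^2 + (2*c)*((S*S) i k) + (2*d)*((S*S) i k * (v i * v k))
            + c^2 + d^2*((v i)^2 * (v k)^2) + (2*c*d)*(v i * v k)) :=
            Finset.sum_congr rfl fun i _ => Finset.sum_congr rfl fun k _ => e i k
        _ = _ := by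
            simp only [Finset.sum_add_distrib, ← Finset.mul_sum, Finset.sum_const,
              Finset.card_univ, Fintype.card_fin, nsmul_eq_mul]
            rw [hT]
            ring
    rw [hexpand, f4, f5] at hpos
    have hvv : ∑ i, ∑ k, (v i)^2 * (v k)^2 = P * P := by
      rw [sum_sum_mul, hP]
    have hvv2 : ∑ i, ∑ k, v i * v k = 0 := by
      rw [sum_sum_mul, f2]; ring
    rw [hvv, hvv2] at hpos
    nlinarith [hpos]

  -- finish
  have nn0 : (0:ℝ) < (n:ℝ) := by exact_mod_cast hn
  set nn : ℝ := (n:ℝ) with hnn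
  have key := hexp (P/nn^2) (1/nn)
  rw [f6]
  have htot : tot (S*S) = -P := f4
  rw [htot]
  have h2 : 2 * (-P)^2 / nn^2 = 2*P^2/nn^2 := by ring
  rw [h2]
  rw [div_le_iff₀ (by positivity)]
  have e : T + 2*(P/nn^2)*(-P) + 2*(1/nn)*(-W) + (P/nn^2)^2*nn^2 + (1/nn)^2*P^2
      = T - 2*W/nn := by field_simp; ring
  have key3 : 2*W/nn ≤ T := by linarith [key, e]
  have e4 : 2*W/nn * nn^2 = 2*W*nn := by field_simp
  have key4 : 2*W/nn*nn^2 ≤ T*nn^2 := by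
    apply mul_le_mul_of_nonneg_right key3 (by positivity)
  rw [e4] at key4
  nlinarith [CS, key4, nn0]

end Tour1

namespace Tour1

lemma tot_neg {n : ℕ} (M : Matrix (Fin n) (Fin n) ℝ) : tot (-M) = - tot M := by
  simp [tot]

lemma tot_skew {n : ℕ} (S : Matrix (Fin n) (Fin n) ℝ) (hS : Sᵀ = -S) : tot S = 0 := by
  have h := tot_transpose S
  rw [hS, tot_neg] at h
  linarith

lemma transpose_S3 {n : ℕ} (S : Matrix (Fin n) (Fin n) ℝ) (hS : Sᵀ = -S) :
    (S*S*S)ᵀ = -(S*S*S) := by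
  simp only [Matrix.transpose_mul, hS]
  noncomm_ring

lemma trace_S3 {n : ℕ} (S : Matrix (Fin n) (Fin n) ℝ) (hS : Sᵀ = -S) :
    Matrix.trace (S*S*S) = 0 := by
  have h := Matrix.trace_transpose (A := S*S*S)
  rw [transpose_S3 S hS] at h
  simp only [Matrix.trace_neg] at h
  linarith

lemma tot_S3 {n : ℕ} (S : Matrix (Fin n) (Fin n) ℝ) (hS : Sᵀ = -S) :
    tot (S*S*S) = 0 := by
  have h := tot_transpose (S*S*S)
  rw [transpose_S3 S hS, tot_neg] at h
  linarith

end Tour1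

namespace Tour1

lemma trace3 {n : ℕ} (S : Matrix (Fin n) (Fin n) ℝ) (hS : Sᵀ = -S) :
    Matrix.trace ((Jm n + S) * (Jm n + S) * (Jm n + S))
      = (n:ℝ)^3 + 3 * tot (S*S) := by
  set J := Jm n with hJ
  have hexp : (J + S) * (J + S) * (J + S)
      = J*J*J + J*J*S + J*S*J + J*S*S + S*J*J + S*J*S + S*S*J + S*S*S := by noncomm_ring
  rw [hexp]
  simp only [Matrix.trace_add]
  have t1 : Matrix.trace (J*J*J) = (n:ℝ)^3 := by
    rw [mul_assoc, hJ, trace_J_mul, tot_J_mul, tot_J]; ring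
  have t2 : Matrix.trace (J*J*S) = 0 := by
    rw [mul_assoc, hJ, trace_J_mul, tot_J_mul, tot_skew S hS]; ring
  have t3 : Matrix.trace (J*S*J) = 0 := by
    rw [Matrix.trace_mul_comm, hJ, trace_J_mul, tot_J_mul, tot_skew S hS]; ring
  have t4 : Matrix.trace (J*S*S) = tot (S*S) := by
    rw [mul_assoc, hJ, trace_J_mul]
  have t5 : Matrix.trace (S*J*J) = 0 := by
    rw [Matrix.trace_mul_comm, hJ, trace_J_mul, tot_mul_J, tot_skew S hS]; ring
  have t6 : Matrix.trace (S*J*S) = tot (S*S) := by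
    rw [Matrix.trace_mul_comm, ← mul_assoc, Matrix.trace_mul_comm, hJ, trace_J_mul]
  have t7 : Matrix.trace (S*S*J) = tot (S*S) := by
    rw [Matrix.trace_mul_comm, hJ, trace_J_mul]
  have t8 := trace_S3 S hS
  rw [t1, t2, t3, t4, t5, t6, t7, t8]; ring

lemma trace4 {n : ℕ} (S : Matrix (Fin n) (Fin n) ℝ) (hS : Sᵀ = -S) :
    Matrix.trace ((Jm n + S) * (Jm n + S) * (Jm n + S) * (Jm n + S))
      = (n:ℝ)^4 + 4*(n:ℝ) * tot (S*S) + Matrix.trace (S*S*S*S) := by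
  set J := Jm n with hJ
  have hexp : (J + S) * (J + S) * (J + S) * (J + S)
      = J*J*J*J + J*J*J*S + J*J*S*J + J*J*S*S + J*S*J*J + J*S*J*S + J*S*S*J + J*S*S*S
      + S*J*J*J + S*J*J*S + S*J*S*J + S*J*S*S + S*S*J*J + S*S*J*S + S*S*S*J + S*S*S*S := by
    noncomm_ring
  rw [hexp]
  simp only [Matrix.trace_add]
  have u1 : Matrix.trace (J*J*J*J) = (n:ℝ)^4 := by
    rw [mul_assoc, mul_assoc, hJ, trace_J_mul, tot_J_mul, tot_J_mul, tot_J]; ring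
  have u2 : Matrix.trace (J*J*J*S) = 0 := by
    rw [mul_assoc, mul_assoc, hJ, trace_J_mul, tot_J_mul, tot_J_mul, tot_skew S hS]; ring
  have u3 : Matrix.trace (J*J*S*J) = 0 := by
    rw [Matrix.trace_mul_comm, hJ, trace_J_mul, mul_assoc, tot_J_mul, tot_J_mul,
      tot_skew S hS]; ring
  have u4 : Matrix.trace (J*J*S*S) = (n:ℝ) * tot (S*S) := by
    rw [mul_assoc, mul_assoc, hJ, trace_J_mul, tot_J_mul]
  have u5 : Matrix.trace (J*S*J*J) = 0 := by
    rw [Matrix.trace_mul_comm, hJ, trace_J_mul, tot_mul_J, tot_J_mul, tot_skew S hS]; ring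
  have u6 : Matrix.trace (J*S*J*S) = 0 := by
    rw [mul_assoc, mul_assoc, hJ, trace_J_mul, ← mul_assoc, tot_mul_J_mul, tot_skew S hS]; ring
  have u7 : Matrix.trace (J*S*S*J) = (n:ℝ) * tot (S*S) := by
    rw [Matrix.trace_mul_comm, hJ, trace_J_mul, mul_assoc, tot_J_mul]
  have u8 : Matrix.trace (J*S*S*S) = 0 := by
    rw [mul_assoc, mul_assoc, hJ, trace_J_mul, ← mul_assoc, tot_S3 S hS]
  have u9 : Matrix.trace (S*J*J*J) = 0 := by
    rw [Matrix.trace_mul_comm, hJ, trace_J_mul, tot_mul_J, tot_mul_J, tot_skew S hS]; ring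
  have u10 : Matrix.trace (S*J*J*S) = (n:ℝ) * tot (S*S) := by
    rw [mul_assoc, Matrix.trace_mul_comm, mul_assoc, hJ, trace_J_mul, ← mul_assoc,
      tot_mul_J]
  have u11 : Matrix.trace (S*J*S*J) = 0 := by
    rw [Matrix.trace_mul_comm, hJ, trace_J_mul, tot_mul_J_mul, tot_skew S hS]; ring
  have u12 : Matrix.trace (S*J*S*S) = 0 := by
    rw [mul_assoc, Matrix.trace_mul_comm, ← mul_assoc, Matrix.trace_mul_comm, hJ,
      trace_J_mul, tot_S3 S hS]
  have u13 : Matrix.trace (S*S*J*J) = (n:ℝ) * tot (S*S) := by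
    rw [Matrix.trace_mul_comm, hJ, trace_J_mul, tot_mul_J]
  have u14 : Matrix.trace (S*S*J*S) = 0 := by
    rw [mul_assoc, Matrix.trace_mul_comm, mul_assoc, hJ, trace_J_mul, ← mul_assoc,
      tot_S3 S hS]
  have u15 : Matrix.trace (S*S*S*J) = 0 := by
    rw [Matrix.trace_mul_comm, hJ, trace_J_mul, tot_S3 S hS]
  rw [u1, u2, u3, u4, u5, u6, u7, u8, u9, u10, u11, u12, u13, u14, u15]; ring

end Tour1

open Tour1 in
/-- Regime of two parts: lower bound on σ₄ in terms of σ₃ for tournament matrices. -/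
theorem stmt_1 (n : ℕ) (hn : 0 < n) (A : Matrix (Fin n) (Fin n) ℝ)
    (hA0 : ∀ i j, 0 ≤ A i j)
    (hAT : A + A.transpose = Matrix.of fun _ _ => (1 : ℝ))
    (z : ℝ) (hz : 1/2 ≤ z) (hz1 : z ≤ 1)
    (h3 : Matrix.trace (A ^ 3) / (n : ℝ) ^ 3 = (z ^ 3 + (1 - z) ^ 3) / 8) :
    Matrix.trace (A ^ 4) / (n : ℝ) ^ 4 ≥ (z ^ 4 + (1 - z) ^ 4) / 16 := by
  have nn0 : (0:ℝ) < (n:ℝ) := by exact_mod_cast hn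
  set S : Matrix (Fin n) (Fin n) ℝ := A - Aᵀ with hSdef
  have hSkewT : Sᵀ = -S := by
    rw [hSdef, Matrix.transpose_sub, Matrix.transpose_transpose]
    exact (neg_sub _ _).symm
  have hJS : Jm n + S = A + A := by
    have hJ : Jm n = A + Aᵀ := by unfold Jm; exact hAT.symm
    rw [hJ, hSdef]; abel
  have h3' : Matrix.trace ((A+A)*(A+A)*(A+A)) = (n:ℝ)^3 + 3 * tot (S*S) := by
    rw [← hJS]; exact trace3 S hSkewT
  have h4' : Matrix.trace ((A+A)*(A+A)*(A+A)*(A+A))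
      = (n:ℝ)^4 + 4*(n:ℝ) * tot (S*S) + Matrix.trace (S*S*S*S) := by
    rw [← hJS]; exact trace4 S hSkewT
  have hA3 : Matrix.trace ((A+A)*(A+A)*(A+A)) = 8 * Matrix.trace (A^3) := by
    have e : (A+A)*(A+A)*(A+A) = A^3+A^3+A^3+A^3+A^3+A^3+A^3+A^3 := by noncomm_ring
    rw [e]; simp only [Matrix.trace_add]; ring
  have hA4 : Matrix.trace ((A+A)*(A+A)*(A+A)*(A+A)) = 16 * Matrix.trace (A^4) := by
    have e : (A+A)*(A+A)*(A+A)*(A+A)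
        = A^4+A^4+A^4+A^4+A^4+A^4+A^4+A^4+A^4+A^4+A^4+A^4+A^4+A^4+A^4+A^4 := by noncomm_ring
    rw [e]; simp only [Matrix.trace_add]; ring
  set Q : ℝ := tot (S*S) with hQdef
  set nn : ℝ := (n:ℝ) with hnn
  have e8 : 8 * Matrix.trace (A^3) = nn^3 + 3*Q := by rw [← hA3, h3']
  have e16 : 16 * Matrix.trace (A^4) = nn^4 + 4*nn*Q + Matrix.trace (S*S*S*S) := by
    rw [← hA4, h4']
  have hcore : 2*Q^2/nn^2 ≤ Matrix.trace (S*S*S*S) := core hn S hSkewT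
  have tr3 : Matrix.trace (A^3) = (z^3+(1-z)^3)/8*nn^3 := by
    rw [div_eq_iff (by positivity : nn^3 ≠ 0)] at h3
    linarith [h3]
  rw [tr3] at e8
  have hQ : Q = (z^2 - z) * nn^3 := by linear_combination (-1/3) * e8
  rw [ge_iff_le, le_div_iff₀ (by positivity : (0:ℝ) < nn^4)]
  have hc2 : 2*Q^2/nn^2 = 2*(z^2-z)^2*nn^4 := by rw [hQ]; field_simp
  rw [hc2] at hcore
  have h4nnQ : 4*nn*Q = 4*(z^2-z)*nn^4 := by rw [hQ]; ring
  nlinarith [e16, hcore, h4nnQ]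
end

section
/- Let n be a positive integer, let A be a tournament matrix of order n, and let z be a real number with 1/2 ≤ z ≤ 1 such that σ₃(A) = (z³ + (1−z)³)/8. If σ₄(A) = (z⁴ + (1−z)⁴)/16, then there exists a vector w ∈ ℝⁿ such that A_{i,j} = 1/2 + w_i − w_j for all i, j ∈ [n]. -/
set_option maxHeartbeats 1000000

section Helpers
variable {n : ℕ}

private lemma pull1 (c : ℝ) (g : Fin n → ℝ) :
    ∑ a, c * g a = c * ∑ a, g a := by
  simp only [← Finset.mul_sum]

private lemma pull2 (c : ℝ) (g : Fin n → Fin n → ℝ) :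
    ∑ a, ∑ b, c * g a b = c * ∑ a, ∑ b, g a b := by
  simp only [← Finset.mul_sum]

private lemma pull3 (c : ℝ) (g : Fin n → Fin n → Fin n → ℝ) :
    ∑ a, ∑ b, ∑ d, c * g a b d = c * ∑ a, ∑ b, ∑ d, g a b d := by
  simp only [← Finset.mul_sum]

private lemma pull4 (c : ℝ) (g : Fin n → Fin n → Fin n → Fin n → ℝ) :
    ∑ a, ∑ b, ∑ d, ∑ e, c * g a b d e = c * ∑ a, ∑ b, ∑ d, ∑ e, g a b d e := by
  simp only [← Finset.mul_sum]

private lemma sum2_congr {g h : Fin n → Fin n → ℝ} (H : ∀ a b, g a b = h a b) :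
    ∑ a, ∑ b, g a b = ∑ a, ∑ b, h a b :=
  Finset.sum_congr rfl fun a _ => Finset.sum_congr rfl fun b _ => H a b

private lemma sum3_congr {g h : Fin n → Fin n → Fin n → ℝ} (H : ∀ a b c, g a b c = h a b c) :
    ∑ a, ∑ b, ∑ c, g a b c = ∑ a, ∑ b, ∑ c, h a b c :=
  Finset.sum_congr rfl fun a _ => Finset.sum_congr rfl fun b _ =>
    Finset.sum_congr rfl fun c _ => H a b c

private lemma sum4_congr {g h : Fin n → Fin n → Fin n → Fin n → ℝ}
    (H : ∀ a b c d, g a b c d = h a b c d) :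
    ∑ a, ∑ b, ∑ c, ∑ d, g a b c d = ∑ a, ∑ b, ∑ c, ∑ d, h a b c d :=
  Finset.sum_congr rfl fun a _ => Finset.sum_congr rfl fun b _ =>
    Finset.sum_congr rfl fun c _ => Finset.sum_congr rfl fun d _ => H a b c d

private lemma sum3_cycle (g : Fin n → Fin n → Fin n → ℝ) :
    ∑ a, ∑ b, ∑ c, g a b c = ∑ b, ∑ c, ∑ a, g a b c := by
  calc ∑ a, ∑ b, ∑ c, g a b c = ∑ b, ∑ a, ∑ c, g a b c := Finset.sum_comm
    _ = ∑ b, ∑ c, ∑ a, g a b c := Finset.sum_congr rfl fun b _ => Finset.sum_comm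

private lemma sum3_cycle2 (g : Fin n → Fin n → Fin n → ℝ) :
    ∑ a, ∑ b, ∑ c, g a b c = ∑ c, ∑ a, ∑ b, g a b c :=
  (sum3_cycle g).trans (sum3_cycle (fun b c a => g a b c))

private lemma sum3_rev (g : Fin n → Fin n → Fin n → ℝ) :
    ∑ a, ∑ b, ∑ c, g a b c = ∑ c, ∑ b, ∑ a, g a b c := by
  calc ∑ a, ∑ b, ∑ c, g a b c = ∑ a, ∑ c, ∑ b, g a b c :=
        Finset.sum_congr rfl fun a _ => Finset.sum_comm
    _ = ∑ c, ∑ a, ∑ b, g a b c := Finset.sum_comm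
    _ = ∑ c, ∑ b, ∑ a, g a b c := Finset.sum_congr rfl fun c _ => Finset.sum_comm

private lemma sum4_cycle (g : Fin n → Fin n → Fin n → Fin n → ℝ) :
    ∑ a, ∑ b, ∑ c, ∑ d, g a b c d = ∑ b, ∑ c, ∑ d, ∑ a, g a b c d := by
  calc ∑ a, ∑ b, ∑ c, ∑ d, g a b c d = ∑ b, ∑ a, ∑ c, ∑ d, g a b c d := Finset.sum_comm
    _ = ∑ b, ∑ c, ∑ a, ∑ d, g a b c d := Finset.sum_congr rfl fun _ _ => Finset.sum_comm
    _ = ∑ b, ∑ c, ∑ d, ∑ a, g a b c d :=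
        Finset.sum_congr rfl fun _ _ => Finset.sum_congr rfl fun _ _ => Finset.sum_comm

private lemma sum4_cycle2 (g : Fin n → Fin n → Fin n → Fin n → ℝ) :
    ∑ a, ∑ b, ∑ c, ∑ d, g a b c d = ∑ c, ∑ d, ∑ a, ∑ b, g a b c d :=
  (sum4_cycle g).trans (sum4_cycle (fun b c d a => g a b c d))

private lemma sum4_cycle3 (g : Fin n → Fin n → Fin n → Fin n → ℝ) :
    ∑ a, ∑ b, ∑ c, ∑ d, g a b c d = ∑ d, ∑ a, ∑ b, ∑ c, g a b c d :=
  (sum4_cycle2 g).trans (sum4_cycle (fun c d a b => g a b c d))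


private lemma e_const1 (x : ℝ) : ∑ _d : Fin n, x = (n:ℝ) * x := by
  simp [Finset.sum_const, Finset.card_univ]

private lemma e_const2 (x : ℝ) : ∑ _c : Fin n, ∑ _d : Fin n, x = (n:ℝ)^2 * x := by
  simp [Finset.sum_const, Finset.card_univ]; ring

variable (S : Fin n → Fin n → ℝ) (s : Fin n → ℝ)
variable (hsk : ∀ i j, S j i = - S i j) (hs : ∀ i, s i = ∑ j, S i j)

set_option linter.unusedSectionVars false

include hsk hs

private lemma hcolS : ∀ k, ∑ i, S i k = -s k := by
  intro k
  rw [hs k, ← Finset.sum_neg_distrib]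
  exact Finset.sum_congr rfl fun i _ => hsk k i

private lemma hs0S : ∑ i, s i = 0 := by
  have h1 : ∑ i, s i = ∑ j, ∑ i, S i j := by
    rw [Finset.sum_comm]; exact Finset.sum_congr rfl fun i _ => hs i
  have h2 : ∑ j, ∑ i, S i j = -∑ i, s i := by
    rw [← Finset.sum_neg_distrib]
    exact Finset.sum_congr rfl fun k _ => hcolS S s hsk hs k
  linarith [h1, h2]

private lemma hss0S : ∑ i, ∑ j, S i j = 0 := by
  rw [Finset.sum_congr rfl fun i (_ : i ∈ Finset.univ) => (hs i).symm]
  exact hs0S S s hsk hs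

private lemma core2 : ∑ a, ∑ b, ∑ c, S a b * S b c = -∑ i, s i ^ 2 := by
  have h1 : ∀ a b : Fin n, ∑ c, S a b * S b c = S a b * s b := by
    intro a b; rw [hs b, Finset.mul_sum]
  calc ∑ a, ∑ b, ∑ c, S a b * S b c = ∑ a, ∑ b, S a b * s b :=
        sum2_congr fun a b => h1 a b
    _ = ∑ b, ∑ a, S a b * s b := Finset.sum_comm
    _ = ∑ b, (∑ a, S a b) * s b :=
        Finset.sum_congr rfl fun b _ => (Finset.sum_mul _ _ _).symm
    _ = ∑ b, (-s b) * s b :=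
        Finset.sum_congr rfl fun b _ => by rw [hcolS S s hsk hs b]
    _ = -∑ i, s i ^ 2 := by
        rw [← Finset.sum_neg_distrib]
        exact Finset.sum_congr rfl fun b _ => by ring

private lemma hsSsS : ∑ i, ∑ j, s i * S i j * s j = 0 := by
  have h1 : ∑ i, ∑ j, s i * S i j * s j = ∑ j, ∑ i, s i * S i j * s j := Finset.sum_comm
  have h2 : ∑ j, ∑ i, s i * S i j * s j = -∑ i, ∑ j, s i * S i j * s j := by
    rw [← Finset.sum_neg_distrib]
    refine Finset.sum_congr rfl fun j _ => ?_
    rw [← Finset.sum_neg_distrib]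
    refine Finset.sum_congr rfl fun i _ => ?_
    rw [hsk i j]; ring
  linarith [h1, h2]

private lemma hT3S : ∑ i, ∑ j, ∑ k, S i j * S j k * S k i = 0 := by
  have h1 : ∑ i, ∑ j, ∑ k, S i j * S j k * S k i
      = -∑ i, ∑ j, ∑ k, S i j * S j k * S k i := by
    calc ∑ i, ∑ j, ∑ k, S i j * S j k * S k i
        = ∑ c, ∑ b, ∑ a, S a b * S b c * S c a :=
          sum3_rev (fun a b c => S a b * S b c * S c a)
      _ = ∑ i, ∑ j, ∑ k, -(S i j * S j k * S k i) := by
          refine sum3_congr fun i j k => ?_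
          rw [hsk k j, hsk j i, hsk i k]; ring
      _ = -∑ i, ∑ j, ∑ k, S i j * S j k * S k i := by
          simp only [Finset.sum_neg_distrib]
  linarith [h1]

private lemma core3 : ∑ a, ∑ b, ∑ c, ∑ d, S a b * S b c * S c d = 0 := by
  have h1 : ∀ a b c : Fin n, ∑ d, S a b * S b c * S c d = S a b * S b c * s c := by
    intro a b c; rw [← Finset.mul_sum, hs c]
  calc ∑ a, ∑ b, ∑ c, ∑ d, S a b * S b c * S c d
      = ∑ a, ∑ b, ∑ c, S a b * S b c * s c := sum3_congr fun a b c => h1 a b c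
    _ = ∑ b, ∑ c, ∑ a, S a b * S b c * s c :=
        sum3_cycle (fun a b c => S a b * S b c * s c)
    _ = ∑ b, ∑ c, ∑ a, S a b * (S b c * s c) := sum3_congr fun b c a => by ring
    _ = ∑ b, ∑ c, (∑ a, S a b) * (S b c * s c) :=
        sum2_congr fun b c => (Finset.sum_mul _ _ _).symm
    _ = ∑ b, ∑ c, -(s b * S b c * s c) :=
        sum2_congr fun b c => by rw [hcolS S s hsk hs b]; ring
    _ = -∑ b, ∑ c, s b * S b c * s c := by simp only [Finset.sum_neg_distrib]
    _ = 0 := by rw [hsSsS S s hsk hs]; ring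

private lemma trace3_eval :
    ∑ i, ∑ j, ∑ k, (S i j + 1/2) * (S j k + 1/2) * (S k i + 1/2)
      = (n:ℝ)^3/8 - 3/2 * ∑ i, s i ^ 2 := by
  have hP1 : ∑ i, ∑ j, ∑ k, 1/2 * (S i j * S j k) = -(1/2) * ∑ i, s i ^ 2 := by
    rw [pull3 (1/2) (fun a b d => S a b * S b d), core2 S s hsk hs]; ring
  have hP2 : ∑ i, ∑ j, ∑ k, 1/2 * (S j k * S k i) = -(1/2) * ∑ i, s i ^ 2 := by
    rw [pull3 (1/2) (fun a b d => S b d * S d a),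
      sum3_cycle (fun a b c => S b c * S c a), core2 S s hsk hs]; ring
  have hP3 : ∑ i, ∑ j, ∑ k, 1/2 * (S k i * S i j) = -(1/2) * ∑ i, s i ^ 2 := by
    rw [pull3 (1/2) (fun a b d => S d a * S a b),
      sum3_cycle2 (fun a b c => S c a * S a b), core2 S s hsk hs]; ring
  have hL1 : ∑ i, ∑ j, ∑ _k : Fin n, 1/4 * S i j = 0 := by
    rw [pull3 (1/4) (fun a b _ => S a b)]
    simp only [Finset.sum_const, Finset.card_univ, Fintype.card_fin, nsmul_eq_mul]
    rw [pull2 (n:ℝ) (fun a b => S a b), hss0S S s hsk hs]; ring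
  have hL2 : ∑ _i : Fin n, ∑ j, ∑ k, 1/4 * S j k = 0 := by
    rw [pull3 (1/4) (fun _ b d => S b d)]
    rw [Finset.sum_const, Finset.card_univ, Fintype.card_fin, nsmul_eq_mul,
      hss0S S s hsk hs]
    ring
  have hL3 : ∑ i, ∑ _j : Fin n, ∑ k, 1/4 * S k i = 0 := by
    rw [pull3 (1/4) (fun a _ d => S d a)]
    have inner : ∀ i : Fin n, ∑ _j : Fin n, ∑ k, S k i = (n:ℝ) * (-s i) := by
      intro i
      rw [Finset.sum_congr rfl fun j (_ : j ∈ Finset.univ) => hcolS S s hsk hs i]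
      simp [Finset.sum_const, Finset.card_univ]
    rw [Finset.sum_congr rfl fun i (_ : i ∈ Finset.univ) => inner i,
      pull1 (n:ℝ) (fun i => -s i)]
    rw [Finset.sum_neg_distrib, hs0S S s hsk hs]; ring
  have hC : ∑ _i : Fin n, ∑ _j : Fin n, ∑ _k : Fin n, (1/8 : ℝ) = (n:ℝ)^3/8 := by
    simp [Finset.sum_const, Finset.card_univ]
    ring
  calc ∑ i, ∑ j, ∑ k, (S i j + 1/2) * (S j k + 1/2) * (S k i + 1/2)
      = ∑ i, ∑ j, ∑ k, (S i j * S j k * S k i + 1/2 * (S i j * S j k)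
          + 1/2 * (S j k * S k i) + 1/2 * (S k i * S i j) + 1/4 * S i j + 1/4 * S j k
          + 1/4 * S k i + 1/8) := sum3_congr fun i j k => by ring
    _ = (n:ℝ)^3/8 - 3/2 * ∑ i, s i ^ 2 := by
        simp only [Finset.sum_add_distrib]
        rw [hT3S S s hsk hs, hP1, hP2, hP3, hL1, hL2, hL3, hC]
        ring

private lemma hQvalS :
    ∑ i, ∑ j, ∑ k, ∑ l, S i j * S j k * S k l * S l i
      = ∑ i, ∑ k, (∑ j, S i j * S j k)^2 := by
  have hBsym : ∀ i k : Fin n, ∑ l, S k l * S l i = ∑ j, S i j * S j k := by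
    intro i k
    refine Finset.sum_congr rfl fun l _ => ?_
    rw [hsk l k, hsk i l]; ring
  calc ∑ i, ∑ j, ∑ k, ∑ l, S i j * S j k * S k l * S l i
      = ∑ i, ∑ j, ∑ k, ∑ l, (S i j * S j k) * (S k l * S l i) :=
        sum4_congr fun i j k l => by ring
    _ = ∑ i, ∑ j, ∑ k, (S i j * S j k) * (∑ l, S k l * S l i) :=
        sum3_congr fun i j k => (Finset.mul_sum _ _ _).symm
    _ = ∑ i, ∑ k, ∑ j, (S i j * S j k) * (∑ l, S k l * S l i) :=
        Finset.sum_congr rfl fun i _ => Finset.sum_comm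
    _ = ∑ i, ∑ k, (∑ j, S i j * S j k) * (∑ l, S k l * S l i) :=
        sum2_congr fun i k => (Finset.sum_mul _ _ _).symm
    _ = ∑ i, ∑ k, (∑ j, S i j * S j k)^2 :=
        sum2_congr fun i k => by rw [hBsym i k]; ring

private lemma hsBsS (t : Fin n → ℝ) (ht : ∀ i, t i = ∑ j, S i j * s j) :
    ∑ i, ∑ k, s i * (∑ j, S i j * S j k) * s k = -∑ j, t j ^ 2 := by
  have hneg : ∀ j : Fin n, ∑ i, s i * S i j = -t j := by
    intro j
    rw [ht j, ← Finset.sum_neg_distrib]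
    refine Finset.sum_congr rfl fun i _ => ?_
    rw [hsk i j]; ring
  calc ∑ i, ∑ k, s i * (∑ j, S i j * S j k) * s k
      = ∑ i, ∑ k, ∑ j, (s i * S i j) * (S j k * s k) := by
        refine sum2_congr fun i k => ?_
        rw [Finset.mul_sum, Finset.sum_mul]
        exact Finset.sum_congr rfl fun j _ => by ring
    _ = ∑ j, ∑ i, ∑ k, (s i * S i j) * (S j k * s k) :=
        sum3_cycle2 (fun i k j => (s i * S i j) * (S j k * s k))
    _ = ∑ j, (∑ i, s i * S i j) * (∑ k, S j k * s k) := by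
        refine Finset.sum_congr rfl fun j _ => ?_
        calc ∑ i, ∑ k, (s i * S i j) * (S j k * s k)
            = ∑ i, (s i * S i j) * ∑ k, S j k * s k :=
              Finset.sum_congr rfl fun i _ => (Finset.mul_sum _ _ _).symm
          _ = (∑ i, s i * S i j) * (∑ k, S j k * s k) := (Finset.sum_mul _ _ _).symm
    _ = ∑ j, (-t j) * t j := by
        refine Finset.sum_congr rfl fun j _ => ?_
        rw [hneg j, ← ht j]
    _ = -∑ j, t j ^ 2 := by
        rw [← Finset.sum_neg_distrib]
        exact Finset.sum_congr rfl fun j _ => by ring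

private lemma trace4_eval :
    ∑ i, ∑ j, ∑ k, ∑ l, (S i j + 1/2) * (S j k + 1/2) * (S k l + 1/2) * (S l i + 1/2)
      = (n:ℝ)^4/16 - (n:ℝ) * ∑ i, s i ^ 2 + ∑ i, ∑ k, (∑ j, S i j * S j k)^2 := by
  have hC1 : ∑ i : Fin n, ∑ j : Fin n, ∑ k : Fin n, ∑ l : Fin n, 1/2 * (S i j * S j k * S k l) = 0 := by
    rw [pull4 (1/2) (fun a b c d => S a b * S b c * S c d), core3 S s hsk hs]; ring
  have hC2 : ∑ i : Fin n, ∑ j : Fin n, ∑ k : Fin n, ∑ l : Fin n, 1/2 * (S i j * S j k * S l i) = 0 := by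
    have e : ∑ d, ∑ a, ∑ b, ∑ c : Fin n, S a b * S b c * S d a = 0 := by
      rw [sum4_congr (g := fun d a b c => S a b * S b c * S d a)
        (h := fun d a b c => S d a * S a b * S b c) (fun d a b c => by ring)]
      exact core3 S s hsk hs
    rw [pull4 (1/2) (fun a b c d => S a b * S b c * S d a),
      sum4_cycle3 (fun a b c d => S a b * S b c * S d a), e]; ring
  have hC3 : ∑ i : Fin n, ∑ j : Fin n, ∑ k : Fin n, ∑ l : Fin n, 1/2 * (S i j * S k l * S l i) = 0 := by
    have e : ∑ c, ∑ d, ∑ a, ∑ b : Fin n, S a b * S c d * S d a = 0 := by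
      rw [sum4_congr (g := fun c d a b => S a b * S c d * S d a)
        (h := fun c d a b => S c d * S d a * S a b) (fun c d a b => by ring)]
      exact core3 S s hsk hs
    rw [pull4 (1/2) (fun a b c d => S a b * S c d * S d a),
      sum4_cycle2 (fun a b c d => S a b * S c d * S d a), e]; ring
  have hC4 : ∑ i : Fin n, ∑ j : Fin n, ∑ k : Fin n, ∑ l : Fin n, 1/2 * (S j k * S k l * S l i) = 0 := by
    have e : ∑ b, ∑ c, ∑ d, ∑ a : Fin n, S b c * S c d * S d a = 0 := core3 S s hsk hs
    rw [pull4 (1/2) (fun a b c d => S b c * S c d * S d a),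
      sum4_cycle (fun a b c d => S b c * S c d * S d a), e]; ring
  have hAB : ∑ i : Fin n, ∑ j : Fin n, ∑ k : Fin n, ∑ l : Fin n, 1/4 * (S i j * S j k)
      = -(1/4) * (n:ℝ) * ∑ i, s i ^ 2 := by
    rw [pull4 (1/4) (fun a b c d => S a b * S b c)]
    have e : ∑ a, ∑ b, ∑ c, ∑ _d : Fin n, S a b * S b c
        = (n:ℝ) * ∑ a, ∑ b, ∑ c : Fin n, S a b * S b c := by
      rw [sum3_congr (g := fun a b c => ∑ _d : Fin n, S a b * S b c)
        (h := fun a b c => (n:ℝ) * (S a b * S b c)) (fun a b c => e_const1 _),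
        pull3 (n:ℝ) (fun a b c => S a b * S b c)]
    rw [e, core2 S s hsk hs]; ring
  have hAC : ∑ i : Fin n, ∑ j : Fin n, ∑ k : Fin n, ∑ l : Fin n, 1/4 * (S i j * S k l) = 0 := by
    rw [pull4 (1/4) (fun a b c d => S a b * S c d)]
    have e : ∑ a, ∑ b, ∑ c, ∑ d : Fin n, S a b * S c d = 0 := by
      rw [sum2_congr (g := fun a b => ∑ c, ∑ d : Fin n, S a b * S c d)
        (h := fun a b => S a b * ∑ c, ∑ d : Fin n, S c d)
        (fun a b => pull2 (S a b) (fun c d => S c d)), hss0S S s hsk hs]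
      simp
    rw [e]; ring
  have hAD : ∑ i : Fin n, ∑ j : Fin n, ∑ k : Fin n, ∑ l : Fin n, 1/4 * (S i j * S l i)
      = -(1/4) * (n:ℝ) * ∑ i, s i ^ 2 := by
    rw [pull4 (1/4) (fun a b c d => S a b * S d a),
      sum4_cycle3 (fun a b c d => S a b * S d a)]
    have e : ∑ d, ∑ a, ∑ b, ∑ _c : Fin n, S a b * S d a
        = (n:ℝ) * ∑ d, ∑ a, ∑ b : Fin n, S d a * S a b := by
      rw [sum3_congr (g := fun d a b => ∑ _c : Fin n, S a b * S d a)
        (h := fun d a b => (n:ℝ) * (S d a * S a b))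
        (fun d a b => by beta_reduce; rw [e_const1 (S a b * S d a)]; ring),
        pull3 (n:ℝ) (fun d a b => S d a * S a b)]
    rw [e, core2 S s hsk hs]; ring
  have hBC : ∑ i : Fin n, ∑ j : Fin n, ∑ k : Fin n, ∑ l : Fin n, 1/4 * (S j k * S k l)
      = -(1/4) * (n:ℝ) * ∑ i, s i ^ 2 := by
    rw [pull4 (1/4) (fun a b c d => S b c * S c d)]
    rw [Finset.sum_const, Finset.card_univ, Fintype.card_fin, nsmul_eq_mul,
      core2 S s hsk hs]
    ring
  have hBD : ∑ i : Fin n, ∑ j : Fin n, ∑ k : Fin n, ∑ l : Fin n, 1/4 * (S j k * S l i) = 0 := by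
    rw [pull4 (1/4) (fun a b c d => S b c * S d a)]
    have inner : ∀ a : Fin n, ∑ b, ∑ c, ∑ d : Fin n, S b c * S d a = 0 := by
      intro a
      have h1 : ∀ b : Fin n, ∑ c, ∑ d : Fin n, S b c * S d a = s b * -s a := by
        intro b
        calc ∑ c, ∑ d : Fin n, S b c * S d a
            = ∑ c, S b c * ∑ d, S d a :=
              Finset.sum_congr rfl fun c _ => (Finset.mul_sum _ _ _).symm
          _ = (∑ c, S b c) * ∑ d, S d a := (Finset.sum_mul _ _ _).symm
          _ = s b * -s a := by rw [← hs b, hcolS S s hsk hs a]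
      rw [Finset.sum_congr rfl fun b (_ : b ∈ Finset.univ) => h1 b,
        ← Finset.sum_mul, hs0S S s hsk hs]
      ring
    rw [Finset.sum_congr rfl fun a (_ : a ∈ Finset.univ) => inner a]
    simp
  have hCD : ∑ i : Fin n, ∑ j : Fin n, ∑ k : Fin n, ∑ l : Fin n, 1/4 * (S k l * S l i)
      = -(1/4) * (n:ℝ) * ∑ i, s i ^ 2 := by
    rw [pull4 (1/4) (fun a b c d => S c d * S d a),
      sum4_cycle2 (fun a b c d => S c d * S d a)]
    have e : ∑ c, ∑ d, ∑ a, ∑ _b : Fin n, S c d * S d a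
        = (n:ℝ) * ∑ c, ∑ d, ∑ a : Fin n, S c d * S d a := by
      rw [sum3_congr (g := fun c d a => ∑ _b : Fin n, S c d * S d a)
        (h := fun c d a => (n:ℝ) * (S c d * S d a)) (fun c d a => e_const1 _),
        pull3 (n:ℝ) (fun c d a => S c d * S d a)]
    rw [e, core2 S s hsk hs]; ring
  have hSGA : ∑ i : Fin n, ∑ j : Fin n, ∑ k : Fin n, ∑ l : Fin n, 1/8 * S i j = 0 := by
    rw [pull4 (1/8) (fun a b c d => S a b)]
    have e : ∑ a : Fin n, ∑ b : Fin n, ∑ _c : Fin n, ∑ _d : Fin n, S a b = 0 := by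
      rw [sum2_congr (g := fun a b => ∑ _c, ∑ _d : Fin n, S a b)
        (h := fun a b => (n:ℝ)^2 * S a b) (fun a b => e_const2 _),
        pull2 ((n:ℝ)^2) (fun a b => S a b), hss0S S s hsk hs]
      ring
    rw [e]; ring
  have hSGB : ∑ i : Fin n, ∑ j : Fin n, ∑ k : Fin n, ∑ l : Fin n, 1/8 * S j k = 0 := by
    rw [pull4 (1/8) (fun a b c d => S b c)]
    have h1 : ∑ b, ∑ c, ∑ _d : Fin n, S b c = 0 := by
      rw [sum2_congr (g := fun b c => ∑ _d : Fin n, S b c)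
        (h := fun b c => (n:ℝ) * S b c) (fun b c => e_const1 _),
        pull2 (n:ℝ) (fun b c => S b c), hss0S S s hsk hs]
      ring
    rw [Finset.sum_congr rfl fun a (_ : a ∈ Finset.univ) => h1]
    simp
  have hSGC : ∑ i : Fin n, ∑ j : Fin n, ∑ k : Fin n, ∑ l : Fin n, 1/8 * S k l = 0 := by
    rw [pull4 (1/8) (fun a b c d => S c d)]
    have h1 : ∀ _b : Fin n, ∑ c, ∑ d : Fin n, S c d = (0:ℝ) := fun _ => hss0S S s hsk hs
    have h2 : ∀ _a : Fin n, ∑ _b : Fin n, ∑ c : Fin n, ∑ d : Fin n, S c d = (0:ℝ) := by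
      intro a
      rw [Finset.sum_congr rfl fun b (_ : b ∈ Finset.univ) => h1 b]
      simp
    rw [Finset.sum_congr rfl fun a (_ : a ∈ Finset.univ) => h2 a]
    simp
  have hSGD : ∑ i : Fin n, ∑ j : Fin n, ∑ k : Fin n, ∑ l : Fin n, 1/8 * S l i = 0 := by
    rw [pull4 (1/8) (fun a b c d => S d a)]
    have h1 : ∀ a : Fin n, ∑ _b : Fin n, ∑ _c : Fin n, ∑ d : Fin n, S d a = (n:ℝ)^2 * -s a := by
      intro a
      rw [sum2_congr (g := fun b c => ∑ d : Fin n, S d a)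
        (h := fun b c => -s a) (fun b c => hcolS S s hsk hs a)]
      exact e_const2 _
    rw [Finset.sum_congr rfl fun a (_ : a ∈ Finset.univ) => h1 a,
      pull1 ((n:ℝ)^2) (fun a => -s a), Finset.sum_neg_distrib, hs0S S s hsk hs]
    ring
  have hCst : ∑ _i : Fin n, ∑ _j : Fin n, ∑ _k : Fin n, ∑ _l : Fin n, (1/16 : ℝ)
      = (n:ℝ)^4/16 := by
    simp [Finset.sum_const, Finset.card_univ]
    ring
  calc ∑ i, ∑ j, ∑ k, ∑ l, (S i j + 1/2) * (S j k + 1/2) * (S k l + 1/2) * (S l i + 1/2)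
      = ∑ i, ∑ j, ∑ k, ∑ l, (S i j * S j k * S k l * S l i
          + 1/2 * (S i j * S j k * S k l) + 1/2 * (S i j * S j k * S l i)
          + 1/2 * (S i j * S k l * S l i) + 1/2 * (S j k * S k l * S l i)
          + 1/4 * (S i j * S j k) + 1/4 * (S i j * S k l) + 1/4 * (S i j * S l i)
          + 1/4 * (S j k * S k l) + 1/4 * (S j k * S l i) + 1/4 * (S k l * S l i)
          + 1/8 * S i j + 1/8 * S j k + 1/8 * S k l + 1/8 * S l i + 1/16) :=
        sum4_congr fun i j k l => by ring
    _ = (n:ℝ)^4/16 - (n:ℝ) * ∑ i, s i ^ 2 + ∑ i, ∑ k, (∑ j, S i j * S j k)^2 := by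
        simp only [Finset.sum_add_distrib]
        rw [hQvalS S s hsk hs, hC1, hC2, hC3, hC4, hAB, hAC, hAD, hBC, hBD, hCD,
          hSGA, hSGB, hSGC, hSGD, hCst]
        ring

end Helpers

/-- Regime of two parts: characterization of equality. -/
theorem stmt_2 (n : ℕ) (hn : 0 < n) (A : Matrix (Fin n) (Fin n) ℝ)
    (hA0 : ∀ i j, 0 ≤ A i j)
    (hAT : A + A.transpose = Matrix.of fun _ _ => (1 : ℝ))
    (z : ℝ) (hz : 1/2 ≤ z) (hz1 : z ≤ 1)
    (h3 : Matrix.trace (A ^ 3) / (n : ℝ) ^ 3 = (z ^ 3 + (1 - z) ^ 3) / 8)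
    (h4 : Matrix.trace (A ^ 4) / (n : ℝ) ^ 4 = (z ^ 4 + (1 - z) ^ 4) / 16) :
    ∃ w : Fin n → ℝ, ∀ i j, A i j = 1/2 + w i - w j := by
  have hN : (0:ℝ) < (n:ℝ) := by exact_mod_cast hn
  have hNne : ((n:ℝ)) ≠ 0 := ne_of_gt hN
  set S : Fin n → Fin n → ℝ := fun i j => A i j - 1/2 with hSdef
  have hA : ∀ i j, A i j = S i j + 1/2 := by intro i j; simp only [hSdef]; ring
  have hsk : ∀ i j, S j i = - S i j := by
    intro i j
    have h := congrFun (congrFun hAT j) i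
    simp only [Matrix.add_apply, Matrix.transpose_apply, Matrix.of_apply] at h
    simp only [hSdef]
    linarith
  set s : Fin n → ℝ := fun i => ∑ j, S i j with hsdef
  have hs : ∀ i, s i = ∑ j, S i j := fun i => rfl
  -- trace computations
  have tr3 : Matrix.trace (A ^ 3) = (n:ℝ)^3/8 - 3/2 * ∑ i, s i ^ 2 := by
    have h1 : Matrix.trace (A ^ 3) = ∑ i, ∑ j, ∑ k, A i j * A j k * A k i := by
      simp [pow_succ, Matrix.trace, Matrix.diag, Matrix.mul_apply, Finset.sum_mul]
      exact Finset.sum_congr rfl fun i _ => Finset.sum_comm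
    rw [h1,
      sum3_congr (g := fun i j k => A i j * A j k * A k i)
        (h := fun i j k => (S i j + 1/2) * (S j k + 1/2) * (S k i + 1/2))
        (fun i j k => by beta_reduce; rw [hA i j, hA j k, hA k i]),
      trace3_eval S s hsk hs]
  have tr4 : Matrix.trace (A ^ 4)
      = (n:ℝ)^4/16 - (n:ℝ) * ∑ i, s i ^ 2 + ∑ i, ∑ k, (∑ j, S i j * S j k)^2 := by
    have h1 : Matrix.trace (A ^ 4) = ∑ i, ∑ j, ∑ k, ∑ l, A i j * A j k * A k l * A l i := by
      simp [pow_succ, Matrix.trace, Matrix.diag, Matrix.mul_apply, Finset.sum_mul]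
      exact Finset.sum_congr rfl fun i _ => sum3_rev _
    rw [h1,
      sum4_congr (g := fun i j k l => A i j * A j k * A k l * A l i)
        (h := fun i j k l => (S i j + 1/2) * (S j k + 1/2) * (S k l + 1/2) * (S l i + 1/2))
        (fun i j k l => by beta_reduce; rw [hA i j, hA j k, hA k l, hA l i]),
      trace4_eval S s hsk hs]
  -- value of kappa
  have hκval : ∑ i, s i ^ 2 = (n:ℝ)^3 * (z*(1-z))/4 := by
    have h3' := (div_eq_iff (pow_ne_zero 3 hNne)).mp h3
    rw [tr3] at h3'
    linear_combination (-2/3 : ℝ) * h3'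
  have hQval2 : (n:ℝ)^2 * (∑ i, ∑ k, (∑ j, S i j * S j k)^2) = 2 * (∑ i, s i ^ 2)^2 := by
    have h4' := (div_eq_iff (pow_ne_zero 4 hNne)).mp h4
    rw [tr4] at h4'
    linear_combination (n:ℝ)^2 * h4'
      + (-2 * ∑ i, s i ^ 2 + (n:ℝ)^3 - 2*((n:ℝ)^3*(z*(1-z))/4)) * hκval
  -- auxiliary sums
  have htsum : ∑ i, ∑ j, S i j * s j = -∑ i, s i ^ 2 := by
    rw [Finset.sum_comm]
    calc ∑ j, ∑ i, S i j * s j = ∑ j, (∑ i, S i j) * s j :=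
          Finset.sum_congr rfl fun j _ => (Finset.sum_mul _ _ _).symm
      _ = ∑ j, (-s j) * s j :=
          Finset.sum_congr rfl fun j _ => by rw [hcolS S s hsk hs j]
      _ = -∑ i, s i ^ 2 := by
          rw [← Finset.sum_neg_distrib]
          exact Finset.sum_congr rfl fun j _ => by ring
  have hCS : (∑ i, s i ^ 2)^2 ≤ (n:ℝ) * ∑ i, (∑ j, S i j * s j)^2 := by
    have h1 := Finset.sum_mul_sq_le_sq_mul_sq Finset.univ (fun _ : Fin n => (1:ℝ))
      (fun i => ∑ j, S i j * s j)
    simp only [one_mul, one_pow, Finset.sum_const, Finset.card_univ, Fintype.card_fin,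
      nsmul_eq_mul, mul_one] at h1
    calc (∑ i, s i ^ 2)^2 = (∑ i, ∑ j, S i j * s j)^2 := by rw [htsum]; ring
      _ ≤ (n:ℝ) * ∑ i, (∑ j, S i j * s j)^2 := h1
  have hBsum : ∑ i, ∑ k : Fin n, (∑ j, S i j * S j k) = -∑ i, s i ^ 2 := by
    calc ∑ i, ∑ k : Fin n, (∑ j, S i j * S j k)
        = ∑ i, ∑ j, ∑ k : Fin n, S i j * S j k :=
          Finset.sum_congr rfl fun i _ => Finset.sum_comm
      _ = ∑ i, ∑ j, S i j * s j := sum2_congr fun i j => by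
          rw [← Finset.mul_sum, ← hs j]
      _ = -∑ i, s i ^ 2 := htsum
  have hsBs : ∑ i, ∑ k, s i * (∑ j, S i j * S j k) * s k = -∑ j, (∑ m, S j m * s m)^2 :=
    hsBsS S s hsk hs (fun i => ∑ j, S i j * s j) (fun i => rfl)
  have hTrB : ∑ i, ∑ j, S i j * S j i = -∑ i, ∑ j, S i j ^ 2 := by
    rw [← Finset.sum_neg_distrib]
    refine Finset.sum_congr rfl fun i _ => ?_
    rw [← Finset.sum_neg_distrib]
    refine Finset.sum_congr rfl fun j _ => ?_
    rw [hsk j i]; ring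
  -- abbreviations
  set K := ∑ i, s i ^ 2 with hK
  set T := ∑ i, (∑ j, S i j * s j)^2 with hT
  set Qq := ∑ i, ∑ k, (∑ j, S i j * S j k)^2 with hQq
  have hK0 : 0 ≤ K := by rw [hK]; exact Finset.sum_nonneg fun i _ => sq_nonneg _
  have hT0 : 0 ≤ T := by rw [hT]; exact Finset.sum_nonneg fun i _ => sq_nonneg _
  -- the P matrix sum
  have hss : ∑ i, ∑ k : Fin n, s i * s k = 0 := by
    have h1 : ∀ i : Fin n, ∑ k, s i * s k = 0 := by
      intro i; rw [← Finset.mul_sum, hs0S S s hsk hs, mul_zero]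
    rw [Finset.sum_congr rfl fun i (_ : i ∈ Finset.univ) => h1 i]
    simp
  have hs2 : ∑ i, ∑ k : Fin n, s i ^ 2 * s k ^ 2 = K * K := by
    calc ∑ i, ∑ k : Fin n, s i ^ 2 * s k ^ 2 = ∑ i, s i ^ 2 * ∑ k, s k ^ 2 :=
          Finset.sum_congr rfl fun i _ => (Finset.mul_sum _ _ _).symm
      _ = (∑ i, s i ^ 2) * ∑ k, s k ^ 2 := (Finset.sum_mul _ _ _).symm
      _ = K * K := by rw [hK]
  have hPsum : ∑ i, ∑ k, ((n:ℝ)^2*K^2*(∑ j, S i j * S j k) + K^3 + (n:ℝ)^2*T*(s i * s k))^2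
      = (n:ℝ)^2*K^2 * (K^4 - (n:ℝ)^2*T^2) := by
    have hPexp : ∀ i k : Fin n,
        ((n:ℝ)^2*K^2*(∑ j, S i j * S j k) + K^3 + (n:ℝ)^2*T*(s i * s k))^2
        = (n:ℝ)^4*K^4 * ((∑ j, S i j * S j k)^2) + 2*(n:ℝ)^2*K^5 * (∑ j, S i j * S j k)
          + 2*(n:ℝ)^4*K^2*T * (s i * (∑ j, S i j * S j k) * s k) + K^6
          + 2*(n:ℝ)^2*K^3*T * (s i * s k) + (n:ℝ)^4*T^2 * (s i ^ 2 * s k ^ 2) :=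
      fun i k => by ring
    rw [sum2_congr hPexp]
    simp only [Finset.sum_add_distrib]
    rw [pull2 ((n:ℝ)^4*K^4) (fun i k => (∑ j, S i j * S j k)^2),
      pull2 (2*(n:ℝ)^2*K^5) (fun i k => (∑ j, S i j * S j k)),
      pull2 (2*(n:ℝ)^4*K^2*T) (fun i k => s i * (∑ j, S i j * S j k) * s k),
      pull2 (2*(n:ℝ)^2*K^3*T) (fun i k => s i * s k),
      pull2 ((n:ℝ)^4*T^2) (fun i k => s i ^ 2 * s k ^ 2),
      e_const2 (K^6), ← hQq, hBsum, hsBs, hss, hs2]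
    linear_combination ((n:ℝ)^2*K^4) * hQval2
  have hPzero : ∑ i, ∑ k, ((n:ℝ)^2*K^2*(∑ j, S i j * S j k) + K^3 + (n:ℝ)^2*T*(s i * s k))^2
      = 0 := by
    have hge : (0:ℝ) ≤ ∑ i, ∑ k, ((n:ℝ)^2*K^2*(∑ j, S i j * S j k) + K^3 + (n:ℝ)^2*T*(s i * s k))^2 :=
      Finset.sum_nonneg fun i _ => Finset.sum_nonneg fun k _ => sq_nonneg _
    have hle : ∑ i, ∑ k, ((n:ℝ)^2*K^2*(∑ j, S i j * S j k) + K^3 + (n:ℝ)^2*T*(s i * s k))^2 ≤ 0 := by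
      rw [hPsum]
      have h0 : K^2*K^2 ≤ ((n:ℝ)*T)*((n:ℝ)*T) :=
        mul_le_mul hCS hCS (sq_nonneg K) (mul_nonneg hN.le hT0)
      have h1 : K^4 ≤ (n:ℝ)^2 * T^2 := by nlinarith [h0]
      have h2 : (0:ℝ) ≤ (n:ℝ)^2*K^2 := by positivity
      nlinarith [mul_nonneg h2 (sub_nonneg.mpr h1)]
    linarith
  have hPentry : ∀ i k : Fin n,
      (n:ℝ)^2*K^2*(∑ j, S i j * S j k) + K^3 + (n:ℝ)^2*T*(s i * s k) = 0 := by
    intro i k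
    have h1 := (Finset.sum_eq_zero_iff_of_nonneg
      (fun i _ => Finset.sum_nonneg fun k _ => sq_nonneg _)).mp hPzero i (Finset.mem_univ i)
    have h2 := (Finset.sum_eq_zero_iff_of_nonneg (fun k _ => sq_nonneg _)).mp h1 k
      (Finset.mem_univ k)
    exact pow_eq_zero_iff two_ne_zero |>.mp h2
  -- diagonal identity
  have hssK : ∑ i, s i * s i = K := by
    rw [hK]; exact Finset.sum_congr rfl fun i _ => by ring
  have hdiag : ∑ i, ((n:ℝ)^2*K^2*(∑ j, S i j * S j i) + K^3 + (n:ℝ)^2*T*(s i * s i)) = 0 :=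
    Finset.sum_eq_zero fun i _ => hPentry i i
  have hdiag2 : (n:ℝ)^2*K^2*(∑ i, ∑ j, S i j * S j i) + (n:ℝ)*K^3 + (n:ℝ)^2*T*K = 0 := by
    simp only [Finset.sum_add_distrib] at hdiag
    rw [pull1 ((n:ℝ)^2*K^2) (fun i => ∑ j, S i j * S j i), e_const1 (K^3),
      pull1 ((n:ℝ)^2*T) (fun i => s i * s i), hssK] at hdiag
    exact hdiag
  have hS2 : (n:ℝ) * (∑ i, ∑ j, S i j ^ 2) = 2 * K := by
    by_cases hKz : K = 0
    · have hQ0 : Qq = 0 := by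
        have h1 : (n:ℝ)^2 * Qq = 0 := by rw [hQval2, hKz]; ring
        exact (mul_eq_zero.mp h1).resolve_left (pow_ne_zero 2 hNne)
      have hQsum0 : ∑ i, ∑ k, (∑ j, S i j * S j k)^2 = 0 := by rw [← hQq]; exact hQ0
      have hBij : ∀ i k : Fin n, (∑ j, S i j * S j k) = 0 := by
        intro i k
        have h1 := (Finset.sum_eq_zero_iff_of_nonneg
          (fun i _ => Finset.sum_nonneg fun k _ => sq_nonneg _)).mp hQsum0 i (Finset.mem_univ i)
        have h2 := (Finset.sum_eq_zero_iff_of_nonneg (fun k _ => sq_nonneg _)).mp h1 k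
          (Finset.mem_univ k)
        exact pow_eq_zero_iff two_ne_zero |>.mp h2
      have h0 : ∑ i, ∑ j, S i j * S j i = 0 := Finset.sum_eq_zero fun i _ => hBij i i
      have hSsq : ∑ i, ∑ j, S i j ^ 2 = 0 := by linarith [hTrB, h0]
      rw [hSsq, hKz]; ring
    · have hKpos : 0 < K := lt_of_le_of_ne hK0 (Ne.symm hKz)
      have hfac : (n:ℝ)^2*K^2 * (K^4 - (n:ℝ)^2*T^2) = 0 := by rw [← hPsum]; exact hPzero
      have hne : (n:ℝ)^2*K^2 ≠ 0 := by positivity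
      have h1 : K^4 = (n:ℝ)^2*T^2 := by
        have h2 := (mul_eq_zero.mp hfac).resolve_left hne
        linarith [h2]
      have hNT : (n:ℝ)*T = K^2 := by
        nlinarith [h1, hCS, hT0, hN, sq_nonneg ((n:ℝ)*T - K^2), hKpos]
      have hmain : (n:ℝ)^2*K^2 * ((n:ℝ) * (∑ i, ∑ j, S i j ^ 2) - 2*K) = 0 := by
        linear_combination (-(n:ℝ)) * hdiag2 + (n:ℝ)^3*K^2 * hTrB + (n:ℝ)^2*K * hNT
      have h3 := (mul_eq_zero.mp hmain).resolve_left hne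
      linarith [h3]
  -- final sum of squares
  have hSsi : ∑ i, ∑ j, S i j * s i = K := by
    calc ∑ i, ∑ j, S i j * s i = ∑ i, (∑ j, S i j) * s i :=
          Finset.sum_congr rfl fun i _ => (Finset.sum_mul _ _ _).symm
      _ = ∑ i, s i * s i := Finset.sum_congr rfl fun i _ => by rw [← hs i]
      _ = K := hssK
  have hsi2 : ∑ i, ∑ _j : Fin n, s i ^ 2 = (n:ℝ)*K := by
    rw [Finset.sum_congr rfl fun i (_ : i ∈ Finset.univ) => e_const1 (s i ^2),
      pull1 (n:ℝ) (fun i => s i ^ 2), ← hK]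
  have hsj2 : ∑ _i : Fin n, ∑ j, s j ^ 2 = (n:ℝ)*K := by
    rw [Finset.sum_congr rfl fun i (_ : i ∈ Finset.univ) =>
      (show ∑ j, s j ^ 2 = K from hK.symm), e_const1 K]
  have hfin : ∑ i, ∑ j, ((n:ℝ) * S i j - (s i - s j))^2 = 0 := by
    have hexp : ∀ i j : Fin n, ((n:ℝ) * S i j - (s i - s j))^2
        = (n:ℝ)^2 * (S i j ^ 2) + (-2*(n:ℝ)) * (S i j * s i) + (2*(n:ℝ)) * (S i j * s j)
          + s i ^ 2 + (-2 : ℝ) * (s i * s j) + s j ^ 2 := fun i j => by ring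
    rw [sum2_congr hexp]
    simp only [Finset.sum_add_distrib]
    rw [pull2 ((n:ℝ)^2) (fun i j => S i j ^ 2),
      pull2 (-2*(n:ℝ)) (fun i j => S i j * s i),
      pull2 (2*(n:ℝ)) (fun i j => S i j * s j),
      pull2 (-2 : ℝ) (fun i j => s i * s j),
      hSsi, htsum, hss, hsi2, hsj2]
    linear_combination (n:ℝ) * hS2
  have hentry : ∀ i j : Fin n, (n:ℝ) * S i j - (s i - s j) = 0 := by
    intro i j
    have h1 := (Finset.sum_eq_zero_iff_of_nonneg
      (fun i _ => Finset.sum_nonneg fun j _ => sq_nonneg _)).mp hfin i (Finset.mem_univ i)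
    have h2 := (Finset.sum_eq_zero_iff_of_nonneg (fun j _ => sq_nonneg _)).mp h1 j
      (Finset.mem_univ j)
    exact pow_eq_zero_iff two_ne_zero |>.mp h2
  refine ⟨fun i => s i / n, fun i j => ?_⟩
  have h1 := hentry i j
  rw [hA i j]
  field_simp
  linear_combination (2:ℝ) * h1
end

section
/- Let n be a positive integer, let w ∈ ℝⁿ, and suppose the n×n matrix A defined by A_{i,j} = 1/2 + w_i − w_j is a tournament matrix (i.e., all its entries are non-negative). Then there exists a real number z with 1/2 ≤ z ≤ 1 such that σ₃(A) = (z³ + (1−z)³)/8 and σ₄(A) = (z⁴ + (1−z)⁴)/16; in particular σ₃(A) ≥ 1/32 and A achieves equality σ₄(A) = g(σ₃(A)) in the two-part regime. -/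
lemma tr3_fin2 (M : Matrix (Fin 2) (Fin 2) ℝ) :
    Matrix.trace (M^3) = (M 0 0 + M 1 1)^3
      - 3*(M 0 0 + M 1 1)*(M 0 0 * M 1 1 - M 0 1 * M 1 0) := by
  simp [pow_succ, Matrix.trace, Matrix.mul_apply, Fin.sum_univ_two, Matrix.diag]
  ring

lemma tr4_fin2 (M : Matrix (Fin 2) (Fin 2) ℝ) :
    Matrix.trace (M^4) = (M 0 0 + M 1 1)^4
      - 4*(M 0 0 + M 1 1)^2*(M 0 0 * M 1 1 - M 0 1 * M 1 0)
      + 2*(M 0 0 * M 1 1 - M 0 1 * M 1 0)^2 := by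
  simp [pow_succ, Matrix.trace, Matrix.mul_apply, Fin.sum_univ_two, Matrix.diag]
  ring

lemma trace_comm3 {n : ℕ} (B : Matrix (Fin n) (Fin 2) ℝ) (C : Matrix (Fin 2) (Fin n) ℝ) :
    Matrix.trace ((B*C)^3) = Matrix.trace ((C*B)^3) := by
  have e : (B*C)^3 = B * ((C*B)*(C*B)*C) := by
    simp only [pow_succ, pow_zero, one_mul, Matrix.mul_assoc]
  rw [e, Matrix.trace_mul_comm]
  congr 1
  simp only [pow_succ, pow_zero, one_mul, Matrix.mul_assoc]

lemma trace_comm4 {n : ℕ} (B : Matrix (Fin n) (Fin 2) ℝ) (C : Matrix (Fin 2) (Fin n) ℝ) :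
    Matrix.trace ((B*C)^4) = Matrix.trace ((C*B)^4) := by
  have e : (B*C)^4 = B * ((C*B)*(C*B)*(C*B)*C) := by
    simp only [pow_succ, pow_zero, one_mul, Matrix.mul_assoc]
  rw [e, Matrix.trace_mul_comm]
  congr 1
  simp only [pow_succ, pow_zero, one_mul, Matrix.mul_assoc]

set_option maxHeartbeats 1000000 in
/-- Matrices of the form 1/2 + wᵢ − wⱼ achieve equality in the two-part regime. -/
theorem stmt_3 (n : ℕ) (hn : 0 < n) (w : Fin n → ℝ)
    (A : Matrix (Fin n) (Fin n) ℝ)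
    (hA : ∀ i j, A i j = 1/2 + w i - w j)
    (hA0 : ∀ i j, 0 ≤ A i j) :
    ∃ z : ℝ, 1/2 ≤ z ∧ z ≤ 1 ∧
      Matrix.trace (A ^ 3) / (n : ℝ) ^ 3 = (z ^ 3 + (1 - z) ^ 3) / 8 ∧
      Matrix.trace (A ^ 4) / (n : ℝ) ^ 4 = (z ^ 4 + (1 - z) ^ 4) / 16 := by
  have hn' : (0:ℝ) < n := by exact_mod_cast hn
  set S := ∑ i, w i with hS
  set Q := ∑ i, (w i)^2 with hQ
  set B : Matrix (Fin n) (Fin 2) ℝ := Matrix.of (fun i k => if k = 0 then 1/2 + w i else 1) with hB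
  set C : Matrix (Fin 2) (Fin n) ℝ := Matrix.of (fun k j => if k = 0 then 1 else -(w j)) with hC
  have hBC : A = B * C := by
    ext i j
    rw [hA, Matrix.mul_apply, Fin.sum_univ_two]
    simp [hB, hC]
    ring
  have hM00 : (C*B) 0 0 = n/2 + S := by
    simp [Matrix.mul_apply, hB, hC, Finset.sum_add_distrib, Finset.card_univ]
    ring
  have hM01 : (C*B) 0 1 = n := by
    simp [Matrix.mul_apply, hB, hC, Finset.card_univ]
  have hM10 : (C*B) 1 0 = -(S/2 + Q) := by
    simp [Matrix.mul_apply, hB, hC]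
    rw [Finset.sum_congr rfl (fun i _ => show w i * (2⁻¹ + w i) = (1/2)*w i + (w i)^2 by ring)]
    rw [Finset.sum_add_distrib, ← Finset.mul_sum]
    ring
  have hM11 : (C*B) 1 1 = -S := by
    simp [Matrix.mul_apply, hB, hC]
    exact hS.symm
  set d := (n:ℝ)*Q - S^2 with hd
  have ht : (C*B) 0 0 + (C*B) 1 1 = n/2 := by rw [hM00, hM11]; ring
  have hdet : (C*B) 0 0 * (C*B) 1 1 - (C*B) 0 1 * (C*B) 1 0 = d := by
    rw [hM00, hM01, hM10, hM11, hd]; ring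
  have htr3 : Matrix.trace (A^3) = ((n:ℝ)/2)^3 - 3*((n:ℝ)/2)*d := by
    rw [hBC, trace_comm3, tr3_fin2, ht, hdet]
  have htr4 : Matrix.trace (A^4) = ((n:ℝ)/2)^4 - 4*((n:ℝ)/2)^2*d + 2*d^2 := by
    rw [hBC, trace_comm4, tr4_fin2, ht, hdet]
  -- bounds on d
  have hd0 : 0 ≤ d := by
    have h := sq_sum_le_card_mul_sum_sq (s := Finset.univ) (f := w)
    rw [Finset.card_univ, Fintype.card_fin] at h
    rw [hd]
    linarith
  have hd16 : d ≤ (n:ℝ)^2/16 := by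
    obtain ⟨iM, _, hiM⟩ := Finset.exists_max_image Finset.univ w ⟨⟨0, hn⟩, Finset.mem_univ _⟩
    obtain ⟨im, _, him⟩ := Finset.exists_min_image Finset.univ w ⟨⟨0, hn⟩, Finset.mem_univ _⟩
    set c := (w im + w iM)/2 with hc
    have hrange : w iM - w im ≤ 1/2 := by
      have := hA0 im iM
      rw [hA] at this
      linarith
    have hsum : ∑ i, (w i - c)^2 ≤ (n:ℝ)/16 := by
      have hb : ∀ i ∈ Finset.univ, (w i - c)^2 ≤ 1/16 := by
        intro i _
        have h1 := hiM i (Finset.mem_univ i)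
        have h2 := him i (Finset.mem_univ i)
        rw [hc]; nlinarith
      calc ∑ i, (w i - c)^2 ≤ ∑ _i : Fin n, (1:ℝ)/16 := Finset.sum_le_sum hb
        _ = (n:ℝ)/16 := by rw [Finset.sum_const, Finset.card_univ, Fintype.card_fin]; ring
    have hid : d = (n:ℝ) * (∑ i, (w i - c)^2) - (∑ i, (w i - c))^2 := by
      have e1 : ∑ i, (w i - c)^2 = Q - 2*c*S + n*c^2 := by
        rw [Finset.sum_congr rfl (fun i _ => show (w i - c)^2 = (w i)^2 - (2*c)*w i + c^2 by ring)]
        rw [Finset.sum_add_distrib, Finset.sum_sub_distrib, ← Finset.mul_sum,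
          Finset.sum_const, Finset.card_univ, Fintype.card_fin, nsmul_eq_mul]
      have e2 : ∑ i, (w i - c) = S - n*c := by
        rw [Finset.sum_sub_distrib, Finset.sum_const, Finset.card_univ, Fintype.card_fin,
          nsmul_eq_mul]
      rw [e1, e2, hd]; ring
    have hsq : (0:ℝ) ≤ (∑ i, (w i - c))^2 := sq_nonneg _
    rw [hid]
    nlinarith [hsum, sq_nonneg (∑ i, (w i - c)), hn']
  -- choose z
  set u := d / (n:ℝ)^2 with hu
  have hu0 : 0 ≤ u := div_nonneg hd0 (by positivity)
  have hu16 : u ≤ 1/16 := by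
    rw [hu, div_le_iff₀ (by positivity)]
    linarith [hd16]
  set s := Real.sqrt (1 - 16*u) with hs'
  have hs0 : 0 ≤ s := Real.sqrt_nonneg _
  have hs2 : s^2 = 1 - 16*u := Real.sq_sqrt (by linarith)
  have hs1 : s ≤ 1 := by
    have h : Real.sqrt (1 - 16*u) ≤ Real.sqrt 1 := Real.sqrt_le_sqrt (by linarith)
    rw [Real.sqrt_one] at h
    exact h
  refine ⟨(1+s)/2, by linarith, by linarith, ?_, ?_⟩
  · have key : ((1+s)/2)^3 + (1-(1+s)/2)^3 = 1 - 3*(((1+s)/2)*(1-(1+s)/2)) := by ring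
    have hz : ((1+s)/2)*(1-(1+s)/2) = 4*u := by
      have : ((1+s)/2)*(1-(1+s)/2) = (1 - s^2)/4 := by ring
      rw [this, hs2]; ring
    rw [key, hz, htr3]
    rw [hu]
    field_simp
    ring
  · have key : ((1+s)/2)^4 + (1-(1+s)/2)^4
      = 1 - 4*(((1+s)/2)*(1-(1+s)/2)) + 2*(((1+s)/2)*(1-(1+s)/2))^2 := by ring
    have hz : ((1+s)/2)*(1-(1+s)/2) = 4*u := by
      have : ((1+s)/2)*(1-(1+s)/2) = (1 - s^2)/4 := by ring
      rw [this, hs2]; ring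
    rw [key, hz, htr4]
    rw [hu]
    field_simp
    ring
end

section
/- Let z ∈ (0,1] be a real number, let n be a positive integer, and let x₁,…,xₙ be non-negative real numbers such that x₁+⋯+xₙ = 1/2 and xᵢ ≤ z for every i ∈ [n]. Then x₁³+⋯+xₙ³ ≤ ⌊z⁻¹/2⌋·z³ + (1/2 − ⌊z⁻¹/2⌋·z)³, and equality holds if and only if all but at most one of x₁,…,xₙ are equal to 0 or to z. -/
noncomputable def Bfun (z s : ℝ) : ℝ :=
  ((⌊s / z⌋ : ℤ) : ℝ) * z ^ 3 + (s - ((⌊s / z⌋ : ℤ) : ℝ) * z) ^ 3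

lemma B_small {z s : ℝ} (hz : 0 < z) (h0 : 0 ≤ s) (h1 : s ≤ z) : Bfun z s = s ^ 3 := by
  rcases lt_or_eq_of_le h1 with h | rfl
  · have hf : ⌊s / z⌋ = 0 := by
      rw [Int.floor_eq_zero_iff]
      constructor
      · positivity
      · rw [div_lt_one hz]; exact h
    simp [Bfun, hf]
  · have hf : ⌊s / s⌋ = 1 := by
      rw [div_self (ne_of_gt hz)]; exact Int.floor_one
    simp [Bfun, hf]

lemma B_split {z s : ℝ} (hz : 0 < z) (hs : z ≤ s) : Bfun z s = z ^ 3 + Bfun z (s - z) := by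
  have h1 : (s - z) / z = s / z - (1 : ℤ) := by push_cast; field_simp
  have h2 : ⌊(s - z) / z⌋ = ⌊s / z⌋ - 1 := by rw [h1, Int.floor_sub_intCast]
  unfold Bfun
  rw [h2]
  push_cast
  ring

lemma B_val {z : ℝ} (hz : 0 < z) (m : ℕ) {t : ℝ} (h0 : 0 ≤ t) (h1 : t ≤ z) :
    Bfun z ((m : ℝ) * z + t) = (m : ℝ) * z ^ 3 + t ^ 3 := by
  induction m with
  | zero => simpa using B_small hz h0 h1
  | succ m ih =>
    have hs : z ≤ ((m + 1 : ℕ) : ℝ) * z + t := by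
      push_cast
      nlinarith [mul_nonneg (Nat.cast_nonneg (α := ℝ) m) hz.le]
    rw [B_split hz hs]
    have he : ((m + 1 : ℕ) : ℝ) * z + t - z = (m : ℝ) * z + t := by push_cast; ring
    rw [he, ih]
    push_cast; ring

lemma extreme_transfer {n : ℕ} {z : ℝ} {x : Fin (n + 1) → ℝ} {i : Fin (n + 1)}
    (hi : x i = 0 ∨ x i = z)
    (h : ∃ j, ∀ k, k ≠ j → x (i.succAbove k) = 0 ∨ x (i.succAbove k) = z) :
    ∃ j, ∀ k, k ≠ j → x k = 0 ∨ x k = z := by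
  obtain ⟨j, hj⟩ := h
  refine ⟨i.succAbove j, fun k hk => ?_⟩
  by_cases hki : k = i
  · subst hki; exact hi
  · obtain ⟨k', rfl⟩ := Fin.exists_succAbove_eq hki
    exact hj k' (fun e => hk (by rw [e]))

lemma main_ind {z : ℝ} (hz : 0 < z) :
    ∀ n : ℕ, 0 < n → ∀ x : Fin n → ℝ, (∀ i, 0 ≤ x i) → (∀ i, x i ≤ z) →
      ∑ i, (x i) ^ 3 ≤ Bfun z (∑ i, x i) ∧
      (∑ i, (x i) ^ 3 = Bfun z (∑ i, x i) → ∃ j, ∀ i, i ≠ j → x i = 0 ∨ x i = z) := by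
  intro n
  induction n using Nat.strong_induction_on with
  | _ n IH =>
  obtain _ | _ | n := n
  · intro h; exact absurd h (lt_irrefl 0)
  · -- n = 1
    intro _ x hx0 hxz
    have hs : ∑ i, x i = x 0 := by simp
    have hc : ∑ i, (x i) ^ 3 = (x 0) ^ 3 := by simp
    rw [hs, hc, B_small hz (hx0 0) (hxz 0)]
    exact ⟨le_refl _, fun _ => ⟨0, fun i hi => absurd (Fin.fin_one_eq_zero i) hi⟩⟩
  · -- n + 2
    intro _ x hx0 hxz
    by_cases h0 : ∃ i, x i = 0
    · obtain ⟨i, hi⟩ := h0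
      set y : Fin (n + 1) → ℝ := fun k => x (i.succAbove k) with hy
      have hsum : ∑ k, x k = ∑ k, y k := by
        rw [Fin.sum_univ_succAbove x i, hi, zero_add]
      have hcube : ∑ k, (x k) ^ 3 = ∑ k, (y k) ^ 3 := by
        rw [Fin.sum_univ_succAbove (fun k => (x k) ^ 3) i, hi]
        norm_num
        rfl
      have hIH := IH (n + 1) (by omega) (by omega) y (fun k => hx0 _) (fun k => hxz _)
      rw [hsum, hcube]
      exact ⟨hIH.1, fun he => extreme_transfer (Or.inl hi) (hIH.2 he)⟩
    · by_cases hzc : ∃ i, x i = z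
      · obtain ⟨i, hi⟩ := hzc
        set y : Fin (n + 1) → ℝ := fun k => x (i.succAbove k) with hy
        have hsum : ∑ k, x k = z + ∑ k, y k := by
          rw [Fin.sum_univ_succAbove x i, hi]
        have hcube : ∑ k, (x k) ^ 3 = z ^ 3 + ∑ k, (y k) ^ 3 := by
          rw [Fin.sum_univ_succAbove (fun k => (x k) ^ 3) i, hi]
        have hynn : 0 ≤ ∑ k, y k := Finset.sum_nonneg fun k _ => hx0 _
        have hzs : z ≤ ∑ k, x k := by rw [hsum]; linarith
        have hB : Bfun z (∑ k, x k) = z ^ 3 + Bfun z (∑ k, y k) := by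
          rw [B_split hz hzs, hsum]; ring_nf
        have hIH := IH (n + 1) (by omega) (by omega) y (fun k => hx0 _) (fun k => hxz _)
        rw [hcube, hB]
        constructor
        · linarith [hIH.1]
        · intro he
          exact extreme_transfer (Or.inr hi) (hIH.2 (by linarith))
      · -- all x i ∈ (0, z)
        push_neg at h0 hzc
        have hpos : ∀ i, 0 < x i := fun i => lt_of_le_of_ne (hx0 i) (Ne.symm (h0 i))
        have hlt : ∀ i, x i < z := fun i => lt_of_le_of_ne (hxz i) (hzc i)
        set tail : Fin n → ℝ := fun k => x k.succ.succ with htail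
        have hone : x (Fin.succ (0 : Fin (n+1))) = x 1 := rfl
        have hsum : ∑ k, x k = x 0 + x 1 + ∑ k, tail k := by
          rw [Fin.sum_univ_succ x, Fin.sum_univ_succ (fun k : Fin (n+1) => x k.succ), hone]
          ring
        have hcube : ∑ k, (x k) ^ 3 = (x 0) ^ 3 + (x 1) ^ 3 + ∑ k, (tail k) ^ 3 := by
          rw [Fin.sum_univ_succ (fun k => (x k) ^ 3),
            Fin.sum_univ_succ (fun k : Fin (n+1) => (x k.succ) ^ 3)]
          rw [show (x (Fin.succ (0 : Fin (n+1)))) ^ 3 = (x 1) ^ 3 from rfl]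
          ring
        have htnn : 0 ≤ ∑ k, tail k := Finset.sum_nonneg fun k _ => hx0 _
        by_cases hc : x 0 + x 1 ≤ z
        · set y : Fin (n + 1) → ℝ := Fin.cons (x 0 + x 1) tail with hy
          have hysum : ∑ k, y k = x 0 + x 1 + ∑ k, tail k := Fin.sum_cons _ _
          have hycube : ∑ k, (y k) ^ 3 = (x 0 + x 1) ^ 3 + ∑ k, (tail k) ^ 3 := by
            rw [← Fin.sum_cons (M := ℝ) ((x 0 + x 1) ^ 3) (fun k => (tail k) ^ 3)]
            apply Finset.sum_congr rfl
            intro k _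
            refine Fin.cases ?_ (fun k' => ?_) k <;> simp [hy]
          have hy0 : ∀ k, 0 ≤ y k := by
            intro k
            refine Fin.cases ?_ (fun k' => ?_) k
            · simp only [hy, Fin.cons_zero]; linarith [hpos 0, hpos 1]
            · simp only [hy, Fin.cons_succ, htail]; exact hx0 _
          have hyz : ∀ k, y k ≤ z := by
            intro k
            refine Fin.cases ?_ (fun k' => ?_) k
            · simpa only [hy, Fin.cons_zero] using hc
            · simp only [hy, Fin.cons_succ, htail]; exact hxz _
          have hIH := IH (n + 1) (by omega) (by omega) y hy0 hyz
          have hstrict : (x 0) ^ 3 + (x 1) ^ 3 < (x 0 + x 1) ^ 3 := by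
            nlinarith [mul_pos (hpos 0) (hpos 1),
              mul_pos (mul_pos (hpos 0) (hpos 1)) (by linarith [hpos 0, hpos 1] : (0:ℝ) < x 0 + x 1)]
          have hlt2 : ∑ k, (x k) ^ 3 < Bfun z (∑ k, x k) := by
            rw [hcube, hsum, ← hysum]
            calc (x 0) ^ 3 + (x 1) ^ 3 + ∑ k, (tail k) ^ 3
                < (x 0 + x 1) ^ 3 + ∑ k, (tail k) ^ 3 := by linarith
            _ = ∑ k, (y k) ^ 3 := hycube.symm
            _ ≤ Bfun z (∑ k, y k) := hIH.1
          exact ⟨hlt2.le, fun he => absurd he (ne_of_lt hlt2)⟩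
        · push_neg at hc
          set y : Fin (n + 1) → ℝ := Fin.cons (x 0 + x 1 - z) tail with hy
          have hysum : ∑ k, y k = x 0 + x 1 - z + ∑ k, tail k := Fin.sum_cons _ _
          have hycube : ∑ k, (y k) ^ 3 = (x 0 + x 1 - z) ^ 3 + ∑ k, (tail k) ^ 3 := by
            rw [← Fin.sum_cons (M := ℝ) ((x 0 + x 1 - z) ^ 3) (fun k => (tail k) ^ 3)]
            apply Finset.sum_congr rfl
            intro k _
            refine Fin.cases ?_ (fun k' => ?_) k <;> simp [hy]
          have hy0 : ∀ k, 0 ≤ y k := by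
            intro k
            refine Fin.cases ?_ (fun k' => ?_) k
            · simp only [hy, Fin.cons_zero]; linarith
            · simp only [hy, Fin.cons_succ, htail]; exact hx0 _
          have hyz : ∀ k, y k ≤ z := by
            intro k
            refine Fin.cases ?_ (fun k' => ?_) k
            · simp only [hy, Fin.cons_zero]; linarith [hxz 0, hxz 1]
            · simp only [hy, Fin.cons_succ, htail]; exact hxz _
          have hIH := IH (n + 1) (by omega) (by omega) y hy0 hyz
          have hstrict : (x 0) ^ 3 + (x 1) ^ 3 < (x 0 + x 1 - z) ^ 3 + z ^ 3 := by
            nlinarith [mul_pos (mul_pos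
              (by linarith [hpos 0, hpos 1] : (0:ℝ) < x 0 + x 1)
              (sub_pos.2 (hlt 0))) (sub_pos.2 (hlt 1))]
          have hzs : z ≤ ∑ k, x k := by rw [hsum]; linarith
          have hB : Bfun z (∑ k, x k) = z ^ 3 + Bfun z (∑ k, y k) := by
            rw [B_split hz hzs, hsum, hysum]; ring_nf
          have hlt2 : ∑ k, (x k) ^ 3 < Bfun z (∑ k, x k) := by
            rw [hcube, hB]
            calc (x 0) ^ 3 + (x 1) ^ 3 + ∑ k, (tail k) ^ 3
                < (x 0 + x 1 - z) ^ 3 + z ^ 3 + ∑ k, (tail k) ^ 3 := by linarith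
            _ = z ^ 3 + ∑ k, (y k) ^ 3 := by rw [hycube]; ring
            _ ≤ z ^ 3 + Bfun z (∑ k, y k) := by linarith [hIH.1]
          exact ⟨hlt2.le, fun he => absurd he (ne_of_lt hlt2)⟩

lemma extreme_val {z : ℝ} (hz : 0 < z) {n : ℕ} (x : Fin n → ℝ)
    (hx0 : ∀ i, 0 ≤ x i) (hxz : ∀ i, x i ≤ z)
    {j : Fin n} (h : ∀ i, i ≠ j → x i = 0 ∨ x i = z) :
    ∑ i, (x i) ^ 3 = Bfun z (∑ i, x i) := by
  classical
  set E := Finset.univ.erase j with hE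
  set A := E.filter (fun i => x i = z) with hA
  have hzeros : ∀ i ∈ E.filter (fun i => ¬ x i = z), x i = 0 := by
    intro i hi
    rw [hE, Finset.mem_filter, Finset.mem_erase] at hi
    rcases h i hi.1.1 with h' | h'
    · exact h'
    · exact absurd h' hi.2
  have hsumE : ∑ i ∈ E, x i = (A.card : ℝ) * z := by
    rw [← Finset.sum_filter_add_sum_filter_not E (fun i => x i = z) x,
      Finset.sum_congr rfl (fun i hi => (Finset.mem_filter.1 hi).2),
      Finset.sum_const, Finset.sum_eq_zero hzeros, add_zero, nsmul_eq_mul]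
  have hcubeE : ∑ i ∈ E, (x i) ^ 3 = (A.card : ℝ) * z ^ 3 := by
    rw [← Finset.sum_filter_add_sum_filter_not E (fun i => x i = z) (fun i => (x i) ^ 3),
      Finset.sum_congr rfl (fun i hi => by rw [(Finset.mem_filter.1 hi).2]),
      Finset.sum_const,
      Finset.sum_eq_zero (fun i hi => by rw [hzeros i hi]; ring), add_zero, nsmul_eq_mul]
  have hsplit : ∑ i, x i = (A.card : ℝ) * z + x j := by
    rw [← Finset.sum_erase_add Finset.univ x (Finset.mem_univ j), ← hE, hsumE]
  have hsplit3 : ∑ i, (x i) ^ 3 = (A.card : ℝ) * z ^ 3 + (x j) ^ 3 := by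
    rw [← Finset.sum_erase_add Finset.univ (fun i => (x i) ^ 3) (Finset.mem_univ j), ← hE, hcubeE]
  rw [hsplit, hsplit3, B_val hz A.card (hx0 j) (hxz j)]

/-- Bound on the sum of cubes of bounded non-negative reals summing to 1/2,
with characterization of equality. -/
theorem stmt_5 (z : ℝ) (hz0 : 0 < z) (hz1 : z ≤ 1) (n : ℕ) (hn : 0 < n)
    (x : Fin n → ℝ) (hx0 : ∀ i, 0 ≤ x i) (hxz : ∀ i, x i ≤ z)
    (hsum : ∑ i, x i = 1/2) :
    ∑ i, (x i) ^ 3 ≤ ((⌊z⁻¹ / 2⌋ : ℤ) : ℝ) * z ^ 3 + (1/2 - ((⌊z⁻¹ / 2⌋ : ℤ) : ℝ) * z) ^ 3 ∧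
    (∑ i, (x i) ^ 3 = ((⌊z⁻¹ / 2⌋ : ℤ) : ℝ) * z ^ 3 + (1/2 - ((⌊z⁻¹ / 2⌋ : ℤ) : ℝ) * z) ^ 3 ↔
      ∃ j : Fin n, ∀ i, i ≠ j → x i = 0 ∨ x i = z) := by
  have hBeq : Bfun z (∑ i, x i) =
      ((⌊z⁻¹ / 2⌋ : ℤ) : ℝ) * z ^ 3 + (1/2 - ((⌊z⁻¹ / 2⌋ : ℤ) : ℝ) * z) ^ 3 := by
    rw [hsum]
    unfold Bfun
    rw [show (1/2 : ℝ) / z = z⁻¹ / 2 by ring]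
  obtain ⟨hle, heq⟩ := main_ind hz0 n hn x hx0 hxz
  rw [← hBeq]
  refine ⟨hle, ⟨heq, fun ⟨j, hj⟩ => extreme_val hz0 x hx0 hxz hj⟩⟩
end

section
/- Let n be a positive integer and let x₁,…,xₙ be non-negative real numbers with x₁+⋯+xₙ = 1/2. Let z ∈ (0,1] be a real number such that x₁³+⋯+xₙ³ = (⌊1/z⌋·z³ + (1 − ⌊1/z⌋·z)³)/8. Then x₁⁴+⋯+xₙ⁴ ≥ (⌊1/z⌋·z⁴ + (1 − ⌊1/z⌋·z)⁴)/16. -/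
/-- Key lemma: if nonnegative reals have sum `K*z + r` and cube-sum `K*z^3 + r^3`
with `0 ≤ r < z`, then their fourth-power sum is at least `K*z^4 + r^4`. -/
lemma linial_morgenstern_key (n : ℕ) (y : Fin n → ℝ) (hy : ∀ i, 0 ≤ y i)
    (K : ℕ) (z r : ℝ) (hr0 : 0 ≤ r) (hrz : r < z)
    (h1 : ∑ i, y i = K * z + r) (h3 : ∑ i, (y i) ^ 3 = K * z ^ 3 + r ^ 3) :
    ∑ i, (y i) ^ 4 ≥ K * z ^ 4 + r ^ 4 := by
  have hz : 0 < z := lt_of_le_of_lt hr0 hrz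
  have hrzle : r ≤ z := le_of_lt hrz
  set A : Finset (Fin n) := Finset.univ.filter (fun i => r < y i) with hA
  have hmem : ∀ i, i ∈ A ↔ r < y i := by
    intro i; simp [hA]
  rcases le_or_gt A.card K with hcard | hcard
  · -- Case: at most K atoms exceed r.  Certificate Q.
    set d : ℝ := 3 * z ^ 2 - r ^ 2 with hd
    have hdpos : 0 < d := by
      have h1 : (0:ℝ) < (z - r) * (z + r) := mul_pos (by linarith) (by linarith)
      have h2 : (0:ℝ) < z * z := mul_pos hz hz
      rw [hd]; nlinarith
    set Qz : ℝ := -(z ^ 3 * (z - r) ^ 2 * (z + 2 * r)) with hQzdef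
    have hQznp : Qz ≤ 0 := by
      have h : 0 ≤ z ^ 3 * (z - r) ^ 2 * (z + 2 * r) := by positivity
      rw [hQzdef]; linarith
    set f : Fin n → ℝ := fun i =>
      d * (y i) ^ 4 - (4 * z ^ 3 - r ^ 3) * (y i) ^ 3
        + z ^ 2 * r ^ 2 * (4 * z - 3 * r) * (y i) with hf
    -- f i ≥ Qz for all i
    have hfQz : ∀ i, Qz ≤ f i := by
      intro i
      have h0 := hy i
      have c1 : (0:ℝ) ≤ 2 * z ^ 3 - 2 * z * r ^ 2 + r ^ 3 := by
        have h1 : (0:ℝ) ≤ 2 * z * ((z - r) * (z + r)) := by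
          apply mul_nonneg (by linarith)
          exact mul_nonneg (by linarith) (by linarith)
        nlinarith [pow_nonneg hr0 3]
      have hP : (0:ℝ) ≤ d * (y i) ^ 2 + (2 * z ^ 3 - 2 * z * r ^ 2 + r ^ 3) * (y i)
          + z * (z - r) ^ 2 * (z + 2 * r) := by
        have t1 : (0:ℝ) ≤ d * (y i) ^ 2 := mul_nonneg hdpos.le (sq_nonneg _)
        have t2 : (0:ℝ) ≤ (2 * z ^ 3 - 2 * z * r ^ 2 + r ^ 3) * (y i) := mul_nonneg c1 h0
        have t3 : (0:ℝ) ≤ z * (z - r) ^ 2 * (z + 2 * r) := by positivity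
        linarith
      have key : f i - Qz = (y i - z) ^ 2 *
          (d * (y i) ^ 2 + (2 * z ^ 3 - 2 * z * r ^ 2 + r ^ 3) * (y i)
            + z * (z - r) ^ 2 * (z + 2 * r)) := by
        simp only [hf, hQzdef, hd]; ring
      have := mul_nonneg (sq_nonneg (y i - z)) hP
      linarith
    -- f i ≥ 0 for atoms ≤ r
    have hf0 : ∀ i, y i ≤ r → 0 ≤ f i := by
      intro i hyr
      have h0 := hy i
      rcases hr0.eq_or_lt with h | hrpos
      · -- r = 0 forces y i = 0
        have hy0 : y i = 0 := le_antisymm (by rw [← h] at hyr; exact hyr) h0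
        simp [hf, hy0]
      · have key : r * f i = y i * (r - y i) *
            ((r - y i) * (z ^ 2 * r * (4 * z - 3 * r))
              + y i * (r * (z - r) * (8 * z ^ 2 - z * r - r ^ 2))
              + d * r * (y i) * (r - y i)) := by
          simp only [hf, hd]; ring
        have hrhs : 0 ≤ y i * (r - y i) *
            ((r - y i) * (z ^ 2 * r * (4 * z - 3 * r))
              + y i * (r * (z - r) * (8 * z ^ 2 - z * r - r ^ 2))
              + d * r * (y i) * (r - y i)) := by
          have t1 : (0:ℝ) ≤ (r - y i) * (z ^ 2 * r * (4 * z - 3 * r)) := by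
            have h4 : (0:ℝ) ≤ 4 * z - 3 * r := by linarith
            have h5 : (0:ℝ) ≤ z ^ 2 * r * (4 * z - 3 * r) := by positivity
            exact mul_nonneg (by linarith) h5
          have t2 : (0:ℝ) ≤ y i * (r * (z - r) * (8 * z ^ 2 - z * r - r ^ 2)) := by
            have h8 : (0:ℝ) ≤ 8 * z ^ 2 - z * r - r ^ 2 := by
              have hzr : z * r ≤ z * z := mul_le_mul_of_nonneg_left hrzle hz.le
              have hrr : r * r ≤ z * z := mul_le_mul hrzle hrzle hr0 hz.le
              nlinarith
            have : (0:ℝ) ≤ r * (z - r) * (8 * z ^ 2 - z * r - r ^ 2) :=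
              mul_nonneg (mul_nonneg hr0 (by linarith)) h8
            exact mul_nonneg h0 this
          have t3 : (0:ℝ) ≤ d * r * (y i) * (r - y i) := by
            have : (0:ℝ) ≤ d * r * y i := by positivity
            exact mul_nonneg this (by linarith)
          have := mul_nonneg (mul_nonneg h0 (by linarith : (0:ℝ) ≤ r - y i))
            (by linarith : (0:ℝ) ≤ (r - y i) * (z ^ 2 * r * (4 * z - 3 * r))
              + y i * (r * (z - r) * (8 * z ^ 2 - z * r - r ^ 2))
              + d * r * (y i) * (r - y i))
          linarith
        have h2 : r * 0 ≤ r * f i := by rw [mul_zero, key]; exact hrhs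
        exact (mul_le_mul_iff_right₀ hrpos).mp h2
    -- Sum bounds
    have hAsub : ∑ i ∈ A, f i ≤ ∑ i, f i := by
      apply Finset.sum_le_sum_of_subset_of_nonneg (Finset.subset_univ A)
      intro i _ hiA
      exact hf0 i (le_of_not_gt (by simpa [hmem] using hiA))
    have hAlow : (A.card : ℝ) * Qz ≤ ∑ i ∈ A, f i := by
      have := Finset.card_nsmul_le_sum A f Qz (fun i _ => hfQz i)
      simpa [nsmul_eq_mul] using this
    have hKA : (K : ℝ) * Qz ≤ (A.card : ℝ) * Qz := by
      apply mul_le_mul_of_nonpos_right _ hQznp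
      exact_mod_cast hcard
    have hsumf : ∑ i, f i = d * (∑ i, (y i) ^ 4)
        - (4 * z ^ 3 - r ^ 3) * (K * z ^ 3 + r ^ 3)
        + z ^ 2 * r ^ 2 * (4 * z - 3 * r) * (K * z + r) := by
      simp only [hf, Finset.sum_add_distrib, Finset.sum_sub_distrib, ← Finset.mul_sum,
        h1, h3]
    have hfinal : d * (K * z ^ 4 + r ^ 4) ≤ d * (∑ i, (y i) ^ 4) := by
      have identity : d * ((K:ℝ) * z ^ 4 + r ^ 4) = (K:ℝ) * Qz
          + (4 * z ^ 3 - r ^ 3) * (K * z ^ 3 + r ^ 3)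
          - z ^ 2 * r ^ 2 * (4 * z - 3 * r) * (K * z + r) := by
        simp only [hQzdef, hd]; ring
      linarith
    exact le_of_mul_le_mul_left hfinal hdpos
  · -- Case: at least K+1 atoms exceed r.  Certificate R.
    set e : ℝ := 2 * z + r with he
    have hepos : 0 < e := by positivity
    set Rr : ℝ := r * z ^ 3 * (z + 2 * r) with hRrdef
    have hRrnn : 0 ≤ Rr := by positivity
    set g : Fin n → ℝ := fun i =>
      e * (y i) ^ 4 - (3 * z ^ 2 + 2 * z * r + r ^ 2) * (y i) ^ 3
        + z ^ 2 * (z ^ 2 + 2 * z * r + 3 * r ^ 2) * (y i) with hg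
    -- g i ≥ Rr for atoms > r
    have hgRr : ∀ i, r ≤ y i → Rr ≤ g i := by
      intro i hyr
      have h0 := hy i
      have key : g i - Rr = (y i - r) * (y i - z) ^ 2 * (e * (y i) + z * (z + 2 * r)) := by
        simp only [hg, hRrdef, he]; ring
      have hrhs : 0 ≤ (y i - r) * (y i - z) ^ 2 * (e * (y i) + z * (z + 2 * r)) := by
        have t1 : (0:ℝ) ≤ e * (y i) + z * (z + 2 * r) := by positivity
        exact mul_nonneg (mul_nonneg (by linarith) (sq_nonneg _)) t1
      linarith
    -- g i ≥ 0 for atoms ≤ r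
    have hg0 : ∀ i, y i ≤ r → 0 ≤ g i := by
      intro i hyr
      have h0 := hy i
      have hG : (0:ℝ) ≤ (3 * z ^ 2 + 2 * z * r + r ^ 2) * (y i + r)
          - e * ((y i) ^ 2 + (y i) * r + r ^ 2) := by
        have t1 : (0:ℝ) ≤ (y i + r) * (3 * z ^ 2 - z * r - r ^ 2 / 2) := by
          apply mul_nonneg (by linarith)
          have hzr : z * r ≤ z * z := mul_le_mul_of_nonneg_left hrzle hz.le
          have hrr : r * r ≤ z * z := mul_le_mul hrzle hrzle hr0 hz.le
          nlinarith
        have t2 : (0:ℝ) ≤ e * ((r - y i) * (y i + r / 2)) := by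
          apply mul_nonneg hepos.le
          exact mul_nonneg (by linarith) (by linarith)
        calc (0:ℝ) ≤ (y i + r) * (3 * z ^ 2 - z * r - r ^ 2 / 2)
              + e * ((r - y i) * (y i + r / 2)) := add_nonneg t1 t2
          _ = (3 * z ^ 2 + 2 * z * r + r ^ 2) * (y i + r)
              - e * ((y i) ^ 2 + (y i) * r + r ^ 2) := by simp only [he]; ring
      have key : g i = y i * (z ^ 3 * (z + 2 * r))
          + y i * (r - y i) * ((3 * z ^ 2 + 2 * z * r + r ^ 2) * (y i + r)
            - e * ((y i) ^ 2 + (y i) * r + r ^ 2)) := by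
        simp only [hg, he]; ring
      have t1 : (0:ℝ) ≤ y i * (z ^ 3 * (z + 2 * r)) := by positivity
      have t2 : (0:ℝ) ≤ y i * (r - y i) *
          ((3 * z ^ 2 + 2 * z * r + r ^ 2) * (y i + r)
            - e * ((y i) ^ 2 + (y i) * r + r ^ 2)) :=
        mul_nonneg (mul_nonneg h0 (by linarith)) hG
      linarith
    -- Sum bounds
    have hAsub : ∑ i ∈ A, g i ≤ ∑ i, g i := by
      apply Finset.sum_le_sum_of_subset_of_nonneg (Finset.subset_univ A)
      intro i _ hiA
      exact hg0 i (le_of_not_gt (by simpa [hmem] using hiA))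
    have hAlow : (A.card : ℝ) * Rr ≤ ∑ i ∈ A, g i := by
      have := Finset.card_nsmul_le_sum A g Rr
        (fun i hi => hgRr i (le_of_lt ((hmem i).mp hi)))
      simpa [nsmul_eq_mul] using this
    have hKA : ((K : ℝ) + 1) * Rr ≤ (A.card : ℝ) * Rr := by
      apply mul_le_mul_of_nonneg_right _ hRrnn
      have : (K + 1 : ℕ) ≤ A.card := hcard
      exact_mod_cast this
    have hsumg : ∑ i, g i = e * (∑ i, (y i) ^ 4)
        - (3 * z ^ 2 + 2 * z * r + r ^ 2) * (K * z ^ 3 + r ^ 3)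
        + z ^ 2 * (z ^ 2 + 2 * z * r + 3 * r ^ 2) * (K * z + r) := by
      simp only [hg, Finset.sum_add_distrib, Finset.sum_sub_distrib, ← Finset.mul_sum,
        h1, h3]
    have hfinal : e * (K * z ^ 4 + r ^ 4) ≤ e * (∑ i, (y i) ^ 4) := by
      have identity : e * ((K:ℝ) * z ^ 4 + r ^ 4) = ((K:ℝ) + 1) * Rr
          + (3 * z ^ 2 + 2 * z * r + r ^ 2) * (K * z ^ 3 + r ^ 3)
          - z ^ 2 * (z ^ 2 + 2 * z * r + 3 * r ^ 2) * (K * z + r) := by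
        simp only [hRrdef, he]; ring
      linarith
    exact le_of_mul_le_mul_left hfinal hepos

/-- Lemma of Linial and Morgenstern: x₁⁴+⋯+xₙ⁴ ≥ g(x₁³+⋯+xₙ³) for non-negative
reals summing to 1/2. -/
theorem stmt_6 (n : ℕ) (hn : 0 < n) (x : Fin n → ℝ)
    (hx0 : ∀ i, 0 ≤ x i) (hsum : ∑ i, x i = 1/2)
    (z : ℝ) (hz0 : 0 < z) (hz1 : z ≤ 1)
    (h3 : ∑ i, (x i) ^ 3
        = (((⌊1/z⌋ : ℤ) : ℝ) * z ^ 3 + (1 - ((⌊1/z⌋ : ℤ) : ℝ) * z) ^ 3) / 8) :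
    ∑ i, (x i) ^ 4
      ≥ (((⌊1/z⌋ : ℤ) : ℝ) * z ^ 4 + (1 - ((⌊1/z⌋ : ℤ) : ℝ) * z) ^ 4) / 16 := by
  have h1z : (1:ℝ) ≤ 1 / z := by
    rw [le_div_iff₀ hz0]; linarith
  have hKpos : (1:ℤ) ≤ ⌊(1:ℝ)/z⌋ := by
    exact_mod_cast Int.le_floor.mpr (by exact_mod_cast h1z)
  set K : ℕ := (⌊(1:ℝ)/z⌋).toNat with hK
  have hKcast : ((K : ℤ) : ℝ) = ((⌊1/z⌋ : ℤ) : ℝ) := by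
    rw [hK]; norm_cast; exact Int.toNat_of_nonneg (by linarith)
  have hKR : (K : ℝ) = ((⌊1/z⌋ : ℤ) : ℝ) := by exact_mod_cast hKcast
  set r : ℝ := 1 - ((⌊1/z⌋ : ℤ) : ℝ) * z with hr
  have hfloor_le : ((⌊1/z⌋ : ℤ) : ℝ) ≤ 1 / z := Int.floor_le _
  have hlt_floor : 1 / z < ((⌊1/z⌋ : ℤ) : ℝ) + 1 := Int.lt_floor_add_one _
  have hzz : (1/z) * z = 1 := by field_simp
  have hr0 : 0 ≤ r := by
    have h := mul_le_mul_of_nonneg_right hfloor_le hz0.le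
    rw [hzz] at h
    rw [hr]; linarith
  have hrz : r < z := by
    have h := mul_lt_mul_of_pos_right hlt_floor hz0
    rw [hzz] at h
    have hexp : (((⌊1/z⌋ : ℤ) : ℝ) + 1) * z = ((⌊1/z⌋ : ℤ) : ℝ) * z + z := by ring
    rw [hexp] at h
    rw [hr]; linarith
  set y : Fin n → ℝ := fun i => 2 * x i with hy
  have hynn : ∀ i, 0 ≤ y i := fun i => by
    simp only [hy]; linarith [hx0 i]
  have hy1 : ∑ i, y i = K * z + r := by
    simp only [hy, ← Finset.mul_sum, hsum, hKR, hr]; ring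
  have hy3 : ∑ i, (y i) ^ 3 = K * z ^ 3 + r ^ 3 := by
    have : ∑ i, (y i) ^ 3 = 8 * ∑ i, (x i) ^ 3 := by
      rw [Finset.mul_sum]
      apply Finset.sum_congr rfl
      intro i _
      simp only [hy]; ring
    rw [this, h3, hKR]; ring
  have hmain := linial_morgenstern_key n y hynn K z r hr0 hrz hy1 hy3
  have hy4 : ∑ i, (y i) ^ 4 = 16 * ∑ i, (x i) ^ 4 := by
    rw [Finset.mul_sum]
    apply Finset.sum_congr rfl
    intro i _
    simp only [hy]; ring
  rw [hy4, hKR] at hmain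
  rw [ge_iff_le, div_le_iff₀ (by norm_num : (0:ℝ) < 16)]
  rw [hr] at hmain
  linarith
end

section
/- Fix real numbers s₃ ∈ [0,1/8] and ρ ∈ [0,1/2] and non-negative integers k and ℓ with k+ℓ ≥ 1. Call a triple of vectors r ∈ ℝᵏ, a ∈ ℝˡ, b ∈ ℝˡ feasible if 0 ≤ rᵢ ≤ ρ for all i ∈ [k], aᵢ ≥ 0 for all i ∈ [ℓ], ρ + Σᵢ rᵢ + 2Σᵢ aᵢ = 1/2, and ρ³ + Σᵢ rᵢ³ + 2Σᵢ (aᵢ³ − 3aᵢbᵢ²) = s₃; and let F(r,a,b) = ρ⁴ + Σᵢ rᵢ⁴ + 2Σᵢ (aᵢ⁴ − 6aᵢ²bᵢ² + bᵢ⁴). Suppose (r,a,b) is feasible and F(r,a,b) ≤ F(r',a',b') for every feasible triple (r',a',b'). Then at least one of the following holds: (1) there exist positive reals r' and r'' such that every rᵢ ∈ {0, r', r'', ρ} and every pair (aᵢ,bᵢ) ∈ {(0,0), (r',0), (r'',0)}; or (2) there exist reals a' and b' with b' ≠ 0 such that every rᵢ ∈ {0, ρ} and every pair (aᵢ,bᵢ)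 ∈ {(0,0), (a',b'), (a',−b')}. -/
/-- Feasibility for the optimization problem SPECTRUM. -/
def SpectrumFeasible (s₃ ρ : ℝ) {k l : ℕ}
    (r : Fin k → ℝ) (a b : Fin l → ℝ) : Prop :=
  (∀ i, 0 ≤ r i ∧ r i ≤ ρ) ∧ (∀ i, 0 ≤ a i) ∧
  (ρ + ∑ i, r i + 2 * ∑ i, a i = 1/2) ∧
  (ρ ^ 3 + ∑ i, (r i) ^ 3 + 2 * ∑ i, ((a i) ^ 3 - 3 * a i * (b i) ^ 2) = s₃)

/-- Objective function of the optimization problem SPECTRUM. -/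
def SpectrumObj (ρ : ℝ) {k l : ℕ} (r : Fin k → ℝ) (a b : Fin l → ℝ) : ℝ :=
  ρ ^ 4 + ∑ i, (r i) ^ 4 + 2 * ∑ i, ((a i) ^ 4 - 6 * (a i) ^ 2 * (b i) ^ 2 + (b i) ^ 4)


open Filter Topology

section SpectrumProofs



lemma key_right (Q D : ℝ → ℝ) (hQ : ContinuousAt Q 0) (hD : ContinuousAt D 0)
    (hD0 : 0 < D 0) (h : ∀ᶠ t in 𝓝[>] (0:ℝ), 0 ≤ t * Q t / D t) : 0 ≤ Q 0 := by
  by_contra hneg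
  push_neg at hneg
  have hg : ContinuousAt (fun t => Q t / D t) 0 := hQ.div hD hD0.ne'
  have hlt : Q 0 / D 0 < 0 := div_neg_of_neg_of_pos hneg hD0
  have h1 : ∀ᶠ t in 𝓝 (0:ℝ), Q t / D t < 0 := hg.eventually_lt_const hlt
  have h2 : ∀ᶠ t in 𝓝[>] (0:ℝ), Q t / D t < 0 := h1.filter_mono nhdsWithin_le_nhds
  have h3 : ∀ᶠ t in 𝓝[>] (0:ℝ), (0:ℝ) < t := self_mem_nhdsWithin
  obtain ⟨t, ht1, ht2⟩ := (h.and (h2.and h3)).exists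
  have : t * Q t / D t < 0 := by
    rw [mul_div_assoc]
    exact mul_neg_of_pos_of_neg ht2.2 ht2.1
  linarith
lemma key_left (Q D : ℝ → ℝ) (hQ : ContinuousAt Q 0) (hD : ContinuousAt D 0)
    (hD0 : 0 < D 0) (h : ∀ᶠ t in 𝓝[<] (0:ℝ), 0 ≤ t * Q t / D t) : Q 0 ≤ 0 := by
  by_contra hneg
  push_neg at hneg
  have hg : ContinuousAt (fun t => Q t / D t) 0 := hQ.div hD hD0.ne'
  have hlt : 0 < Q 0 / D 0 := div_pos hneg hD0
  have h1 : ∀ᶠ t in 𝓝 (0:ℝ), 0 < Q t / D t := hg.eventually_const_lt hlt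
  have h2 : ∀ᶠ t in 𝓝[<] (0:ℝ), 0 < Q t / D t := h1.filter_mono nhdsWithin_le_nhds
  have h3 : ∀ᶠ t in 𝓝[<] (0:ℝ), t < (0:ℝ) := self_mem_nhdsWithin
  obtain ⟨t, ht1, ht2⟩ := (h.and (h2.and h3)).exists
  have : t * Q t / D t < 0 := by
    rw [mul_div_assoc]
    exact mul_neg_of_neg_of_pos ht2.2 ht2.1
  linarith
lemma key_zero (Q D : ℝ → ℝ) (hQ : ContinuousAt Q 0) (hD : ContinuousAt D 0)
    (hD0 : 0 < D 0) (h : ∀ᶠ t in 𝓝 (0:ℝ), 0 ≤ t * Q t / D t) : Q 0 = 0 :=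
  le_antisymm (key_left Q D hQ hD hD0 (h.filter_mono nhdsWithin_le_nhds))
    (key_right Q D hQ hD hD0 (h.filter_mono nhdsWithin_le_nhds))

lemma sum_pair₁ {n : ℕ} (f g : Fin n → ℝ) (ψ : ℝ → ℝ → ℝ) (i : Fin n) (x y : ℝ) :
    ∑ j, ψ (Function.update f i x j) (Function.update g i y j)
      = (∑ j, ψ (f j) (g j)) - ψ (f i) (g i) + ψ x y := by
  rw [← Finset.sum_erase_add _ _ (Finset.mem_univ i),
      ← Finset.sum_erase_add _ (fun j => ψ (f j) (g j)) (Finset.mem_univ i)]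
  have : ∀ j ∈ Finset.univ.erase i,
      ψ (Function.update f i x j) (Function.update g i y j) = ψ (f j) (g j) := by
    intro j hj
    rw [Function.update_of_ne (Finset.ne_of_mem_erase hj),
        Function.update_of_ne (Finset.ne_of_mem_erase hj)]
  rw [Finset.sum_congr rfl this, Function.update_self, Function.update_self]
  ring

lemma sum_pair₂ {n : ℕ} (f g : Fin n → ℝ) (ψ : ℝ → ℝ → ℝ) (i i' : Fin n) (hne : i ≠ i')
    (x y x' y' : ℝ) :
    ∑ j, ψ (Function.update (Function.update f i x) i' x' j)
           (Function.update (Function.update g i y) i' y' j)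
      = (∑ j, ψ (f j) (g j)) - ψ (f i) (g i) - ψ (f i') (g i') + ψ x y + ψ x' y' := by
  rw [sum_pair₁ (Function.update f i x) (Function.update g i y) ψ i' x' y',
      sum_pair₁ f g ψ i x y, Function.update_of_ne (Ne.symm hne),
      Function.update_of_ne (Ne.symm hne)]
  ring

lemma sum_pair₃ {n : ℕ} (f g : Fin n → ℝ) (ψ : ℝ → ℝ → ℝ) (i₁ i₂ i₃ : Fin n)
    (h12 : i₁ ≠ i₂) (h13 : i₁ ≠ i₃) (h23 : i₂ ≠ i₃)
    (x₁ y₁ x₂ y₂ x₃ y₃ : ℝ) :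
    ∑ j, ψ (Function.update (Function.update (Function.update f i₁ x₁) i₂ x₂) i₃ x₃ j)
           (Function.update (Function.update (Function.update g i₁ y₁) i₂ y₂) i₃ y₃ j)
      = (∑ j, ψ (f j) (g j)) - ψ (f i₁) (g i₁) - ψ (f i₂) (g i₂) - ψ (f i₃) (g i₃)
        + ψ x₁ y₁ + ψ x₂ y₂ + ψ x₃ y₃ := by
  rw [sum_pair₁ _ _ ψ i₃ x₃ y₃, sum_pair₂ f g ψ i₁ i₂ h12]
  rw [Function.update_of_ne (Ne.symm h23), Function.update_of_ne (Ne.symm h13),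
      Function.update_of_ne (Ne.symm h23), Function.update_of_ne (Ne.symm h13)]
  ring

lemma moveC1 {s₃ ρ : ℝ} {k l : ℕ} {r : Fin k → ℝ} {a b : Fin l → ℝ}
    (hfeas : SpectrumFeasible s₃ ρ r a b)
    (hopt : ∀ (r' : Fin k → ℝ) (a' b' : Fin l → ℝ), SpectrumFeasible s₃ ρ r' a' b' →
      SpectrumObj ρ r a b ≤ SpectrumObj ρ r' a' b')
    (j : Fin l) (haj : a j = 0) : b j = 0 := by
  by_contra hbj
  obtain ⟨hbd, hap, hlin, hcub⟩ := hfeas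
  have hfeas' : SpectrumFeasible s₃ ρ r (Function.update a j (a j)) (Function.update b j 0) := by
    refine ⟨hbd, ?_, ?_, ?_⟩
    · intro j'
      rcases eq_or_ne j' j with h | h
      · subst h; rw [Function.update_self]; exact hap j'
      · rw [Function.update_of_ne h]; exact hap j'
    · have h1 : ∑ j', Function.update a j (a j) j' = ∑ j', a j' := by
        simpa using sum_pair₁ a a (fun s _ => s) j (a j) (0:ℝ)
      rw [h1]; exact hlin
    · have h1 : ∑ j', ((Function.update a j (a j) j')^3
          - 3 * Function.update a j (a j) j' * (Function.update b j 0 j')^2)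
          = ∑ j', ((a j')^3 - 3 * a j' * (b j')^2) := by
        have h' := sum_pair₁ a b (fun p q => p^3 - 3*p*q^2) j (a j) (0:ℝ)
        simp only [haj] at h' ⊢
        simpa using h'
      rw [h1]; exact hcub
  have hle := hopt _ _ _ hfeas'
  have hobj : SpectrumObj ρ r (Function.update a j (a j)) (Function.update b j 0)
      - SpectrumObj ρ r a b = -2*(b j)^4 := by
    unfold SpectrumObj
    have h1 : ∑ j', ((Function.update a j (a j) j')^4
        - 6*(Function.update a j (a j) j')^2*(Function.update b j 0 j')^2
        + (Function.update b j 0 j')^4)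
        = (∑ j', ((a j')^4 - 6*(a j')^2*(b j')^2 + (b j')^4)) - (b j)^4 := by
      have h' := sum_pair₁ a b (fun p q => p^4 - 6*p^2*q^2 + q^4) j (a j) (0:ℝ)
      simp only [haj] at h' ⊢
      rw [h']
      ring
    rw [h1]
    ring
  have hb4 : 0 < (b j)^4 := by positivity
  linarith


set_option maxHeartbeats 1600000 in
lemma moveC6 {s₃ ρ : ℝ} {k l : ℕ} {r : Fin k → ℝ} {a b : Fin l → ℝ}
    (hfeas : SpectrumFeasible s₃ ρ r a b)
    (hopt : ∀ (r' : Fin k → ℝ) (a' b' : Fin l → ℝ), SpectrumFeasible s₃ ρ r' a' b' →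
      SpectrumObj ρ r a b ≤ SpectrumObj ρ r' a' b')
    (i : Fin k) (j : Fin l) (h0 : 0 < r i) (hiρ : r i < ρ) (ha : 0 < a j) (hb : b j ≠ 0) :
    False := by
  obtain ⟨hbd, hap, hlin, hcub⟩ := hfeas
  set x := r i with hxdef
  set A := a j with hAdef
  set u := (b j)^2 with hudef
  have hu : 0 < u := by positivity
  set U : ℝ → ℝ :=
    fun t => ((x - 2*t)^3 + 2*(A + t)^3 - x^3 - 2*A^3 + 6*A*u) / (6*(A + t)) with hUdef
  set Q : ℝ → ℝ := fun t =>
    (6912 : ℝ) * t^6 + (-432 : ℝ) * u^2 * t^2 + (20736 : ℝ) * A * t^5 + (-3456 : ℝ) * A * u * t^3 + (-1296 : ℝ) * A * u^2 * t + (20736 : ℝ) * A^2 * t^4 + (-7776 : ℝ) * A^2 * u * t^2 + (-864 : ℝ) * A^2 * u^2 + (3456 : ℝ) * A^3 * t^3 + (-6048 : ℝ) * A^3 * u * t + (-7344 : ℝ) * A^4 * t^2 + (-1728 : ℝ) * A^4 * u + (-4752 : ℝ) * A^5 * t + (-864 : ℝ) * A^6 + (-13824 : ℝ) * x * t^5 +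 (-41472 : ℝ) * x * A * t^4 + (1728 : ℝ) * x * A * u * t^2 + (-48384 : ℝ) * x * A^2 * t^3 + (1728 : ℝ) * x * A^2 * u * t + (-25920 : ℝ) * x * A^3 * t^2 + (-5184 : ℝ) * x * A^4 * t + (10368 : ℝ) * x^2 * t^4 + (27648 : ℝ) * x^2 * A * t^3 + (-864 : ℝ) * x^2 * A * u * t + (29376 : ℝ) * x^2 * A^2 * t^2 + (-864 : ℝ) * x^2 * A^2 * u + (14688 : ℝ) * x^2 * A^3 * t + (2592 : ℝ) * x^2 * A^4 + (-3456 : ℝ) * x^3 * t^3 + (-6912 : ℝ) * x^3 * A * t^2 + (-5184 : ℝ) * x^3 * A^2 * t + (-1728 : ℝ) * x^3 * A^3 + (432 : ℝ) * x^4 * t^2 + (432 : ℝ) * x^4 * A * t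
    with hQdef
  set D : ℝ → ℝ := fun t => 216*(A + t)^3 with hDdef
  have hQc : ContinuousAt Q 0 := by fun_prop
  have hDc : ContinuousAt D 0 := by fun_prop
  have hD0 : 0 < D 0 := by simp only [hDdef]; positivity
  have hUc : ContinuousAt U 0 := by
    simp only [hUdef]
    exact ContinuousAt.div (by fun_prop) (by fun_prop)
      (by rw [add_zero]; exact mul_ne_zero (by norm_num) ha.ne')
  have hU0 : U 0 = u := by
    simp only [hUdef]
    field_simp
    ring
  have e₁ : ∀ᶠ t in 𝓝 (0:ℝ), 0 < x - 2*t := by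
    have hc : ContinuousAt (fun t : ℝ => x - 2*t) 0 := by fun_prop
    have : (0:ℝ) < x - 2*0 := by simpa using h0
    exact hc.eventually_const_lt this
  have e₂ : ∀ᶠ t in 𝓝 (0:ℝ), x - 2*t < ρ := by
    have hc : ContinuousAt (fun t : ℝ => x - 2*t) 0 := by fun_prop
    have : x - 2*0 < ρ := by simpa using hiρ
    exact hc.eventually_lt_const this
  have e₃ : ∀ᶠ t in 𝓝 (0:ℝ), 0 < A + t := by
    have hc : ContinuousAt (fun t : ℝ => A + t) 0 := by fun_prop
    have : (0:ℝ) < A + 0 := by simpa using ha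
    exact hc.eventually_const_lt this
  have e₄ : ∀ᶠ t in 𝓝 (0:ℝ), 0 < U t := by
    have : (0:ℝ) < U 0 := by rw [hU0]; exact hu
    exact hUc.eventually_const_lt this
  have main : ∀ᶠ t in 𝓝 (0:ℝ), 0 ≤ t * Q t / D t := by
    filter_upwards [e₁, e₂, e₃, e₄] with t h₁ h₂ h₃ h₄
    have hsq : Real.sqrt (U t) ^ 2 = U t := Real.sq_sqrt h₄.le
    have hsq4 : Real.sqrt (U t) ^ 4 = (U t)^2 := by
      rw [show (4:ℕ) = 2*2 from rfl, pow_mul, hsq]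
    have h6 : (6:ℝ)*(A+t) ≠ 0 := by positivity
    have hfeas' : SpectrumFeasible s₃ ρ (Function.update r i (x - 2*t))
        (Function.update a j (A + t)) (Function.update b j (Real.sqrt (U t))) := by
      refine ⟨?_, ?_, ?_, ?_⟩
      · intro i'
        rcases eq_or_ne i' i with h | h
        · subst h; rw [Function.update_self]; exact ⟨h₁.le, h₂.le⟩
        · rw [Function.update_of_ne h]; exact hbd i'
      · intro j'
        rcases eq_or_ne j' j with h | h
        · subst h; rw [Function.update_self]; exact h₃.le
        · rw [Function.update_of_ne h]; exact hap j'
      · have hr : ∑ i', Function.update r i (x - 2*t) i' = (∑ i', r i') - x + (x - 2*t) := by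
          exact sum_pair₁ r r (fun s _ => s) i (x-2*t) (0:ℝ)
        have ha' : ∑ j', Function.update a j (A + t) j' = (∑ j', a j') - A + (A + t) := by
          simpa using sum_pair₁ a a (fun s _ => s) j (A+t) (0:ℝ)
        rw [hr, ha']
        linear_combination hlin
      · have hrc : ∑ i', (Function.update r i (x - 2*t) i')^3
            = (∑ i', (r i')^3) - x^3 + (x-2*t)^3 := by
          simpa using sum_pair₁ r r (fun s _ => s^3) i (x-2*t) (0:ℝ)
        have hac : ∑ j', ((Function.update a j (A + t) j')^3
              - 3 * Function.update a j (A + t) j' * (Function.update b j (Real.sqrt (U t)) j')^2)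
            = (∑ j', ((a j')^3 - 3 * a j' * (b j')^2)) - (A^3 - 3*A*u)
              + ((A+t)^3 - 3*(A+t)*(U t)) := by
          have h' := sum_pair₁ a b (fun p q => p^3 - 3*p*q^2) j (A+t) (Real.sqrt (U t))
          simpa [hsq, ← hudef, ← hAdef] using h'
        rw [hrc, hac]
        have hkey : (x-2*t)^3 - x^3 + 2*(((A+t)^3 - 3*(A+t)*(U t)) - (A^3 - 3*A*u)) = 0 := by
          simp only [hUdef]
          field_simp
          ring
        linear_combination hcub + hkey
    have hle := hopt _ _ _ hfeas'
    have hobj : SpectrumObj ρ (Function.update r i (x - 2*t))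
        (Function.update a j (A + t)) (Function.update b j (Real.sqrt (U t)))
        - SpectrumObj ρ r a b = t * Q t / D t := by
      unfold SpectrumObj
      have hr4 : ∑ i', (Function.update r i (x - 2*t) i')^4
          = (∑ i', (r i')^4) - x^4 + (x-2*t)^4 := by
        simpa using sum_pair₁ r r (fun s _ => s^4) i (x-2*t) (0:ℝ)
      have ha4 : ∑ j', ((Function.update a j (A + t) j')^4
            - 6*(Function.update a j (A + t) j')^2*(Function.update b j (Real.sqrt (U t)) j')^2
            + (Function.update b j (Real.sqrt (U t)) j')^4)
          = (∑ j', ((a j')^4 - 6*(a j')^2*(b j')^2 + (b j')^4))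
            - (A^4 - 6*A^2*u + u^2) + ((A+t)^4 - 6*(A+t)^2*(U t) + (U t)^2) := by
        have hb4 : (b j)^4 = u^2 := by rw [hudef]; ring
        have h' := sum_pair₁ a b (fun p q => p^4 - 6*p^2*q^2 + q^4) j (A+t) (Real.sqrt (U t))
        simpa [hsq, hsq4, hb4, ← hudef, ← hAdef] using h'
      rw [hr4, ha4]
      simp only [hUdef, hQdef, hDdef]
      field_simp
      ring
    linarith [hle, hobj]
  have hQ0 : Q 0 = 0 := key_zero Q D hQc hDc hD0 main
  have hQ0' : Q 0 = -864*A^2*((A^2+2*A*x+u)*((A-x)^2+u)) := by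
    simp only [hQdef]
    ring
  have hp1 : 0 < A^2 + 2*A*x + u := by nlinarith [mul_pos ha h0, sq_nonneg A]
  have hp2 : 0 < (A-x)^2 + u := by nlinarith [sq_nonneg (A-x)]
  nlinarith [hQ0, hQ0', mul_pos (mul_pos ha ha) (mul_pos hp1 hp2)]

set_option maxHeartbeats 1600000 in
lemma moveC3 {s₃ ρ : ℝ} {k l : ℕ} {r : Fin k → ℝ} {a b : Fin l → ℝ}
    (hfeas : SpectrumFeasible s₃ ρ r a b)
    (hopt : ∀ (r' : Fin k → ℝ) (a' b' : Fin l → ℝ), SpectrumFeasible s₃ ρ r' a' b' →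
      SpectrumObj ρ r a b ≤ SpectrumObj ρ r' a' b')
    (j₁ j₂ : Fin l) (hne : j₁ ≠ j₂) (hb1 : b j₁ = 0) (hb2 : b j₂ = 0)
    (h2pos : 0 < a j₂) (hlt : a j₂ < a j₁) : False := by
  obtain ⟨hbd, hap, hlin, hcub⟩ := hfeas
  set v1 := a j₁ with hv1def
  set v2 := a j₂ with hv2def
  have hv1 : 0 < v1 := lt_trans h2pos hlt
  set U : ℝ → ℝ := fun t => t*(v1+v2)*(v1-v2+t) / (v1+t) with hUdef
  set Q : ℝ → ℝ := fun t =>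
    (4 : ℝ) * t^6 + (-20 : ℝ) * v2 * t^5 + (26 : ℝ) * v2^2 * t^4 + (-12 : ℝ) * v2^3 * t^3 + (2 : ℝ) * v2^4 * t^2 + (8 : ℝ) * v1 * t^5 + (-68 : ℝ) * v1 * v2 * t^4 + (82 : ℝ) * v1 * v2^2 * t^3 + (-28 : ℝ) * v1 * v2^3 * t^2 + (2 : ℝ) * v1 * v2^4 * t + (-10 : ℝ) * v1^2 * t^4 + (-88 : ℝ) * v1^2 * v2 * t^3 + (100 : ℝ) * v1^2 * v2^2 * t^2 + (-24 : ℝ) * v1^2 * v2^3 * t + (-42 : ℝ) * v1^3 * t^3 + (-52 : ℝ) * v1^3 * v2 * t^2 + (56 : ℝ) * v1^3 * v2^2 * t + (-8 : ℝ) * v1^3 * v2^3 + (-46 : ℝ) * v1^4 * t^2 + (-12 : ℝ) * v1^4 * v2 * t + (12 : ℝ) * v1^4 * v2^2 + (-22 : ℝ) * v1^5 * t + (-4 : ℝ) * v1^6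
    with hQdef
  set D : ℝ → ℝ := fun t => (v1+t)^3 with hDdef
  have hQc : ContinuousAt Q 0 := by fun_prop
  have hDc : ContinuousAt D 0 := by fun_prop
  have hD0 : 0 < D 0 := by simp only [hDdef]; positivity
  have e₁ : ∀ᶠ t in 𝓝 (0:ℝ), 0 < v1 - v2 + t := by
    have hc : ContinuousAt (fun t : ℝ => v1 - v2 + t) 0 := by fun_prop
    have : (0:ℝ) < v1 - v2 + 0 := by simpa using sub_pos.mpr hlt
    exact hc.eventually_const_lt this
  have e₂ : ∀ᶠ t in 𝓝 (0:ℝ), 0 < v2 - t := by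
    have hc : ContinuousAt (fun t : ℝ => v2 - t) 0 := by fun_prop
    have : (0:ℝ) < v2 - 0 := by simpa using h2pos
    exact hc.eventually_const_lt this
  have e₃ : ∀ᶠ t in 𝓝 (0:ℝ), 0 < v1 + t := by
    have hc : ContinuousAt (fun t : ℝ => v1 + t) 0 := by fun_prop
    have : (0:ℝ) < v1 + 0 := by simpa using hv1
    exact hc.eventually_const_lt this
  have main : ∀ᶠ t in 𝓝[>] (0:ℝ), 0 ≤ t * Q t / D t := by
    have eall : ∀ᶠ t in 𝓝[>] (0:ℝ), (0 < v1 - v2 + t ∧ 0 < v2 - t ∧ 0 < v1 + t) ∧ 0 < t := by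
      refine Filter.Eventually.and ?_ self_mem_nhdsWithin
      exact ((e₁.and (e₂.and e₃)).filter_mono nhdsWithin_le_nhds)
    filter_upwards [eall] with t ht
    obtain ⟨⟨h₁, h₂, h₃⟩, ht0⟩ := ht
    have hUpos : 0 ≤ U t := by
      simp only [hUdef]
      positivity
    have hsq : Real.sqrt (U t) ^ 2 = U t := Real.sq_sqrt hUpos
    have hsq4 : Real.sqrt (U t) ^ 4 = (U t)^2 := by
      rw [show (4:ℕ) = 2*2 from rfl, pow_mul, hsq]
    have hfeas' : SpectrumFeasible s₃ ρ r
        (Function.update (Function.update a j₁ (v1 + t)) j₂ (v2 - t))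
        (Function.update (Function.update b j₁ (Real.sqrt (U t))) j₂ (b j₂)) := by
      refine ⟨hbd, ?_, ?_, ?_⟩
      · intro j'
        rcases eq_or_ne j' j₂ with h | h
        · subst h; rw [Function.update_self]; exact h₂.le
        · rw [Function.update_of_ne h]
          rcases eq_or_ne j' j₁ with h' | h'
          · subst h'; rw [Function.update_self]; positivity
          · rw [Function.update_of_ne h']; exact hap j'
      · have h1 : ∑ j', Function.update (Function.update a j₁ (v1 + t)) j₂ (v2 - t) j'
            = (∑ j', a j') - v1 - v2 + (v1 + t) + (v2 - t) := by
          simpa using sum_pair₂ a a (fun s _ => s) j₁ j₂ hne (v1+t) (0:ℝ) (v2-t) (0:ℝ)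
        rw [h1]
        linear_combination hlin
      · have h1 := sum_pair₂ a b (fun p q => p^3 - 3*p*q^2) j₁ j₂ hne
          (v1+t) (Real.sqrt (U t)) (v2-t) (b j₂)
        simp only [hb1, hb2, hsq, ← hv1def, ← hv2def] at h1 ⊢
        rw [h1]
        have hkey : ((v1+t)^3 - 3*(v1+t)*(U t)) + (v2-t)^3 - v1^3 - v2^3 = 0 := by
          simp only [hUdef]
          field_simp
          ring
        linear_combination hcub + 2*hkey
    have hle := hopt _ _ _ hfeas'
    have hobj : SpectrumObj ρ r
        (Function.update (Function.update a j₁ (v1 + t)) j₂ (v2 - t))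
        (Function.update (Function.update b j₁ (Real.sqrt (U t))) j₂ (b j₂))
        - SpectrumObj ρ r a b = t * Q t / D t := by
      unfold SpectrumObj
      have h1 := sum_pair₂ a b (fun p q => p^4 - 6*p^2*q^2 + q^4) j₁ j₂ hne
        (v1+t) (Real.sqrt (U t)) (v2-t) (b j₂)
      simp only [hb1, hb2, hsq, hsq4, ← hv1def, ← hv2def] at h1 ⊢
      rw [h1]
      simp only [hUdef, hQdef, hDdef]
      have h3 : v1 + t ≠ 0 := h₃.ne'
      field_simp
      ring
    linarith [hle, hobj]
  have hQ0 : 0 ≤ Q 0 := key_right Q D hQc hDc hD0 main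
  have hQ0' : Q 0 = -4*v1^3*((v1-v2)^2*(v1+2*v2)) := by
    simp only [hQdef]
    ring
  have hs : 0 < v1 - v2 := sub_pos.mpr hlt
  have hp : 0 < v1^3*((v1-v2)^2*(v1+2*v2)) :=
    mul_pos (pow_pos hv1 3) (mul_pos (pow_pos hs 2) (by linarith))
  nlinarith [hQ0, hQ0', hp]


set_option maxHeartbeats 1600000 in
lemma moveC7 {s₃ ρ : ℝ} {k l : ℕ} {r : Fin k → ℝ} {a b : Fin l → ℝ}
    (hfeas : SpectrumFeasible s₃ ρ r a b)
    (hopt : ∀ (r' : Fin k → ℝ) (a' b' : Fin l → ℝ), SpectrumFeasible s₃ ρ r' a' b' →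
      SpectrumObj ρ r a b ≤ SpectrumObj ρ r' a' b')
    (j₁ j₂ : Fin l) (hne : j₁ ≠ j₂) (ha1 : 0 < a j₁) (hb1 : b j₁ ≠ 0)
    (ha2 : 0 < a j₂) (hb2 : b j₂ = 0) : False := by
  obtain ⟨hbd, hap, hlin, hcub⟩ := hfeas
  set A := a j₁ with hAdef
  set v := a j₂ with hvdef
  set u := (b j₁)^2 with hudef
  have hu : 0 < u := by positivity
  set U : ℝ → ℝ :=
    fun t => (2*(A + t)^3 + 2*(v - t)^3 - 2*A^3 - 2*v^3 + 6*A*u) / (6*(A + t)) with hUdef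
  set Q : ℝ → ℝ := fun t =>
    (864 : ℝ) * t^6 + (-4320 : ℝ) * v * t^5 + (5616 : ℝ) * v^2 * t^4 + (-2592 : ℝ) * v^3 * t^3 + (432 : ℝ) * v^4 * t^2 + (-432 : ℝ) * u^2 * t^2 + (1728 : ℝ) * A * t^5 + (-14688 : ℝ) * A * v * t^4 + (17712 : ℝ) * A * v^2 * t^3 + (-6048 : ℝ) * A * v^3 * t^2 + (432 : ℝ) * A * v^4 * t + (-2592 : ℝ) * A * u * t^3 + (864 : ℝ) * A * u * v * t^2 + (-864 : ℝ) * A * u * v^2 * t + (-1296 : ℝ) * A * u^2 * t + (-2160 : ℝ) * A^2 * t^4 + (-19008 : ℝ) * A^2 * v * t^3 + (21600 : ℝ) * A^2 * v^2 * t^2 + (-5184 : ℝ) * A^2 * v^3 * t + (-6912 : ℝ) * A^2 * u * t^2 + (864 : ℝ) * A^2 * u * v * t + (-864 : ℝ) * A^2 * u * v^2 + (-864 : ℝ) * A^2 * u^2 + (-9072 : ℝ) * A^3 * t^3 + (-11232 : ℝ) * A^3 * v * t^2 + (12096 : ℝ) * A^3 * v^2 * t + (-1728 : ℝ) * A^3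 * v^3 + (-6048 : ℝ) * A^3 * u * t + (-9936 : ℝ) * A^4 * t^2 + (-2592 : ℝ) * A^4 * v * t + (2592 : ℝ) * A^4 * v^2 + (-1728 : ℝ) * A^4 * u + (-4752 : ℝ) * A^5 * t + (-864 : ℝ) * A^6
    with hQdef
  set D : ℝ → ℝ := fun t => 216*(A + t)^3 with hDdef
  have hQc : ContinuousAt Q 0 := by fun_prop
  have hDc : ContinuousAt D 0 := by fun_prop
  have hD0 : 0 < D 0 := by simp only [hDdef]; positivity
  have hUc : ContinuousAt U 0 := by
    simp only [hUdef]
    exact ContinuousAt.div (by fun_prop) (by fun_prop)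
      (by rw [add_zero]; exact mul_ne_zero (by norm_num) ha1.ne')
  have hU0 : U 0 = u := by
    simp only [hUdef]
    field_simp
    ring
  have e₁ : ∀ᶠ t in 𝓝 (0:ℝ), 0 < v - t := by
    have hc : ContinuousAt (fun t : ℝ => v - t) 0 := by fun_prop
    have : (0:ℝ) < v - 0 := by simpa using ha2
    exact hc.eventually_const_lt this
  have e₃ : ∀ᶠ t in 𝓝 (0:ℝ), 0 < A + t := by
    have hc : ContinuousAt (fun t : ℝ => A + t) 0 := by fun_prop
    have : (0:ℝ) < A + 0 := by simpa using ha1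
    exact hc.eventually_const_lt this
  have e₄ : ∀ᶠ t in 𝓝 (0:ℝ), 0 < U t := by
    have : (0:ℝ) < U 0 := by rw [hU0]; exact hu
    exact hUc.eventually_const_lt this
  have main : ∀ᶠ t in 𝓝 (0:ℝ), 0 ≤ t * Q t / D t := by
    filter_upwards [e₁, e₃, e₄] with t h₁ h₃ h₄
    have hsq : Real.sqrt (U t) ^ 2 = U t := Real.sq_sqrt h₄.le
    have hsq4 : Real.sqrt (U t) ^ 4 = (U t)^2 := by
      rw [show (4:ℕ) = 2*2 from rfl, pow_mul, hsq]
    have hfeas' : SpectrumFeasible s₃ ρ r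
        (Function.update (Function.update a j₁ (A + t)) j₂ (v - t))
        (Function.update (Function.update b j₁ (Real.sqrt (U t))) j₂ (b j₂)) := by
      refine ⟨hbd, ?_, ?_, ?_⟩
      · intro j'
        rcases eq_or_ne j' j₂ with h | h
        · subst h; rw [Function.update_self]; exact h₁.le
        · rw [Function.update_of_ne h]
          rcases eq_or_ne j' j₁ with h' | h'
          · subst h'; rw [Function.update_self]; positivity
          · rw [Function.update_of_ne h']; exact hap j'
      · have h1 : ∑ j', Function.update (Function.update a j₁ (A + t)) j₂ (v - t) j'
            = (∑ j', a j') - A - v + (A + t) + (v - t) := by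
          simpa using sum_pair₂ a a (fun s _ => s) j₁ j₂ hne (A+t) (0:ℝ) (v-t) (0:ℝ)
        rw [h1]
        linear_combination hlin
      · have h1 := sum_pair₂ a b (fun p q => p^3 - 3*p*q^2) j₁ j₂ hne
          (A+t) (Real.sqrt (U t)) (v-t) (b j₂)
        simp only [hb2, hsq, ← hAdef, ← hvdef, ← hudef] at h1 ⊢
        rw [h1]
        have hkey : ((A+t)^3 - 3*(A+t)*(U t)) + (v-t)^3 - (A^3 - 3*A*u) - v^3 = 0 := by
          simp only [hUdef]
          field_simp
          ring
        linear_combination hcub + 2*hkey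
    have hle := hopt _ _ _ hfeas'
    have hobj : SpectrumObj ρ r
        (Function.update (Function.update a j₁ (A + t)) j₂ (v - t))
        (Function.update (Function.update b j₁ (Real.sqrt (U t))) j₂ (b j₂))
        - SpectrumObj ρ r a b = t * Q t / D t := by
      unfold SpectrumObj
      have h1 := sum_pair₂ a b (fun p q => p^4 - 6*p^2*q^2 + q^4) j₁ j₂ hne
        (A+t) (Real.sqrt (U t)) (v-t) (b j₂)
      have hb4 : (b j₁)^4 = u^2 := by rw [hudef]; ring
      simp only [hb2, hsq, hsq4, hb4, ← hAdef, ← hvdef, ← hudef] at h1 ⊢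
      rw [h1]
      simp only [hUdef, hQdef, hDdef]
      have h6 : A + t ≠ 0 := h₃.ne'
      field_simp
      ring
    linarith [hle, hobj]
  have hQ0 : Q 0 = 0 := key_zero Q D hQc hDc hD0 main
  have hQ0' : Q 0 = -864*A^2*((A^2+2*A*v+u)*((A-v)^2+u)) := by
    simp only [hQdef]
    ring
  have hp1 : 0 < A^2 + 2*A*v + u := by nlinarith [mul_pos ha1 ha2, sq_nonneg A]
  have hp2 : 0 < (A-v)^2 + u := by nlinarith [sq_nonneg (A-v)]
  nlinarith [hQ0, hQ0', mul_pos (mul_pos ha1 ha1) (mul_pos hp1 hp2)]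

set_option maxHeartbeats 1600000 in
lemma moveC8 {s₃ ρ : ℝ} {k l : ℕ} {r : Fin k → ℝ} {a b : Fin l → ℝ}
    (hfeas : SpectrumFeasible s₃ ρ r a b)
    (hopt : ∀ (r' : Fin k → ℝ) (a' b' : Fin l → ℝ), SpectrumFeasible s₃ ρ r' a' b' →
      SpectrumObj ρ r a b ≤ SpectrumObj ρ r' a' b')
    (j₁ j₂ : Fin l) (hne : j₁ ≠ j₂) (ha1 : 0 < a j₁) (hb1 : b j₁ ≠ 0)
    (ha2 : 0 < a j₂) (hb2 : b j₂ ≠ 0) :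
    a j₁ = a j₂ ∧ (b j₁)^2 = (b j₂)^2 := by
  obtain ⟨hbd, hap, hlin, hcub⟩ := hfeas
  set A1 := a j₁ with hA1def
  set A2 := a j₂ with hA2def
  set u1 := (b j₁)^2 with hu1def
  set u2 := (b j₂)^2 with hu2def
  have hu1 : 0 < u1 := by positivity
  have hu2 : 0 < u2 := by positivity
  -- ### move 1 : trade u between the two pairs
  set Q1 : ℝ → ℝ :=
    fun s => 4*(A2*(u1-3*A1^2) - A1*(u2-3*A2^2)) + 2*(A1^2+A2^2)*s with hQ1def
  have hQ1c : ContinuousAt Q1 0 := by fun_prop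
  have e₁ : ∀ᶠ s in 𝓝 (0:ℝ), 0 < u1 + A2*s := by
    have hc : ContinuousAt (fun s : ℝ => u1 + A2*s) 0 := by fun_prop
    have : (0:ℝ) < u1 + A2*0 := by simpa using hu1
    exact hc.eventually_const_lt this
  have e₂ : ∀ᶠ s in 𝓝 (0:ℝ), 0 < u2 - A1*s := by
    have hc : ContinuousAt (fun s : ℝ => u2 - A1*s) 0 := by fun_prop
    have : (0:ℝ) < u2 - A1*0 := by simpa using hu2
    exact hc.eventually_const_lt this
  have main1 : ∀ᶠ s in 𝓝 (0:ℝ), 0 ≤ s * Q1 s / (fun _ => (1:ℝ)) s := by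
    filter_upwards [e₁, e₂] with s h₁ h₂
    have hsqa : Real.sqrt (u1 + A2*s) ^ 2 = u1 + A2*s := Real.sq_sqrt h₁.le
    have hsqa4 : Real.sqrt (u1 + A2*s) ^ 4 = (u1 + A2*s)^2 := by
      rw [show (4:ℕ) = 2*2 from rfl, pow_mul, hsqa]
    have hsqb : Real.sqrt (u2 - A1*s) ^ 2 = u2 - A1*s := Real.sq_sqrt h₂.le
    have hsqb4 : Real.sqrt (u2 - A1*s) ^ 4 = (u2 - A1*s)^2 := by
      rw [show (4:ℕ) = 2*2 from rfl, pow_mul, hsqb]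
    have hfeas' : SpectrumFeasible s₃ ρ r
        (Function.update (Function.update a j₁ A1) j₂ A2)
        (Function.update (Function.update b j₁ (Real.sqrt (u1 + A2*s))) j₂
          (Real.sqrt (u2 - A1*s))) := by
      refine ⟨hbd, ?_, ?_, ?_⟩
      · intro j'
        rcases eq_or_ne j' j₂ with h | h
        · subst h; rw [Function.update_self]; exact ha2.le
        · rw [Function.update_of_ne h]
          rcases eq_or_ne j' j₁ with h' | h'
          · subst h'; rw [Function.update_self]; exact ha1.le
          · rw [Function.update_of_ne h']; exact hap j'
      · have h1 : ∑ j', Function.update (Function.update a j₁ A1) j₂ A2 j'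
            = (∑ j', a j') - A1 - A2 + A1 + A2 := by
          simpa using sum_pair₂ a a (fun p _ => p) j₁ j₂ hne A1 (0:ℝ) A2 (0:ℝ)
        rw [h1]
        linear_combination hlin
      · have h1 := sum_pair₂ a b (fun p q => p^3 - 3*p*q^2) j₁ j₂ hne
          A1 (Real.sqrt (u1 + A2*s)) A2 (Real.sqrt (u2 - A1*s))
        simp only [hsqa, hsqb, ← hA1def, ← hA2def, ← hu1def, ← hu2def] at h1 ⊢
        rw [h1]
        linear_combination hcub
    have hle := hopt _ _ _ hfeas'
    have hobj : SpectrumObj ρ r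
        (Function.update (Function.update a j₁ A1) j₂ A2)
        (Function.update (Function.update b j₁ (Real.sqrt (u1 + A2*s))) j₂
          (Real.sqrt (u2 - A1*s)))
        - SpectrumObj ρ r a b = s * Q1 s / (fun _ => (1:ℝ)) s := by
      unfold SpectrumObj
      have h1 := sum_pair₂ a b (fun p q => p^4 - 6*p^2*q^2 + q^4) j₁ j₂ hne
        A1 (Real.sqrt (u1 + A2*s)) A2 (Real.sqrt (u2 - A1*s))
      have hb14 : (b j₁)^4 = u1^2 := by rw [hu1def]; ring
      have hb24 : (b j₂)^4 = u2^2 := by rw [hu2def]; ring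
      simp only [hsqa, hsqb, hsqa4, hsqb4, hb14, hb24,
        ← hA1def, ← hA2def, ← hu1def, ← hu2def] at h1 ⊢
      rw [h1]
      simp only [hQ1def]
      field_simp
      ring
    linarith [hle, hobj]
  have hΦ : A2*(u1-3*A1^2) - A1*(u2-3*A2^2) = 0 := by
    have h0 := key_zero Q1 (fun _ => (1:ℝ)) hQ1c (by fun_prop) (by norm_num) main1
    simp only [hQ1def] at h0
    nlinarith [h0]
  -- ### move 2 : shift a-mass between the pairs
  set U : ℝ → ℝ := fun t =>
    (2*(A1 + t)^3 + 2*(A2 - t)^3 - 6*(A2 - t)*u2 - (2*A1^3 + 2*A2^3 - 6*A1*u1 - 6*A2*u2))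
      / (6*(A1 + t)) with hUdef
  set Q : ℝ → ℝ := fun t =>
    (864 : ℝ) * t^6 + (-5184 : ℝ) * u2 * t^4 + (432 : ℝ) * u2^2 * t^2 + (-432 : ℝ) * u1^2 * t^2 + (-4320 : ℝ) * A2 * t^5 + (6048 : ℝ) * A2 * u2 * t^3 + (5616 : ℝ) * A2^2 * t^4 + (-864 : ℝ) * A2^2 * u2 * t^2 + (-2592 : ℝ) * A2^3 * t^3 + (432 : ℝ) * A2^4 * t^2 + (1728 : ℝ) * A1 * t^5 + (-17280 : ℝ) * A1 * u2 * t^3 + (432 : ℝ) * A1 * u2^2 * t + (-2592 : ℝ) * A1 * u1 * t^3 + (864 : ℝ) * A1 * u1 * u2 * t + (-1296 : ℝ) * A1 * u1^2 * t + (-14688 : ℝ) * A1 * A2 * t^4 + (16416 : ℝ) * A1 * A2 * u2 * t^2 + (864 : ℝ) * A1 * A2 * u1 * t^2 + (17712 : ℝ) * A1 * A2^2 * t^3 + (-864 : ℝ) * A1 * A2^2 * u2 * t + (-864 : ℝ) * A1 * A2^2 * u1 * t + (-6048 : ℝ) * A1 * A2^3 * t^2 + (432 : ℝ) * A1 * A2^4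 * t + (-2160 : ℝ) * A1^2 * t^4 + (-21600 : ℝ) * A1^2 * u2 * t^2 + (-6912 : ℝ) * A1^2 * u1 * t^2 + (864 : ℝ) * A1^2 * u1 * u2 + (-864 : ℝ) * A1^2 * u1^2 + (-19008 : ℝ) * A1^2 * A2 * t^3 + (15552 : ℝ) * A1^2 * A2 * u2 * t + (864 : ℝ) * A1^2 * A2 * u1 * t + (21600 : ℝ) * A1^2 * A2^2 * t^2 + (-864 : ℝ) * A1^2 * A2^2 * u1 + (-5184 : ℝ) * A1^2 * A2^3 * t + (-9072 : ℝ) * A1^3 * t^3 + (-12096 : ℝ) * A1^3 * u2 * t + (-6048 : ℝ) * A1^3 * u1 * t + (-11232 : ℝ) * A1^3 * A2 * t^2 + (5184 : ℝ) * A1^3 * A2 * u2 + (12096 : ℝ) * A1^3 * A2^2 * t + (-1728 : ℝ) * A1^3 * A2^3 + (-9936 : ℝ) * A1^4 * t^2 + (-2592 : ℝ) * A1^4 * u2 + (-1728 : ℝ) * A1^4 * u1 + (-2592 : ℝ) * A1^4 * A2 * t + (2592 : ℝ) * A1^4 * A2^2 + (-4752 : ℝ) * A1^5 * t + (-864 :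 ℝ) * A1^6
    with hQdef
  set D : ℝ → ℝ := fun t => 216*(A1 + t)^3 with hDdef
  have hQc : ContinuousAt Q 0 := by fun_prop
  have hDc : ContinuousAt D 0 := by fun_prop
  have hD0 : 0 < D 0 := by simp only [hDdef]; positivity
  have hUc : ContinuousAt U 0 := by
    simp only [hUdef]
    exact ContinuousAt.div (by fun_prop) (by fun_prop)
      (by rw [add_zero]; exact mul_ne_zero (by norm_num) ha1.ne')
  have hU0 : U 0 = u1 := by
    simp only [hUdef]
    field_simp
    ring
  have f₁ : ∀ᶠ t in 𝓝 (0:ℝ), 0 < A1 + t := by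
    have hc : ContinuousAt (fun t : ℝ => A1 + t) 0 := by fun_prop
    have : (0:ℝ) < A1 + 0 := by simpa using ha1
    exact hc.eventually_const_lt this
  have f₂ : ∀ᶠ t in 𝓝 (0:ℝ), 0 < A2 - t := by
    have hc : ContinuousAt (fun t : ℝ => A2 - t) 0 := by fun_prop
    have : (0:ℝ) < A2 - 0 := by simpa using ha2
    exact hc.eventually_const_lt this
  have f₃ : ∀ᶠ t in 𝓝 (0:ℝ), 0 < U t := by
    have : (0:ℝ) < U 0 := by rw [hU0]; exact hu1
    exact hUc.eventually_const_lt this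
  have main2 : ∀ᶠ t in 𝓝 (0:ℝ), 0 ≤ t * Q t / D t := by
    filter_upwards [f₁, f₂, f₃] with t h₁ h₂ h₃
    have hsq : Real.sqrt (U t) ^ 2 = U t := Real.sq_sqrt h₃.le
    have hsq4 : Real.sqrt (U t) ^ 4 = (U t)^2 := by
      rw [show (4:ℕ) = 2*2 from rfl, pow_mul, hsq]
    have hfeas' : SpectrumFeasible s₃ ρ r
        (Function.update (Function.update a j₁ (A1 + t)) j₂ (A2 - t))
        (Function.update (Function.update b j₁ (Real.sqrt (U t))) j₂ (b j₂)) := by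
      refine ⟨hbd, ?_, ?_, ?_⟩
      · intro j'
        rcases eq_or_ne j' j₂ with h | h
        · subst h; rw [Function.update_self]; exact h₂.le
        · rw [Function.update_of_ne h]
          rcases eq_or_ne j' j₁ with h' | h'
          · subst h'; rw [Function.update_self]; exact h₁.le
          · rw [Function.update_of_ne h']; exact hap j'
      · have h1 : ∑ j', Function.update (Function.update a j₁ (A1 + t)) j₂ (A2 - t) j'
            = (∑ j', a j') - A1 - A2 + (A1 + t) + (A2 - t) := by
          simpa using sum_pair₂ a a (fun p _ => p) j₁ j₂ hne (A1+t) (0:ℝ) (A2-t) (0:ℝ)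
        rw [h1]
        linear_combination hlin
      · have h1 := sum_pair₂ a b (fun p q => p^3 - 3*p*q^2) j₁ j₂ hne
          (A1+t) (Real.sqrt (U t)) (A2-t) (b j₂)
        simp only [hsq, ← hA1def, ← hA2def, ← hu1def, ← hu2def] at h1 ⊢
        rw [h1]
        have hkey : ((A1+t)^3 - 3*(A1+t)*(U t)) + ((A2-t)^3 - 3*(A2-t)*u2)
            - (A1^3 - 3*A1*u1) - (A2^3 - 3*A2*u2) = 0 := by
          simp only [hUdef]
          field_simp
          ring
        linear_combination hcub + 2*hkey
    have hle := hopt _ _ _ hfeas'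
    have hobj : SpectrumObj ρ r
        (Function.update (Function.update a j₁ (A1 + t)) j₂ (A2 - t))
        (Function.update (Function.update b j₁ (Real.sqrt (U t))) j₂ (b j₂))
        - SpectrumObj ρ r a b = t * Q t / D t := by
      unfold SpectrumObj
      have h1 := sum_pair₂ a b (fun p q => p^4 - 6*p^2*q^2 + q^4) j₁ j₂ hne
        (A1+t) (Real.sqrt (U t)) (A2-t) (b j₂)
      have hb14 : (b j₁)^4 = u1^2 := by rw [hu1def]; ring
      have hb24 : (b j₂)^4 = u2^2 := by rw [hu2def]; ring
      simp only [hsq, hsq4, hb14, hb24, ← hA1def, ← hA2def, ← hu1def, ← hu2def] at h1 ⊢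
      rw [h1]
      simp only [hUdef, hQdef, hDdef]
      have h6 : A1 + t ≠ 0 := h₁.ne'
      field_simp
      ring
    linarith [hle, hobj]
  have hQ0 : Q 0 = 0 := key_zero Q D hQc hDc hD0 main2
  -- ### extract the structure
  set m : ℝ := (6*A1^2 - 2*u1) / (3*A1) with hmdef
  have hA1ne : A1 ≠ 0 := ha1.ne'
  have hu1m : u1 = 3*A1^2 - (3/2)*m*A1 := by
    rw [hmdef]
    field_simp
    ring
  have h3A1 : (3:ℝ)*A1 ≠ 0 := mul_ne_zero (by norm_num) hA1ne
  have hmA : m*(3*A1) = 6*A1^2 - 2*u1 := by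
    rw [hmdef]; exact div_mul_cancel₀ _ h3A1
  have hu2m : u2 = 3*A2^2 - (3/2)*m*A2 := by
    have hgoal : A1*(u2 - (3*A2^2 - (3/2)*m*A2)) = 0 := by
      linear_combination (-1:ℝ)*hΦ + (A2/2)*hmA
    rcases mul_eq_zero.mp hgoal with h | h
    · exact absurd h hA1ne
    · linarith
  have hQ0e : Q 0 = 864*A1^2*u1*u2 - 864*A1^2*u1^2 - 864*A1^2*A2^2*u1 + 5184*A1^3*A2*u2
      - 1728*A1^3*A2^3 - 2592*A1^4*u2 - 1728*A1^4*u1 + 2592*A1^4*A2^2 - 864*A1^6 := by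
    simp only [hQdef]
    ring
  rw [hu1m, hu2m] at hQ0e
  have hfac : Q 0 = 432*A1^3*(A1-A2)*(-32*(A1^2+A1*A2+A2^2) + 24*m*(A1+A2) - (9/2)*m^2) := by
    rw [hQ0e]
    ring
  have hm1 : m < 2*A1 := by nlinarith [hu1, hu1m, ha1]
  have hm2 : m < 2*A2 := by nlinarith [hu2, hu2m, ha2]
  have hTneg : -32*(A1^2+A1*A2+A2^2) + 24*m*(A1+A2) - (9/2)*m^2 < 0 := by
    have hx : 0 < (2*A2 - m)*(24*A1 + 15*A2 - (9/2)*m) := by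
      apply mul_pos (by linarith)
      nlinarith [ha1, ha2, hm2]
    nlinarith [hx, sq_nonneg (4*A1 - A2)]
  have hA12 : A1 = A2 := by
    by_contra hne'
    have h1 : A1 - A2 ≠ 0 := sub_ne_zero.mpr hne'
    have h2 : 432*A1^3*(A1-A2)*(-32*(A1^2+A1*A2+A2^2) + 24*m*(A1+A2) - (9/2)*m^2) ≠ 0 :=
      mul_ne_zero (mul_ne_zero (mul_pos (by norm_num) (pow_pos ha1 3)).ne' h1) hTneg.ne
    rw [hQ0] at hfac
    exact h2 hfac.symm
  refine ⟨hA12, ?_⟩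
  rw [hu1m, hu2m, hA12]

set_option maxHeartbeats 3200000 in
lemma moveC2 {s₃ ρ : ℝ} {k l : ℕ} {r : Fin k → ℝ} {a b : Fin l → ℝ}
    (hfeas : SpectrumFeasible s₃ ρ r a b)
    (hopt : ∀ (r' : Fin k → ℝ) (a' b' : Fin l → ℝ), SpectrumFeasible s₃ ρ r' a' b' →
      SpectrumObj ρ r a b ≤ SpectrumObj ρ r' a' b')
    (i₁ i₂ i₃ : Fin k) (h12 : i₁ ≠ i₂) (h13 : i₁ ≠ i₃) (h23 : i₂ ≠ i₃)
    (hy0 : 0 < r i₁) (hyρ : r i₁ < ρ) (h20 : 0 < r i₂) (h2ρ : r i₂ < ρ)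
    (h30 : 0 < r i₃) (h3ρ : r i₃ < ρ) (hlt : r i₂ < r i₃)
    (hne2 : r i₁ ≠ r i₂) (hne3 : r i₁ ≠ r i₃) : False := by
  obtain ⟨hbd, hap, hlin, hcub⟩ := hfeas
  set y := r i₁ with hydef
  set x2 := r i₂ with hx2def
  set x3 := r i₃ with hx3def
  set Sig : ℝ → ℝ := fun t => x2 + x3 - t with hSigdef
  set Pp : ℝ → ℝ := fun t => (Sig t^3 - (x2^3 + x3^3 - ((y + t)^3 - y^3))) / (3*Sig t) with hPpdef
  set Dis : ℝ → ℝ := fun t => Sig t^2 - 4*Pp t with hDisdef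
  set Ym : ℝ → ℝ := fun t => (Sig t - Real.sqrt (Dis t))/2 with hYmdef
  set Yp : ℝ → ℝ := fun t => (Sig t + Real.sqrt (Dis t))/2 with hYpdef
  set Q : ℝ → ℝ := fun t => (162 : ℝ) * t^7 + (-648 : ℝ) * x3 * t^6 + (972 : ℝ) * x3^2 * t^5 + (-648 : ℝ) * x3^3 * t^4 + (162 : ℝ) * x3^4 * t^3 + (-648 : ℝ) * x2 * t^6 + (1944 : ℝ) * x2 * x3 * t^5 + (-1620 : ℝ) * x2 * x3^2 * t^4 + (-324 : ℝ) * x2 * x3^3 * t^3 + (972 : ℝ) * x2 * x3^4 * t^2 + (-324 : ℝ) * x2 * x3^5 * t + (972 : ℝ) * x2^2 * t^5 + (-1620 : ℝ) * x2^2 * x3 * t^4 + (-1134 : ℝ) * x2^2 * x3^2 * t^3 + (3564 : ℝ) * x2^2 * x3^3 * t^2 + (-2106 : ℝ) * x2^2 * x3^4 * t + (324 : ℝ) * x2^2 * x3^5 + (-648 : ℝ) * x2^3 * t^4 + (-324 : ℝ) * x2^3 * x3 * t^3 + (3564 : ℝ) * x2^3 * x3^2 * t^2 + (-3564 : ℝ)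 * x2^3 * x3^3 * t + (972 : ℝ) * x2^3 * x3^4 + (162 : ℝ) * x2^4 * t^3 + (972 : ℝ) * x2^4 * x3 * t^2 + (-2106 : ℝ) * x2^4 * x3^2 * t + (972 : ℝ) * x2^4 * x3^3 + (-324 : ℝ) * x2^5 * x3 * t + (324 : ℝ) * x2^5 * x3^2 + (648 : ℝ) * y * t^6 + (-2592 : ℝ) * y * x3 * t^5 + (4212 : ℝ) * y * x3^2 * t^4 + (-3564 : ℝ) * y * x3^3 * t^3 + (1620 : ℝ) * y * x3^4 * t^2 + (-324 : ℝ) * y * x3^5 * t + (-2592 : ℝ) * y * x2 * t^5 + (8424 : ℝ) * y * x2 * x3 * t^4 + (-10368 : ℝ) * y * x2 * x3^2 * t^3 + (5832 : ℝ) * y * x2 * x3^3 * t^2 + (-1296 : ℝ) * y * x2 * x3^4 * t + (4212 : ℝ) * y * x2^2 * t^4 + (-10368 : ℝ) * y * x2^2 * x3 * t^3 + (8424 : ℝ) * y * x2^2 * x3^2 * t^2 + (-2268 : ℝ) * y * x2^2 * x3^3 * t + (-3564 : ℝ) * y * x2^3 * t^3 + (5832 : ℝ) * y * x2^3 * x3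 * t^2 + (-2268 : ℝ) * y * x2^3 * x3^2 * t + (1620 : ℝ) * y * x2^4 * t^2 + (-1296 : ℝ) * y * x2^4 * x3 * t + (-324 : ℝ) * y * x2^5 * t + (972 : ℝ) * y^2 * t^5 + (-3564 : ℝ) * y^2 * x3 * t^4 + (5346 : ℝ) * y^2 * x3^2 * t^3 + (-4212 : ℝ) * y^2 * x3^3 * t^2 + (1782 : ℝ) * y^2 * x3^4 * t + (-324 : ℝ) * y^2 * x3^5 + (-3564 : ℝ) * y^2 * x2 * t^4 + (10692 : ℝ) * y^2 * x2 * x3 * t^3 + (-12312 : ℝ) * y^2 * x2 * x3^2 * t^2 + (6480 : ℝ) * y^2 * x2 * x3^3 * t + (-1296 : ℝ) * y^2 * x2 * x3^4 + (5346 : ℝ) * y^2 * x2^2 * t^3 + (-12312 : ℝ) * y^2 * x2^2 * x3 * t^2 + (9396 : ℝ) * y^2 * x2^2 * x3^2 * t + (-2268 : ℝ) * y^2 * x2^2 * x3^3 + (-4212 : ℝ) * y^2 * x2^3 * t^2 + (6480 : ℝ) * y^2 * x2^3 * x3 * t + (-2268 : ℝ) * y^2 * x2^3 * x3^2 + (1782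 : ℝ) * y^2 * x2^4 * t + (-1296 : ℝ) * y^2 * x2^4 * x3 + (-324 : ℝ) * y^2 * x2^5 + (648 : ℝ) * y^3 * t^4 + (-1944 : ℝ) * y^3 * x3 * t^3 + (2268 : ℝ) * y^3 * x3^2 * t^2 + (-1296 : ℝ) * y^3 * x3^3 * t + (324 : ℝ) * y^3 * x3^4 + (-1944 : ℝ) * y^3 * x2 * t^3 + (4536 : ℝ) * y^3 * x2 * x3 * t^2 + (-3888 : ℝ) * y^3 * x2 * x3^2 * t + (1296 : ℝ) * y^3 * x2 * x3^3 + (2268 : ℝ) * y^3 * x2^2 * t^2 + (-3888 : ℝ) * y^3 * x2^2 * x3 * t + (1944 : ℝ) * y^3 * x2^2 * x3^2 + (-1296 : ℝ) * y^3 * x2^3 * t + (1296 : ℝ) * y^3 * x2^3 * x3 + (324 : ℝ) * y^3 * x2^4 + (162 : ℝ) * y^4 * t^3 + (-324 : ℝ) * y^4 * x3 * t^2 + (162 : ℝ) * y^4 * x3^2 * t + (-324 : ℝ) * y^4 * x2 * t^2 + (324 : ℝ) * y^4 * x2 * x3 * t + (162 : ℝ) * y^4 * x2^2 * t with hQdef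
  set D : ℝ → ℝ := fun t => 81*(Sig t)^4 with hDdef
  have hσ0 : 0 < x2 + x3 := by linarith
  have hSig0 : Sig 0 = x2 + x3 := by simp only [hSigdef]; ring
  have hSigc : ContinuousAt Sig 0 := by simp only [hSigdef]; fun_prop
  have h3S0 : (3:ℝ)*Sig 0 ≠ 0 := by
    rw [hSig0]; exact mul_ne_zero (by norm_num) hσ0.ne'
  have hPpc : ContinuousAt Pp 0 := by
    simp only [hPpdef]
    apply ContinuousAt.div (by fun_prop) (by fun_prop)
    simpa using h3S0
  have hPp0 : Pp 0 = x2*x3 := by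
    have hPmul0 : Pp 0 * (3*Sig 0) = Sig 0^3 - (x2^3 + x3^3 - ((y + 0)^3 - y^3)) := by
      simp only [hPpdef]
      exact div_mul_cancel₀ _ h3S0
    rw [hSig0] at hPmul0
    have h0 : (Pp 0 - x2*x3) * (3*(x2+x3)) = 0 := by linear_combination hPmul0
    rcases mul_eq_zero.mp h0 with h | h
    · linarith [sub_eq_zero.mp h]
    · exact absurd h (by rw [hSig0] at h3S0; exact h3S0)
  have hDisc : ContinuousAt Dis 0 := by
    simp only [hDisdef]
    exact (hSigc.pow 2).sub (hPpc.const_mul 4)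
  have hDis0 : Dis 0 = (x3 - x2)^2 := by
    simp only [hDisdef]
    rw [hSig0, hPp0]
    ring
  have hRc : ContinuousAt (fun t => Real.sqrt (Dis t)) 0 :=
    Real.continuous_sqrt.continuousAt.comp hDisc
  have hR0 : Real.sqrt (Dis 0) = x3 - x2 := by
    rw [hDis0]
    exact Real.sqrt_sq (by linarith)
  have hYmc : ContinuousAt Ym 0 := by
    simp only [hYmdef]
    exact (hSigc.sub hRc).div_const 2
  have hYpc : ContinuousAt Yp 0 := by
    simp only [hYpdef]
    exact (hSigc.add hRc).div_const 2
  have hYm0 : Ym 0 = x2 := by simp only [hYmdef]; rw [hR0, hSig0]; ring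
  have hYp0 : Yp 0 = x3 := by simp only [hYpdef]; rw [hR0, hSig0]; ring
  have hQc : ContinuousAt Q 0 := by fun_prop
  have hDc : ContinuousAt D 0 := by
    simp only [hDdef]
    exact (hSigc.pow 4).const_mul 81
  have hD0 : 0 < D 0 := by
    simp only [hDdef]
    rw [hSig0]
    positivity
  have g₁ : ∀ᶠ t in 𝓝 (0:ℝ), 0 < Dis t := by
    apply hDisc.eventually_const_lt
    rw [hDis0]
    exact pow_pos (by linarith) 2
  have g₂ : ∀ᶠ t in 𝓝 (0:ℝ), 0 < Sig t := by
    apply hSigc.eventually_const_lt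
    rw [hSig0]; exact hσ0
  have g₃ : ∀ᶠ t in 𝓝 (0:ℝ), 0 < Ym t := by
    apply hYmc.eventually_const_lt; rw [hYm0]; exact h20
  have g₄ : ∀ᶠ t in 𝓝 (0:ℝ), Ym t < ρ := by
    apply hYmc.eventually_lt_const; rw [hYm0]; exact h2ρ
  have g₅ : ∀ᶠ t in 𝓝 (0:ℝ), 0 < Yp t := by
    apply hYpc.eventually_const_lt; rw [hYp0]; exact h30
  have g₆ : ∀ᶠ t in 𝓝 (0:ℝ), Yp t < ρ := by
    apply hYpc.eventually_lt_const; rw [hYp0]; exact h3ρ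
  have g₇ : ∀ᶠ t in 𝓝 (0:ℝ), 0 < y + t := by
    have hc : ContinuousAt (fun t : ℝ => y + t) 0 := by fun_prop
    exact hc.eventually_const_lt (by simpa using hy0)
  have g₈ : ∀ᶠ t in 𝓝 (0:ℝ), y + t < ρ := by
    have hc : ContinuousAt (fun t : ℝ => y + t) 0 := by fun_prop
    exact hc.eventually_lt_const (by simpa using hyρ)
  have main : ∀ᶠ t in 𝓝 (0:ℝ), 0 ≤ t * Q t / D t := by
    filter_upwards [g₁, g₂, g₃, g₄, g₅, g₆, g₇, g₈] with t k₁ k₂ k₃ k₄ k₅ k₆ k₇ k₈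
    have hs : Real.sqrt (Dis t)^2 = Dis t := Real.sq_sqrt k₁.le
    have hsum : Ym t + Yp t = Sig t := by simp only [hYmdef, hYpdef]; ring
    have hprod : Ym t * Yp t = Pp t := by
      have h1 : Ym t * Yp t = (Sig t^2 - Real.sqrt (Dis t)^2)/4 := by
        simp only [hYmdef, hYpdef]; ring
      rw [hs] at h1
      rw [h1]
      simp only [hDisdef]
      ring
    have hSne : Sig t ≠ 0 := k₂.ne'
    have h3S : (3:ℝ)*Sig t ≠ 0 := mul_ne_zero (by norm_num) hSne
    have hPmul : Pp t * (3*Sig t) = Sig t^3 - (x2^3 + x3^3 - ((y + t)^3 - y^3)) := by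
      simp only [hPpdef]
      exact div_mul_cancel₀ _ h3S
    have hsum' : Ym t + Yp t = x2 + x3 - t := by rw [hsum]
    have hcube : Ym t^3 + Yp t^3 = Sig t^3 - 3*Sig t*Pp t := by
      have h1 : Ym t^3 + Yp t^3
          = (Ym t + Yp t)^3 - 3*(Ym t + Yp t)*(Ym t * Yp t) := by ring
      rw [hsum, hprod] at h1
      exact h1
    have hquart : Ym t^4 + Yp t^4 = (Sig t^2 - 2*Pp t)^2 - 2*(Pp t)^2 := by
      have h1 : Ym t^4 + Yp t^4
          = ((Ym t + Yp t)^2 - 2*(Ym t * Yp t))^2 - 2*(Ym t * Yp t)^2 := by ring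
      rw [hsum, hprod] at h1
      exact h1
    have hkey : (y + t)^3 + (Sig t^3 - 3*Sig t*Pp t) - y^3 - x2^3 - x3^3 = 0 := by
      linear_combination (-1:ℝ)*hPmul
    have hfeas' : SpectrumFeasible s₃ ρ
        (Function.update (Function.update (Function.update r i₁ (y + t)) i₂ (Ym t)) i₃ (Yp t))
        a b := by
      refine ⟨?_, hap, ?_, ?_⟩
      · intro i'
        rcases eq_or_ne i' i₃ with h | h
        · subst h; rw [Function.update_self]; exact ⟨k₅.le, k₆.le⟩
        · rw [Function.update_of_ne h]
          rcases eq_or_ne i' i₂ with h' | h'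
          · subst h'; rw [Function.update_self]; exact ⟨k₃.le, k₄.le⟩
          · rw [Function.update_of_ne h']
            rcases eq_or_ne i' i₁ with h'' | h''
            · subst h''; rw [Function.update_self]; exact ⟨k₇.le, k₈.le⟩
            · rw [Function.update_of_ne h'']; exact hbd i'
      · have h1 : ∑ i', Function.update (Function.update (Function.update r i₁ (y + t)) i₂ (Ym t)) i₃ (Yp t) i'
            = (∑ i', r i') - y - x2 - x3 + (y + t) + Ym t + Yp t := by
          simpa using sum_pair₃ r r (fun p _ => p) i₁ i₂ i₃ h12 h13 h23
            (y+t) (0:ℝ) (Ym t) (0:ℝ) (Yp t) (0:ℝ)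
        rw [h1]
        linear_combination hlin + hsum'
      · have h1 : ∑ i', (Function.update (Function.update (Function.update r i₁ (y + t)) i₂ (Ym t)) i₃ (Yp t) i')^3
            = (∑ i', (r i')^3) - y^3 - x2^3 - x3^3 + (y + t)^3 + (Ym t)^3 + (Yp t)^3 := by
          simpa using sum_pair₃ r r (fun p _ => p^3) i₁ i₂ i₃ h12 h13 h23
            (y+t) (0:ℝ) (Ym t) (0:ℝ) (Yp t) (0:ℝ)
        rw [h1]
        have hkey2 : (Ym t)^3 + (Yp t)^3 - x2^3 - x3^3 + (y+t)^3 - y^3 = 0 := by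
          rw [hcube]
          linarith [hkey]
        linear_combination hcub + hkey2
    have hle := hopt _ _ _ hfeas'
    have hobj : SpectrumObj ρ
        (Function.update (Function.update (Function.update r i₁ (y + t)) i₂ (Ym t)) i₃ (Yp t))
        a b - SpectrumObj ρ r a b = t * Q t / D t := by
      unfold SpectrumObj
      have h1 : ∑ i', (Function.update (Function.update (Function.update r i₁ (y + t)) i₂ (Ym t)) i₃ (Yp t) i')^4
          = (∑ i', (r i')^4) - y^4 - x2^4 - x3^4 + (y + t)^4 + (Ym t)^4 + (Yp t)^4 := by
        simpa using sum_pair₃ r r (fun p _ => p^4) i₁ i₂ i₃ h12 h13 h23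
          (y+t) (0:ℝ) (Ym t) (0:ℝ) (Yp t) (0:ℝ)
      rw [h1]
      have hexp : (∑ i', (r i')^4) - y^4 - x2^4 - x3^4 + (y + t)^4 + (Ym t)^4 + (Yp t)^4
          = (∑ i', (r i')^4) - y^4 - x2^4 - x3^4 + (y + t)^4
            + ((Sig t^2 - 2*Pp t)^2 - 2*(Pp t)^2) := by rw [← hquart]; ring
      rw [hexp]
      rw [eq_div_iff (by simp only [hDdef]; positivity : D t ≠ 0)]
      have hPP : Pp t = (Sig t^3 - (x2^3 + x3^3 - ((y + t)^3 - y^3))) * (3*Sig t)⁻¹ := by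
        simp only [hPpdef]; rw [div_eq_mul_inv]
      rw [hPP]
      simp only [hQdef, hDdef, hSigdef]
      have hSne' : x2 + x3 - t ≠ 0 := hSne
      field_simp
      ring
    linarith [hle, hobj]
  have hQ0 : Q 0 = 0 := key_zero Q D hQc hDc hD0 main
  have hQ0' : Q 0 = 324*(x2+x3)^3*((y-x2)*((y-x3)*(x2*x3+y*x2+y*x3))) := by
    simp only [hQdef]
    ring
  have hnz : Q 0 ≠ 0 := by
    rw [hQ0']
    apply mul_ne_zero
    · positivity
    · apply mul_ne_zero (sub_ne_zero.mpr hne2)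
      apply mul_ne_zero (sub_ne_zero.mpr hne3)
      have h1 : 0 < x2*x3 := mul_pos h20 h30
      have h2 : 0 < y*x2 := mul_pos hy0 h20
      have h3 : 0 < y*x3 := mul_pos hy0 h30
      nlinarith [h1, h2, h3]
  exact hnz hQ0


set_option maxHeartbeats 3200000 in
lemma moveC5 {s₃ ρ : ℝ} {k l : ℕ} {r : Fin k → ℝ} {a b : Fin l → ℝ}
    (hfeas : SpectrumFeasible s₃ ρ r a b)
    (hopt : ∀ (r' : Fin k → ℝ) (a' b' : Fin l → ℝ), SpectrumFeasible s₃ ρ r' a' b' →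
      SpectrumObj ρ r a b ≤ SpectrumObj ρ r' a' b')
    (i₂ i₃ : Fin k) (j : Fin l) (h23 : i₂ ≠ i₃)
    (hy0 : 0 < a j) (hbj : b j = 0) (h20 : 0 < r i₂) (h2ρ : r i₂ < ρ)
    (h30 : 0 < r i₃) (h3ρ : r i₃ < ρ) (hlt : r i₂ < r i₃)
    (hne2 : a j ≠ r i₂) (hne3 : a j ≠ r i₃) : False := by
  obtain ⟨hbd, hap, hlin, hcub⟩ := hfeas
  set y := a j with hydef
  set x2 := r i₂ with hx2def
  set x3 := r i₃ with hx3def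
  set Sig : ℝ → ℝ := fun t => x2 + x3 - 2*t with hSigdef
  set Pp : ℝ → ℝ := fun t => (Sig t^3 - (x2^3 + x3^3 - 2*((y + t)^3 - y^3))) / (3*Sig t) with hPpdef
  set Dis : ℝ → ℝ := fun t => Sig t^2 - 4*Pp t with hDisdef
  set Ym : ℝ → ℝ := fun t => (Sig t - Real.sqrt (Dis t))/2 with hYmdef
  set Yp : ℝ → ℝ := fun t => (Sig t + Real.sqrt (Dis t))/2 with hYpdef
  set Q : ℝ → ℝ := fun t => (5184 : ℝ) * t^7 + (-7776 : ℝ) * x3 * t^6 + (-648 : ℝ) * x3^2 * t^5 + (6480 : ℝ) * x3^3 * t^4 + (-3726 : ℝ) * x3^4 * t^3 + (648 : ℝ) * x3^5 * t^2 + (-7776 : ℝ) * x2 * t^6 + (-1296 : ℝ) * x2 * x3 * t^5 + (27216 : ℝ) * x2 * x3^2 * t^4 + (-27864 : ℝ) * x2 * x3^3 * t^3 + (10368 : ℝ) * x2 * x3^4 * t^2 + (-1296 : ℝ) * x2 * x3^5 * t + (-648 : ℝ) * x2^2 * t^5 + (27216 : ℝ) * x2^2 * x3 * t^4 + (-50868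 : ℝ) * x2^2 * x3^2 * t^3 + (33048 : ℝ) * x2^2 * x3^3 * t^2 + (-8424 : ℝ) * x2^2 * x3^4 * t + (648 : ℝ) * x2^2 * x3^5 + (6480 : ℝ) * x2^3 * t^4 + (-27864 : ℝ) * x2^3 * x3 * t^3 + (33048 : ℝ) * x2^3 * x3^2 * t^2 + (-14256 : ℝ) * x2^3 * x3^3 * t + (1944 : ℝ) * x2^3 * x3^4 + (-3726 : ℝ) * x2^4 * t^3 + (10368 : ℝ) * x2^4 * x3 * t^2 + (-8424 : ℝ) * x2^4 * x3^2 * t + (1944 : ℝ) * x2^4 * x3^3 + (648 : ℝ) * x2^5 * t^2 + (-1296 : ℝ) * x2^5 * x3 * t + (648 : ℝ) * x2^5 * x3^2 + (25920 : ℝ) * y * t^6 + (-57024 : ℝ) * y * x3 * t^5 + (50544 : ℝ) * y * x3^2 * t^4 + (-23328 : ℝ) * y * x3^3 * t^3 + (5832 : ℝ) * y * x3^4 * t^2 + (-648 : ℝ) * y * x3^5 * t + (-57024 : ℝ) * y * x2 * t^5 + (101088 : ℝ) * y * x2 * x3 * t^4 + (-67392 : ℝ) * y * x2 * x3^2 *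 t^3 + (20736 : ℝ) * y * x2 * x3^3 * t^2 + (-2592 : ℝ) * y * x2 * x3^4 * t + (50544 : ℝ) * y * x2^2 * t^4 + (-67392 : ℝ) * y * x2^2 * x3 * t^3 + (29808 : ℝ) * y * x2^2 * x3^2 * t^2 + (-4536 : ℝ) * y * x2^2 * x3^3 * t + (-23328 : ℝ) * y * x2^3 * t^3 + (20736 : ℝ) * y * x2^3 * x3 * t^2 + (-4536 : ℝ) * y * x2^3 * x3^2 * t + (5832 : ℝ) * y * x2^4 * t^2 + (-2592 : ℝ) * y * x2^4 * x3 * t + (-648 : ℝ) * y * x2^5 * t + (33696 : ℝ) * y^2 * t^5 + (-69984 : ℝ) * y^2 * x3 * t^4 + (58968 : ℝ) * y^2 * x3^2 * t^3 + (-25920 : ℝ) * y^2 * x3^3 * t^2 + (6156 : ℝ) * y^2 * x3^4 * t + (-648 : ℝ) * y^2 * x3^5 + (-69984 : ℝ) * y^2 * x2 * t^4 + (117936 : ℝ) * y^2 * x2 * x3 * t^3 + (-75168 : ℝ) * y^2 * x2 * x3^2 * t^2 + (22032 : ℝ) * y^2 * x2 * x3^3 * t + (-2592 : ℝ) * y^2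 * x2 * x3^4 + (58968 : ℝ) * y^2 * x2^2 * t^3 + (-75168 : ℝ) * y^2 * x2^2 * x3 * t^2 + (31752 : ℝ) * y^2 * x2^2 * x3^2 * t + (-4536 : ℝ) * y^2 * x2^2 * x3^3 + (-25920 : ℝ) * y^2 * x2^3 * t^2 + (22032 : ℝ) * y^2 * x2^3 * x3 * t + (-4536 : ℝ) * y^2 * x2^3 * x3^2 + (6156 : ℝ) * y^2 * x2^4 * t + (-2592 : ℝ) * y^2 * x2^4 * x3 + (-648 : ℝ) * y^2 * x2^5 + (15552 : ℝ) * y^3 * t^4 + (-25920 : ℝ) * y^3 * x3 * t^3 + (16848 : ℝ) * y^3 * x3^2 * t^2 + (-5184 : ℝ) * y^3 * x3^3 * t + (648 : ℝ) * y^3 * x3^4 + (-25920 : ℝ) * y^3 * x2 * t^3 + (33696 : ℝ) * y^3 * x2 * x3 * t^2 + (-15552 : ℝ) * y^3 * x2 * x3^2 * t + (2592 : ℝ) * y^3 * x2 * x3^3 + (16848 : ℝ) * y^3 * x2^2 * t^2 + (-15552 : ℝ) * y^3 * x2^2 * x3 * t + (3888 : ℝ) * y^3 * x2^2 * x3^2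 + (-5184 : ℝ) * y^3 * x2^3 * t + (2592 : ℝ) * y^3 * x2^3 * x3 + (648 : ℝ) * y^3 * x2^4 + (2592 : ℝ) * y^4 * t^3 + (-2592 : ℝ) * y^4 * x3 * t^2 + (648 : ℝ) * y^4 * x3^2 * t + (-2592 : ℝ) * y^4 * x2 * t^2 + (1296 : ℝ) * y^4 * x2 * x3 * t + (648 : ℝ) * y^4 * x2^2 * t with hQdef
  set D : ℝ → ℝ := fun t => 81*(Sig t)^4 with hDdef
  have hσ0 : 0 < x2 + x3 := by linarith
  have hSig0 : Sig 0 = x2 + x3 := by simp only [hSigdef]; ring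
  have hSigc : ContinuousAt Sig 0 := by simp only [hSigdef]; fun_prop
  have h3S0 : (3:ℝ)*Sig 0 ≠ 0 := by
    rw [hSig0]; exact mul_ne_zero (by norm_num) hσ0.ne'
  have hPpc : ContinuousAt Pp 0 := by
    simp only [hPpdef]
    apply ContinuousAt.div (by fun_prop) (by fun_prop)
    simpa using h3S0
  have hPp0 : Pp 0 = x2*x3 := by
    have hPmul0 : Pp 0 * (3*Sig 0) = Sig 0^3 - (x2^3 + x3^3 - 2*((y + 0)^3 - y^3)) := by
      simp only [hPpdef]
      exact div_mul_cancel₀ _ h3S0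
    rw [hSig0] at hPmul0
    have h0 : (Pp 0 - x2*x3) * (3*(x2+x3)) = 0 := by linear_combination hPmul0
    rcases mul_eq_zero.mp h0 with h | h
    · linarith [sub_eq_zero.mp h]
    · exact absurd h (by rw [hSig0] at h3S0; exact h3S0)
  have hDisc : ContinuousAt Dis 0 := by
    simp only [hDisdef]
    exact (hSigc.pow 2).sub (hPpc.const_mul 4)
  have hDis0 : Dis 0 = (x3 - x2)^2 := by
    simp only [hDisdef]
    rw [hSig0, hPp0]
    ring
  have hRc : ContinuousAt (fun t => Real.sqrt (Dis t)) 0 :=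
    Real.continuous_sqrt.continuousAt.comp hDisc
  have hR0 : Real.sqrt (Dis 0) = x3 - x2 := by
    rw [hDis0]
    exact Real.sqrt_sq (by linarith)
  have hYmc : ContinuousAt Ym 0 := by
    simp only [hYmdef]
    exact (hSigc.sub hRc).div_const 2
  have hYpc : ContinuousAt Yp 0 := by
    simp only [hYpdef]
    exact (hSigc.add hRc).div_const 2
  have hYm0 : Ym 0 = x2 := by simp only [hYmdef]; rw [hR0, hSig0]; ring
  have hYp0 : Yp 0 = x3 := by simp only [hYpdef]; rw [hR0, hSig0]; ring
  have hQc : ContinuousAt Q 0 := by fun_prop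
  have hDc : ContinuousAt D 0 := by
    simp only [hDdef]
    exact (hSigc.pow 4).const_mul 81
  have hD0 : 0 < D 0 := by
    simp only [hDdef]
    rw [hSig0]
    positivity
  have g₁ : ∀ᶠ t in 𝓝 (0:ℝ), 0 < Dis t := by
    apply hDisc.eventually_const_lt
    rw [hDis0]
    exact pow_pos (by linarith) 2
  have g₂ : ∀ᶠ t in 𝓝 (0:ℝ), 0 < Sig t := by
    apply hSigc.eventually_const_lt
    rw [hSig0]; exact hσ0
  have g₃ : ∀ᶠ t in 𝓝 (0:ℝ), 0 < Ym t := by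
    apply hYmc.eventually_const_lt; rw [hYm0]; exact h20
  have g₄ : ∀ᶠ t in 𝓝 (0:ℝ), Ym t < ρ := by
    apply hYmc.eventually_lt_const; rw [hYm0]; exact h2ρ
  have g₅ : ∀ᶠ t in 𝓝 (0:ℝ), 0 < Yp t := by
    apply hYpc.eventually_const_lt; rw [hYp0]; exact h30
  have g₆ : ∀ᶠ t in 𝓝 (0:ℝ), Yp t < ρ := by
    apply hYpc.eventually_lt_const; rw [hYp0]; exact h3ρ
  have g₇ : ∀ᶠ t in 𝓝 (0:ℝ), 0 < y + t := by
    have hc : ContinuousAt (fun t : ℝ => y + t) 0 := by fun_prop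
    exact hc.eventually_const_lt (by simpa using hy0)
  have main : ∀ᶠ t in 𝓝 (0:ℝ), 0 ≤ t * Q t / D t := by
    filter_upwards [g₁, g₂, g₃, g₄, g₅, g₆, g₇] with t k₁ k₂ k₃ k₄ k₅ k₆ k₇
    have hs : Real.sqrt (Dis t)^2 = Dis t := Real.sq_sqrt k₁.le
    have hsum : Ym t + Yp t = Sig t := by simp only [hYmdef, hYpdef]; ring
    have hprod : Ym t * Yp t = Pp t := by
      have h1 : Ym t * Yp t = (Sig t^2 - Real.sqrt (Dis t)^2)/4 := by
        simp only [hYmdef, hYpdef]; ring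
      rw [hs] at h1
      rw [h1]
      simp only [hDisdef]
      ring
    have hSne : Sig t ≠ 0 := k₂.ne'
    have h3S : (3:ℝ)*Sig t ≠ 0 := mul_ne_zero (by norm_num) hSne
    have hPmul : Pp t * (3*Sig t) = Sig t^3 - (x2^3 + x3^3 - 2*((y + t)^3 - y^3)) := by
      simp only [hPpdef]
      exact div_mul_cancel₀ _ h3S
    have hsum' : Ym t + Yp t = x2 + x3 - 2*t := by rw [hsum]
    have hcube : Ym t^3 + Yp t^3 = Sig t^3 - 3*Sig t*Pp t := by
      have h1 : Ym t^3 + Yp t^3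
          = (Ym t + Yp t)^3 - 3*(Ym t + Yp t)*(Ym t * Yp t) := by ring
      rw [hsum, hprod] at h1
      exact h1
    have hquart : Ym t^4 + Yp t^4 = (Sig t^2 - 2*Pp t)^2 - 2*(Pp t)^2 := by
      have h1 : Ym t^4 + Yp t^4
          = ((Ym t + Yp t)^2 - 2*(Ym t * Yp t))^2 - 2*(Ym t * Yp t)^2 := by ring
      rw [hsum, hprod] at h1
      exact h1
    have hkey : 2*(y + t)^3 + (Sig t^3 - 3*Sig t*Pp t) - 2*y^3 - x2^3 - x3^3 = 0 := by
      linear_combination (-1:ℝ)*hPmul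
    have hfeas' : SpectrumFeasible s₃ ρ
        (Function.update (Function.update r i₂ (Ym t)) i₃ (Yp t))
        (Function.update a j (y + t)) (Function.update b j (b j)) := by
      refine ⟨?_, ?_, ?_, ?_⟩
      · intro i'
        rcases eq_or_ne i' i₃ with h | h
        · subst h; rw [Function.update_self]; exact ⟨k₅.le, k₆.le⟩
        · rw [Function.update_of_ne h]
          rcases eq_or_ne i' i₂ with h' | h'
          · subst h'; rw [Function.update_self]; exact ⟨k₃.le, k₄.le⟩
          · rw [Function.update_of_ne h']; exact hbd i'
      · intro j'
        rcases eq_or_ne j' j with h | h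
        · subst h; rw [Function.update_self]; exact k₇.le
        · rw [Function.update_of_ne h]; exact hap j'
      · have h1 : ∑ i', Function.update (Function.update r i₂ (Ym t)) i₃ (Yp t) i'
            = (∑ i', r i') - x2 - x3 + Ym t + Yp t := by
          simpa using sum_pair₂ r r (fun p _ => p) i₂ i₃ h23 (Ym t) (0:ℝ) (Yp t) (0:ℝ)
        have h2 : ∑ j', Function.update a j (y + t) j' = (∑ j', a j') - y + (y + t) := by
          simpa using sum_pair₁ a a (fun p _ => p) j (y+t) (0:ℝ)
        rw [h1, h2]
        linear_combination hlin + hsum'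
      · have h1 : ∑ i', (Function.update (Function.update r i₂ (Ym t)) i₃ (Yp t) i')^3
            = (∑ i', (r i')^3) - x2^3 - x3^3 + (Ym t)^3 + (Yp t)^3 := by
          simpa using sum_pair₂ r r (fun p _ => p^3) i₂ i₃ h23 (Ym t) (0:ℝ) (Yp t) (0:ℝ)
        have h2 := sum_pair₁ a b (fun p q => p^3 - 3*p*q^2) j (y+t) (b j)
        simp only [hbj, ← hydef] at h2 ⊢
        rw [h1, h2]
        have hkey2 : (Ym t)^3 + (Yp t)^3 - x2^3 - x3^3 + 2*((y+t)^3 - y^3) = 0 := by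
          rw [hcube]
          linarith [hkey]
        linear_combination hcub + 2*hkey2 - hkey2
    have hle := hopt _ _ _ hfeas'
    have hobj : SpectrumObj ρ
        (Function.update (Function.update r i₂ (Ym t)) i₃ (Yp t))
        (Function.update a j (y + t)) (Function.update b j (b j))
        - SpectrumObj ρ r a b = t * Q t / D t := by
      unfold SpectrumObj
      have h1 : ∑ i', (Function.update (Function.update r i₂ (Ym t)) i₃ (Yp t) i')^4
          = (∑ i', (r i')^4) - x2^4 - x3^4 + (Ym t)^4 + (Yp t)^4 := by
        simpa using sum_pair₂ r r (fun p _ => p^4) i₂ i₃ h23 (Ym t) (0:ℝ) (Yp t) (0:ℝ)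
      have h2 := sum_pair₁ a b (fun p q => p^4 - 6*p^2*q^2 + q^4) j (y+t) (b j)
      simp only [hbj, ← hydef] at h2 ⊢
      rw [h1, h2]
      have hexp : (∑ i', (r i')^4) - x2^4 - x3^4 + (Ym t)^4 + (Yp t)^4
          = (∑ i', (r i')^4) - x2^4 - x3^4
            + ((Sig t^2 - 2*Pp t)^2 - 2*(Pp t)^2) := by rw [← hquart]; ring
      rw [hexp]
      rw [sub_eq_iff_eq_add]
      rw [eq_comm, add_comm]
      rw [← sub_eq_iff_eq_add, eq_comm]
      have hPP : Pp t = (Sig t^3 - (x2^3 + x3^3 - 2*((y + t)^3 - y^3))) * (3*Sig t)⁻¹ := by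
        simp only [hPpdef]; rw [div_eq_mul_inv]
      rw [hPP]
      simp only [hQdef, hDdef, hSigdef]
      have hSne' : x2 + x3 - 2*t ≠ 0 := hSne
      have hyt : y + t ≠ 0 := k₇.ne'
      field_simp
      ring
    linarith [hle, hobj]
  have hQ0 : Q 0 = 0 := key_zero Q D hQc hDc hD0 main
  have hQ0' : Q 0 = 648*(x2+x3)^3*((y-x2)*((y-x3)*(x2*x3+y*x2+y*x3))) := by
    simp only [hQdef]
    ring
  have hnz : Q 0 ≠ 0 := by
    rw [hQ0']
    apply mul_ne_zero
    · positivity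
    · apply mul_ne_zero (sub_ne_zero.mpr hne2)
      apply mul_ne_zero (sub_ne_zero.mpr hne3)
      have h1 : 0 < x2*x3 := mul_pos h20 h30
      have h2 : 0 < y*x2 := mul_pos hy0 h20
      have h3 : 0 < y*x3 := mul_pos hy0 h30
      nlinarith [h1, h2, h3]
  exact hnz hQ0


/-- Structure of optimal solutions of the optimization problem SPECTRUM. -/
theorem stmt_8 (s₃ ρ : ℝ) (hs₃ : 0 ≤ s₃ ∧ s₃ ≤ 1/8) (hρ : 0 ≤ ρ ∧ ρ ≤ 1/2)
    (k l : ℕ) (hkl : 1 ≤ k + l)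
    (r : Fin k → ℝ) (a b : Fin l → ℝ)
    (hfeas : SpectrumFeasible s₃ ρ r a b)
    (hopt : ∀ (r' : Fin k → ℝ) (a' b' : Fin l → ℝ),
      SpectrumFeasible s₃ ρ r' a' b' → SpectrumObj ρ r a b ≤ SpectrumObj ρ r' a' b') :
    (∃ r' r'' : ℝ, 0 < r' ∧ 0 < r'' ∧
      (∀ i, r i ∈ ({0, r', r'', ρ} : Set ℝ)) ∧
      (∀ i, (a i, b i) ∈ ({(0, 0), (r', 0), (r'', 0)} : Set (ℝ × ℝ)))) ∨
    (∃ a' b' : ℝ, b' ≠ 0 ∧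
      (∀ i, r i ∈ ({0, ρ} : Set ℝ)) ∧
      (∀ i, (a i, b i) ∈ ({(0, 0), (a', b'), (a', -b')} : Set (ℝ × ℝ)))) := by
  classical
  have hbd : ∀ i, 0 ≤ r i ∧ r i ≤ ρ := hfeas.1
  have hap : ∀ i, 0 ≤ a i := hfeas.2.1
  by_cases hB : ∃ j, b j ≠ 0
  · obtain ⟨j0, hj0⟩ := hB
    right
    have haj0 : 0 < a j0 := by
      rcases eq_or_lt_of_le (hap j0) with h | h
      · exact absurd (moveC1 hfeas hopt j0 h.symm) hj0
      · exact h
    refine ⟨a j0, b j0, hj0, ?_, ?_⟩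
    · intro i
      simp only [Set.mem_insert_iff, Set.mem_singleton_iff]
      rcases eq_or_lt_of_le (hbd i).1 with h | h
      · exact Or.inl h.symm
      · rcases eq_or_lt_of_le (hbd i).2 with h' | h'
        · exact Or.inr h'
        · exact absurd (moveC6 hfeas hopt i j0 h h' haj0 hj0) not_false
    · intro j
      simp only [Set.mem_insert_iff, Set.mem_singleton_iff, Prod.mk.injEq]
      by_cases hbj : b j = 0
      · have haj : a j = 0 := by
          by_contra h
          have hpos : 0 < a j := (hap j).lt_of_ne (Ne.symm h)
          have hne : j0 ≠ j := by rintro rfl; exact hj0 hbj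
          exact moveC7 hfeas hopt j0 j hne haj0 hj0 hpos hbj
        exact Or.inl ⟨haj, hbj⟩
      · rcases eq_or_ne j j0 with h | h
        · subst h
          exact Or.inr (Or.inl ⟨rfl, rfl⟩)
        · have hpos : 0 < a j := by
            rcases eq_or_lt_of_le (hap j) with h' | h'
            · exact absurd (moveC1 hfeas hopt j h'.symm) hbj
            · exact h'
          obtain ⟨hA, hBsq⟩ := moveC8 hfeas hopt j0 j (Ne.symm h) haj0 hj0 hpos hbj
          have hfac : (b j - b j0) * (b j + b j0) = 0 := by linear_combination -hBsq
          rcases mul_eq_zero.mp hfac with hc | hc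
          · exact Or.inr (Or.inl ⟨hA.symm, by linarith [sub_eq_zero.mp hc]⟩)
          · exact Or.inr (Or.inr ⟨hA.symm, by linarith⟩)
  · push_neg at hB
    left
    have haa : ∀ j j' : Fin l, 0 < a j → 0 < a j' → a j = a j' := by
      intro j j' h h'
      by_contra hne
      have hjj : j ≠ j' := by rintro rfl; exact hne rfl
      rcases lt_or_gt_of_ne hne with hlt | hlt
      · exact moveC3 hfeas hopt j' j hjj.symm (hB j') (hB j) h hlt
      · exact moveC3 hfeas hopt j j' hjj (hB j) (hB j') h' hlt
    by_cases hA : ∃ j, 0 < a j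
    · obtain ⟨j0, hj0⟩ := hA
      by_cases hI : ∃ i, (0 < r i ∧ r i < ρ) ∧ r i ≠ a j0
      · obtain ⟨i0, ⟨hi0l, hi0r⟩, hi0ne⟩ := hI
        refine ⟨r i0, a j0, hi0l, hj0, ?_, ?_⟩
        · intro i
          simp only [Set.mem_insert_iff, Set.mem_singleton_iff]
          rcases eq_or_lt_of_le (hbd i).1 with h | h
          · exact Or.inl h.symm
          · rcases eq_or_lt_of_le (hbd i).2 with h' | h'
            · exact Or.inr (Or.inr (Or.inr h'))
            · rcases eq_or_ne (r i) (r i0) with he | he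
              · exact Or.inr (Or.inl he)
              · rcases eq_or_ne (r i) (a j0) with he2 | he2
                · exact Or.inr (Or.inr (Or.inl he2))
                · exfalso
                  have hii : i ≠ i0 := by rintro rfl; exact he rfl
                  rcases lt_or_gt_of_ne he with hlt | hlt
                  · exact moveC5 hfeas hopt i i0 j0 hii hj0 (hB j0) h h' hi0l hi0r hlt
                      (Ne.symm he2) (Ne.symm hi0ne)
                  · exact moveC5 hfeas hopt i0 i j0 hii.symm hj0 (hB j0) hi0l hi0r h h' hlt
                      (Ne.symm hi0ne) (Ne.symm he2)
        · intro j
          simp only [Set.mem_insert_iff, Set.mem_singleton_iff, Prod.mk.injEq]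
          rcases eq_or_lt_of_le (hap j) with h | h
          · exact Or.inl ⟨h.symm, hB j⟩
          · exact Or.inr (Or.inr ⟨haa j j0 h hj0, hB j⟩)
      · push_neg at hI
        refine ⟨a j0, a j0, hj0, hj0, ?_, ?_⟩
        · intro i
          simp only [Set.mem_insert_iff, Set.mem_singleton_iff]
          rcases eq_or_lt_of_le (hbd i).1 with h | h
          · exact Or.inl h.symm
          · rcases eq_or_lt_of_le (hbd i).2 with h' | h'
            · exact Or.inr (Or.inr (Or.inr h'))
            · exact Or.inr (Or.inl (hI i ⟨h, h'⟩))
        · intro j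
          simp only [Set.mem_insert_iff, Set.mem_singleton_iff, Prod.mk.injEq]
          rcases eq_or_lt_of_le (hap j) with h | h
          · exact Or.inl ⟨h.symm, hB j⟩
          · exact Or.inr (Or.inl ⟨haa j j0 h hj0, hB j⟩)
    · push_neg at hA
      have hA0 : ∀ j, a j = 0 := fun j => le_antisymm (hA j) (hap j)
      by_cases hI : ∃ i, 0 < r i ∧ r i < ρ
      · obtain ⟨i1, hi1⟩ := hI
        by_cases hI2 : ∃ i, (0 < r i ∧ r i < ρ) ∧ r i ≠ r i1
        · obtain ⟨i2, hi2, hi2ne⟩ := hI2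
          refine ⟨r i1, r i2, hi1.1, hi2.1, ?_, ?_⟩
          · intro i
            simp only [Set.mem_insert_iff, Set.mem_singleton_iff]
            rcases eq_or_lt_of_le (hbd i).1 with h | h
            · exact Or.inl h.symm
            · rcases eq_or_lt_of_le (hbd i).2 with h' | h'
              · exact Or.inr (Or.inr (Or.inr h'))
              · rcases eq_or_ne (r i) (r i1) with he | he
                · exact Or.inr (Or.inl he)
                · rcases eq_or_ne (r i) (r i2) with he2 | he2
                  · exact Or.inr (Or.inr (Or.inl he2))
                  · exfalso
                    have hii1 : i ≠ i1 := by rintro rfl; exact he rfl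
                    have hii2 : i ≠ i2 := by rintro rfl; exact he2 rfl
                    have hi12 : i1 ≠ i2 := by rintro rfl; exact hi2ne rfl
                    rcases lt_or_gt_of_ne hi2ne with hlt | hlt
                    · exact moveC2 hfeas hopt i i2 i1 hii2 hii1 (Ne.symm hi12) h h'
                        hi2.1 hi2.2 hi1.1 hi1.2 hlt he2 he
                    · exact moveC2 hfeas hopt i i1 i2 hii1 hii2 hi12 h h'
                        hi1.1 hi1.2 hi2.1 hi2.2 hlt he he2
          · intro j
            simp only [Set.mem_insert_iff, Set.mem_singleton_iff, Prod.mk.injEq]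
            exact Or.inl ⟨hA0 j, hB j⟩
        · push_neg at hI2
          refine ⟨r i1, r i1, hi1.1, hi1.1, ?_, ?_⟩
          · intro i
            simp only [Set.mem_insert_iff, Set.mem_singleton_iff]
            rcases eq_or_lt_of_le (hbd i).1 with h | h
            · exact Or.inl h.symm
            · rcases eq_or_lt_of_le (hbd i).2 with h' | h'
              · exact Or.inr (Or.inr (Or.inr h'))
              · exact Or.inr (Or.inl (hI2 i ⟨h, h'⟩))
          · intro j
            simp only [Set.mem_insert_iff, Set.mem_singleton_iff, Prod.mk.injEq]
            exact Or.inl ⟨hA0 j, hB j⟩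
      · push_neg at hI
        refine ⟨1, 1, one_pos, one_pos, ?_, ?_⟩
        · intro i
          simp only [Set.mem_insert_iff, Set.mem_singleton_iff]
          rcases eq_or_lt_of_le (hbd i).1 with h | h
          · exact Or.inl h.symm
          · exact Or.inr (Or.inr (Or.inr (le_antisymm (hbd i).2 (hI i h))))
        · intro j
          simp only [Set.mem_insert_iff, Set.mem_singleton_iff, Prod.mk.injEq]
          exact Or.inl ⟨hA0 j, hB j⟩

end SpectrumProofs
end

section
/- Let n be a positive integer, let A be a tournament matrix of order n, and let μ₁,…,μₙ ∈ ℂ be the eigenvalues of A with multiplicity. Then Tr(A³) ≤ (Re μ₁)³ + ⋯ + (Re μₙ)³. -/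
open Polynomial Matrix

lemma charpoly_eval' {m : Type*} [Fintype m] [DecidableEq m] (M : Matrix m m ℂ) (x : ℂ) :
    M.charpoly.eval x = (x • (1 : Matrix m m ℂ) - M).det := by
  unfold Matrix.charpoly
  rw [← Polynomial.coe_evalRingHom, RingHom.map_det]
  congr 1
  ext i j
  by_cases h : i = j <;>
    simp [Matrix.charmatrix_apply, Matrix.one_apply, Matrix.diagonal_apply, h]
lemma cube_charpoly {m : Type*} [Fintype m] [DecidableEq m] (M : Matrix m m ℂ) (μ : m → ℂ)
    (h : M.charpoly = ∏ i, (X - C (μ i))) :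
    (M ^ 3).charpoly = ∏ i, (X - C (μ i ^ 3)) := by
  have heval : ∀ a : ℂ, (a • (1 : Matrix m m ℂ) - M).det = ∏ i, (a - μ i) := by
    intro a
    rw [← charpoly_eval' M a, h]
    simp [eval_prod]
  apply Polynomial.funext
  intro x
  obtain ⟨ω, hω⟩ := IsAlgClosed.exists_pow_nat_eq x (n := 3) (by norm_num)
  set ζ : ℂ := ⟨-1/2, Real.sqrt 3 / 2⟩ with hζdef
  have hζ : ζ ^ 2 + ζ + 1 = 0 := by
    have h3 : Real.sqrt 3 ^ 2 = 3 := Real.sq_sqrt (by norm_num)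
    apply Complex.ext <;> simp [hζdef, pow_two, Complex.mul_re, Complex.mul_im] <;> nlinarith
  have hζ3 : ζ ^ 3 = 1 := by linear_combination (ζ - 1) * hζ
  have key : x • (1 : Matrix m m ℂ) - M ^ 3
      = (ω • 1 - M) * ((ζ * ω) • 1 - M) * ((ζ ^ 2 * ω) • 1 - M) := by
    simp only [pow_succ, pow_zero, one_mul, sub_mul, mul_sub, smul_mul_assoc, mul_smul_comm,
      mul_one, smul_smul, mul_assoc]
    match_scalars
    · linear_combination (-1 : ℂ) * hω - ω ^ 3 * hζ3
    · ring
    · linear_combination ζ * ω ^ 2 * hζ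
    · linear_combination -ω * hζ
  rw [charpoly_eval', key, det_mul, det_mul, heval, heval, heval, eval_prod,
    ← Finset.prod_mul_distrib, ← Finset.prod_mul_distrib]
  refine Finset.prod_congr rfl fun i _ => ?_
  simp only [eval_sub, eval_X, eval_C]
  linear_combination ω ^ 3 * hζ3 + hω - ζ * ω ^ 2 * (μ i) * hζ + ω * (μ i) ^ 2 * hζ
lemma re_nonneg_of_eig {m : Type*} [Fintype m] [DecidableEq m] (A : Matrix m m ℝ)
    (hAT : A + A.transpose = Matrix.of fun _ _ => (1 : ℝ)) (z : ℂ)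
    (hroot : (A.map (Complex.ofReal : ℝ → ℂ)).charpoly.IsRoot z) : 0 ≤ z.re := by
  set B := A.map (Complex.ofReal : ℝ → ℂ) with hB
  have hdet : (z • (1 : Matrix m m ℂ) - B).det = 0 := by
    rw [← charpoly_eval' B z]; exact hroot
  obtain ⟨v, hv0, hv⟩ := (Matrix.exists_mulVec_eq_zero_iff).2 hdet
  have hmv : B.mulVec v = z • v := by
    have h := hv
    rw [Matrix.sub_mulVec, Matrix.smul_mulVec, Matrix.one_mulVec, sub_eq_zero] at h
    exact h.symm
  have hvec : ∀ j, ∑ k, B j k * v k = z * v j := by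
    intro j
    have := congrFun hmv j
    simpa [Matrix.mulVec, dotProduct] using this
  have hsum : ∀ j k : m, B j k + B k j = 1 := by
    intro j k
    have h := congrFun (congrFun hAT j) k
    simp only [Matrix.add_apply, Matrix.transpose_apply, Matrix.of_apply] at h
    simp only [hB, Matrix.map_apply]
    norm_cast
  have hBreal : ∀ j k, (starRingEnd ℂ) (B j k) = B j k := by
    intro j k; simp [hB, Matrix.map_apply]
  set d : ℝ := ∑ j, Complex.normSq (v j) with hd
  have hdpos : 0 < d := by
    obtain ⟨j, hj⟩ := Function.ne_iff.1 hv0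
    exact Finset.sum_pos' (fun k _ => Complex.normSq_nonneg _)
      ⟨j, Finset.mem_univ j, by simpa [Complex.normSq_pos] using hj⟩
  set S : ℂ := ∑ j, v j with hS
  set L : ℂ := ∑ j, ∑ k, (starRingEnd ℂ) (v j) * B j k * v k with hL
  have hLz : L = z * (d : ℂ) := by
    rw [hL]
    have : ∀ j, ∑ k, (starRingEnd ℂ) (v j) * B j k * v k
        = (starRingEnd ℂ) (v j) * ∑ k, B j k * v k := by
      intro j; rw [Finset.mul_sum]; exact Finset.sum_congr rfl fun k _ => by ring
    simp only [this, hvec, hd]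
    push_cast
    rw [Finset.mul_sum]
    refine Finset.sum_congr rfl fun j _ => ?_
    rw [Complex.normSq_eq_conj_mul_self]
    ring
  have hcL : (starRingEnd ℂ) L = ∑ j, ∑ k, (starRingEnd ℂ) (v j) * B k j * v k := by
    rw [hL, map_sum]
    have hterm : ∀ j, (starRingEnd ℂ) (∑ k, (starRingEnd ℂ) (v j) * B j k * v k)
        = ∑ k, (starRingEnd ℂ) (v k) * B j k * v j := by
      intro j
      rw [map_sum]
      refine Finset.sum_congr rfl fun k _ => ?_
      rw [_root_.map_mul, _root_.map_mul, hBreal, Complex.conj_conj]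
      ring
    simp only [hterm]
    exact Finset.sum_comm
  have hb : L + (starRingEnd ℂ) L = ((Complex.normSq S : ℝ) : ℂ) := by
    rw [hcL, hL, ← Finset.sum_add_distrib]
    have : ∀ j, ((∑ k, (starRingEnd ℂ) (v j) * B j k * v k)
        + ∑ k, (starRingEnd ℂ) (v j) * B k j * v k) = (starRingEnd ℂ) (v j) * S := by
      intro j
      rw [← Finset.sum_add_distrib, hS, Finset.mul_sum]
      refine Finset.sum_congr rfl fun k _ => ?_
      linear_combination ((starRingEnd ℂ) (v j) * v k) * hsum j k
    simp only [this, ← Finset.sum_mul]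
    rw [← map_sum, ← hS, Complex.normSq_eq_conj_mul_self]
  have hre := congrArg Complex.re hb
  rw [hLz] at hre
  simp only [Complex.add_re, Complex.conj_re, Complex.mul_re, Complex.ofReal_re,
    Complex.ofReal_im, mul_zero, sub_zero] at hre
  nlinarith [Complex.normSq_nonneg S, hdpos]
/-- The trace of the cube of a tournament matrix is at most the sum of cubes of
the real parts of its eigenvalues. -/
theorem stmt_10 (n : ℕ) (hn : 0 < n) (A : Matrix (Fin n) (Fin n) ℝ)
    (hA0 : ∀ i j, 0 ≤ A i j)
    (hAT : A + A.transpose = Matrix.of fun _ _ => (1 : ℝ))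
    (μ : Fin n → ℂ)
    (hμ : (A.map (Complex.ofReal : ℝ → ℂ)).charpoly.roots
        = Multiset.map μ Finset.univ.val) :
    Matrix.trace (A ^ 3) ≤ ∑ i, ((μ i).re) ^ 3 := by
  set B := A.map (Complex.ofReal : ℝ → ℂ) with hB
  have hfact : B.charpoly = ∏ i, (X - C (μ i)) := by
    have h := (IsAlgClosed.splits B.charpoly).eq_prod_roots_of_monic
      B.charpoly_monic
    rw [hμ, Multiset.map_map] at h
    rw [h]
    rfl
  have hq := cube_charpoly B μ hfact
  have htr : (B ^ 3).trace = ∑ i, μ i ^ 3 := by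
    rw [Matrix.trace_eq_sum_roots_charpoly, hq]
    have h2 : (∏ i : Fin n, (X - C (μ i ^ 3)))
        = ((Finset.univ.val.map fun i => μ i ^ 3).map fun a => X - C a).prod := by
      rw [Multiset.map_map]; rfl
    rw [h2, Polynomial.roots_multiset_prod_X_sub_C]
    rfl
  have h3 : B ^ 3 = (A ^ 3).map (Complex.ofReal : ℝ → ℂ) := by
    ext i j
    simp only [hB, pow_succ, pow_zero, one_mul, Matrix.mul_apply, Matrix.map_apply]
    push_cast
    rfl
  have htrB : (B ^ 3).trace = ((Matrix.trace (A ^ 3) : ℝ) : ℂ) := by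
    rw [h3]
    simp [Matrix.trace, Matrix.map_apply]
  have hmain : Matrix.trace (A ^ 3) = ∑ i, (μ i ^ 3).re := by
    have h4 := htrB.symm.trans htr
    have h5 := congrArg Complex.re h4
    simpa [Complex.ofReal_re] using h5
  rw [hmain]
  apply Finset.sum_le_sum
  intro i _
  have hre : 0 ≤ (μ i).re := by
    refine re_nonneg_of_eig A hAT (μ i) ?_
    refine Polynomial.isRoot_of_mem_roots ?_
    rw [← hB, hμ]
    exact Multiset.mem_map_of_mem μ (Finset.mem_univ_val _)
  have hcube : (μ i ^ 3).re = (μ i).re ^ 3 - 3 * (μ i).re * (μ i).im ^ 2 := by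
    simp only [pow_succ, pow_zero, one_mul, Complex.mul_re, Complex.mul_im]
    ring
  rw [hcube]
  nlinarith [sq_nonneg (μ i).im]
end
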